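/- arXiv:1910.07833 — 7 statements merged into one kernel-verified Lean document; each statement's English description precedes it below -/
import Mathlib

section
/- Let Y be a real random variable and a, b ≥ 0. Suppose that for every δ ∈ (0,1), with probability at least 1 − δ, |Y| ≤ a·√(log(e/δ)) + b·log(e/δ). Then for every p ≥ 1, (E|Y|^p)^{1/p} ≤ 3√p·a + 9p·b. -/
open MeasureTheory Real Set
open scoped ENNReal NNReal

lemma ineqA {q : ℝ} (h1 : 1/2 ≤ q) (h2 : q ≤ 1) : 1 + q ≤ (4.5*q) ^ q := by
  have h45 : (1:ℝ) ≤ 4.5 * q := by nlinarith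
  have step : (4.5*q) ^ ((1:ℝ)/2) ≤ (4.5*q) ^ q := Real.rpow_le_rpow_of_exponent_le h45 h1
  refine le_trans ?_ step
  rw [← Real.sqrt_eq_rpow]
  rw [show (4.5*q) = (9*q)/2 by ring]
  rw [Real.le_sqrt (by linarith) (by linarith)]
  nlinarith [mul_nonneg (sub_nonneg.2 h1) (sub_nonneg.2 h2)]

lemma ineqB {q : ℝ} (h1 : 1 ≤ q) : 1 + (2*q)^q * Real.exp (1.5 - q) ≤ (4.5*q)^q := by
  have h2q : (2:ℝ) ≤ (2*q)^q := by
    calc (2:ℝ) ≤ 2*q := by linarith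
    _ = (2*q)^(1:ℝ) := (Real.rpow_one _).symm
    _ ≤ (2*q)^q := Real.rpow_le_rpow_of_exponent_le (by linarith) h1
  have hexp : Real.exp (1.5 - q) ≤ 1.75 := by
    have h05 : Real.exp (1.5-q) ≤ Real.exp (0.5) := Real.exp_le_exp.2 (by linarith)
    have h := Real.exp_one_lt_d9
    have hsq : Real.exp (0.5) * Real.exp (0.5) = Real.exp 1 := by
      rw [← Real.exp_add]; norm_num
    nlinarith [Real.exp_pos (0.5:ℝ)]
  have h225 : (2.25:ℝ) ≤ 2.25 ^ q := by
    calc (2.25:ℝ) = 2.25 ^ (1:ℝ) := (Real.rpow_one _).symm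
    _ ≤ _ := Real.rpow_le_rpow_of_exponent_le (by norm_num) h1
  have hmul : (4.5*q)^q = 2.25^q * (2*q)^q := by
    rw [← Real.mul_rpow (by norm_num) (by linarith)]
    congr 1; ring
  have hpos : (0:ℝ) ≤ (2*q)^q := by positivity
  calc 1 + (2*q)^q * Real.exp (1.5-q) ≤ (2*q)^q * (1/2) + (2*q)^q * 1.75 := by nlinarith
  _ = (2*q)^q * 2.25 := by ring
  _ ≤ (2*q)^q * 2.25^q := mul_le_mul_of_nonneg_left h225 hpos
  _ = (4.5*q)^q := by rw [hmul]; ring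

lemma pointwise_exp {q t : ℝ} (hq : 1 ≤ q) (ht : 1 ≤ t) :
    Real.exp (1-t) * (q * t^(q-1)) ≤
      (q * (2*q)^(q-1) * Real.exp (2-q)) * Real.exp (-(2⁻¹*t)) := by
  have h2q : (0:ℝ) < 2*q := by linarith
  have htpos : (0:ℝ) < t := by linarith
  have hx : (0:ℝ) < t / (2*q) := by positivity
  have key : t ^ (q-1) ≤ (2*q)^(q-1) * Real.exp ((q-1) * (t/(2*q) - 1)) := by
    have hlog : Real.log (t/(2*q)) ≤ t/(2*q) - 1 := Real.log_le_sub_one_of_pos hx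
    have h2 : (t/(2*q)) ^ (q-1) ≤ Real.exp ((q-1)*(t/(2*q)-1)) := by
      rw [Real.rpow_def_of_pos hx]
      exact Real.exp_le_exp.2 (by nlinarith [mul_le_mul_of_nonneg_left hlog (by linarith : (0:ℝ) ≤ q - 1)])
    calc t^(q-1) = ((2*q) * (t/(2*q)))^(q-1) := by rw [mul_div_cancel₀ _ (ne_of_gt h2q)]
    _ = (2*q)^(q-1) * (t/(2*q))^(q-1) := Real.mul_rpow h2q.le hx.le
    _ ≤ _ := mul_le_mul_of_nonneg_left h2 (Real.rpow_nonneg h2q.le _)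
  have expineq : Real.exp (1-t) * Real.exp ((q-1) * (t/(2*q) - 1)) ≤
      Real.exp (2-q) * Real.exp (-(2⁻¹*t)) := by
    rw [← Real.exp_add, ← Real.exp_add]
    apply Real.exp_le_exp.2
    have hdiv : (q-1) * (t/(2*q) - 1) = t/2 - t/(2*q) - (q - 1) := by
      field_simp
    rw [hdiv]
    have h0 : 0 ≤ t/(2*q) := hx.le
    linarith
  calc Real.exp (1-t) * (q * t^(q-1))
      ≤ Real.exp (1-t) * (q * ((2*q)^(q-1) * Real.exp ((q-1) * (t/(2*q) - 1)))) := by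
        apply mul_le_mul_of_nonneg_left _ (Real.exp_pos _).le
        exact mul_le_mul_of_nonneg_left key (by linarith)
    _ = (q * (2*q)^(q-1)) * (Real.exp (1-t) * Real.exp ((q-1) * (t/(2*q) - 1))) := by ring
    _ ≤ (q * (2*q)^(q-1)) * (Real.exp (2-q) * Real.exp (-(2⁻¹*t))) := by
        apply mul_le_mul_of_nonneg_left expineq
        positivity
    _ = _ := by ring

lemma moment_bound {Ω : Type*} [MeasurableSpace Ω] (μ : Measure Ω) [IsProbabilityMeasure μ]
    (U : Ω → ℝ) (hU : Measurable U) (hU1 : ∀ ω, 1 ≤ U ω)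
    (htail : ∀ t : ℝ, 1 < t → μ {ω | t < U ω} ≤ ENNReal.ofReal (Real.exp (1 - t)))
    (q : ℝ) (hq : 1/2 ≤ q) :
    ∫⁻ ω, ENNReal.ofReal (U ω ^ q) ∂μ ≤ ENNReal.ofReal ((4.5*q) ^ q) := by
  have hq0 : 0 < q := by linarith
  have g_intble : ∀ t > (0:ℝ), IntervalIntegrable (fun s => q * s^(q-1)) volume 0 t := fun t _ =>
    (intervalIntegral.intervalIntegrable_rpow' (by linarith)).const_mul q
  have g_nn : ∀ᵐ t ∂(volume.restrict (Ioi (0:ℝ))), 0 ≤ q * t^(q-1) := by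
    filter_upwards [ae_restrict_mem measurableSet_Ioi] with t ht
    have h0 : (0:ℝ) < t := ht
    positivity
  have f_nn : 0 ≤ᵐ[μ] U := Filter.Eventually.of_forall (fun ω => le_trans zero_le_one (hU1 ω))
  have hGeq : ∀ x : ℝ, (∫ s in (0:ℝ)..x, q * s^(q-1)) = x ^ q := by
    intro x
    rw [intervalIntegral.integral_const_mul, integral_rpow (Or.inl (by linarith))]
    rw [show q - 1 + 1 = q by ring, Real.zero_rpow hq0.ne', sub_zero]
    field_simp
  have lc := lintegral_comp_eq_lintegral_meas_lt_mul μ f_nn hU.aemeasurable g_intble g_nn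
  simp_rw [hGeq] at lc
  rw [lc, show Ioi (0:ℝ) = Ioc 0 1 ∪ Ioi 1 from (Ioc_union_Ioi_eq_Ioi zero_le_one).symm,
    lintegral_union measurableSet_Ioi (Ioc_disjoint_Ioi le_rfl)]
  have hint1 : IntegrableOn (fun s => q * s^(q-1)) (Ioc (0:ℝ) 1) volume := by
    have := (g_intble 1 one_pos)
    rwa [intervalIntegrable_iff, uIoc_of_le zero_le_one] at this
  have part1 : ∫⁻ t in Ioc (0:ℝ) 1, μ {a | t < U a} * ENNReal.ofReal (q * t^(q-1))
      ≤ ENNReal.ofReal 1 := by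
    calc ∫⁻ t in Ioc (0:ℝ) 1, μ {a | t < U a} * ENNReal.ofReal (q * t^(q-1))
        ≤ ∫⁻ t in Ioc (0:ℝ) 1, ENNReal.ofReal (q * t^(q-1)) := by
          refine setLIntegral_mono' measurableSet_Ioc (fun t _ => ?_)
          calc μ {a | t < U a} * ENNReal.ofReal (q * t^(q-1))
              ≤ 1 * ENNReal.ofReal (q * t^(q-1)) := mul_le_mul_left prob_le_one _
          _ = _ := one_mul _
      _ = ENNReal.ofReal (∫ t in Ioc (0:ℝ) 1, q * t^(q-1)) := by
          refine (ofReal_integral_eq_lintegral_ofReal hint1 ?_).symm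
          filter_upwards [ae_restrict_mem measurableSet_Ioc] with t ht
          have h0 : (0:ℝ) < t := ht.1
          positivity
      _ = ENNReal.ofReal 1 := by
          rw [← intervalIntegral.integral_of_le zero_le_one, hGeq, Real.one_rpow]
  rcases le_or_gt q 1 with hq1 | hq1
  · -- case q ≤ 1
    have part2 : ∫⁻ t in Ioi (1:ℝ), μ {a | t < U a} * ENNReal.ofReal (q * t^(q-1))
        ≤ ENNReal.ofReal q := by
      have hint2 : IntegrableOn (fun t => q * Real.exp 1 * Real.exp (-t)) (Ioi (1:ℝ)) volume := by
        have h := (exp_neg_integrableOn_Ioi 1 (zero_lt_one (α := ℝ)))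
        simp only [neg_mul, one_mul] at h
        exact h.const_mul _
      calc ∫⁻ t in Ioi (1:ℝ), μ {a | t < U a} * ENNReal.ofReal (q * t^(q-1))
          ≤ ∫⁻ t in Ioi (1:ℝ), ENNReal.ofReal (q * Real.exp 1 * Real.exp (-t)) := by
            refine setLIntegral_mono' measurableSet_Ioi (fun t ht => ?_)
            have h1t : (1:ℝ) < t := ht
            have hb : t ^ (q-1) ≤ 1 :=
              Real.rpow_le_one_of_one_le_of_nonpos (by linarith) (by linarith)
            have hbnn : 0 ≤ t ^ (q-1) := Real.rpow_nonneg (by linarith) _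
            calc μ {a | t < U a} * ENNReal.ofReal (q * t^(q-1))
                ≤ ENNReal.ofReal (Real.exp (1-t)) * ENNReal.ofReal (q * t^(q-1)) :=
                  mul_le_mul_left (htail t h1t) _
              _ = ENNReal.ofReal (Real.exp (1-t) * (q * t^(q-1))) :=
                  (ENNReal.ofReal_mul (Real.exp_pos _).le).symm
              _ ≤ ENNReal.ofReal (q * Real.exp 1 * Real.exp (-t)) := by
                  apply ENNReal.ofReal_le_ofReal
                  rw [show (1:ℝ)-t = 1 + -t by ring, Real.exp_add]
                  nlinarith [mul_le_mul_of_nonneg_left hb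
                    (by positivity : (0:ℝ) ≤ q * (Real.exp 1 * Real.exp (-t)))]
        _ = ENNReal.ofReal (∫ t in Ioi (1:ℝ), q * Real.exp 1 * Real.exp (-t)) := by
            refine (ofReal_integral_eq_lintegral_ofReal hint2 ?_).symm
            refine Filter.Eventually.of_forall (fun t => ?_)
            positivity
        _ = ENNReal.ofReal q := by
            rw [MeasureTheory.integral_const_mul, integral_exp_neg_Ioi]
            congr 1
            rw [mul_assoc, ← Real.exp_add]
            norm_num
    refine le_trans (add_le_add part1 part2) ?_
    rw [← ENNReal.ofReal_add zero_le_one hq0.le]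
    exact ENNReal.ofReal_le_ofReal (ineqA hq hq1)
  · -- case 1 < q
    have hq1' : (1:ℝ) ≤ q := hq1.le
    set K := q * (2*q)^(q-1) * Real.exp (2-q) with hK
    have hKpos : (0:ℝ) < K := by positivity
    have part2 : ∫⁻ t in Ioi (1:ℝ), μ {a | t < U a} * ENNReal.ofReal (q * t^(q-1))
        ≤ ENNReal.ofReal ((2*q)^q * Real.exp (1.5 - q)) := by
      have hint2 : IntegrableOn (fun t => K * Real.exp (-(2⁻¹*t))) (Ioi (1:ℝ)) volume := by
        have h := (exp_neg_integrableOn_Ioi 1 (by norm_num : (0:ℝ) < 2⁻¹))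
        simp only [neg_mul] at h
        exact h.const_mul _
      calc ∫⁻ t in Ioi (1:ℝ), μ {a | t < U a} * ENNReal.ofReal (q * t^(q-1))
          ≤ ∫⁻ t in Ioi (1:ℝ), ENNReal.ofReal (K * Real.exp (-(2⁻¹*t))) := by
            refine setLIntegral_mono' measurableSet_Ioi (fun t ht => ?_)
            have h1t : (1:ℝ) < t := ht
            calc μ {a | t < U a} * ENNReal.ofReal (q * t^(q-1))
                ≤ ENNReal.ofReal (Real.exp (1-t)) * ENNReal.ofReal (q * t^(q-1)) :=
                  mul_le_mul_left (htail t h1t) _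
              _ = ENNReal.ofReal (Real.exp (1-t) * (q * t^(q-1))) :=
                  (ENNReal.ofReal_mul (Real.exp_pos _).le).symm
              _ ≤ ENNReal.ofReal (K * Real.exp (-(2⁻¹*t))) :=
                  ENNReal.ofReal_le_ofReal (pointwise_exp hq1' h1t.le)
        _ = ENNReal.ofReal (∫ t in Ioi (1:ℝ), K * Real.exp (-(2⁻¹*t))) := by
            refine (ofReal_integral_eq_lintegral_ofReal hint2 ?_).symm
            refine Filter.Eventually.of_forall (fun t => ?_)
            positivity
        _ ≤ ENNReal.ofReal ((2*q)^q * Real.exp (1.5 - q)) := by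
            apply ENNReal.ofReal_le_ofReal
            rw [MeasureTheory.integral_const_mul]
            have hcv : (∫ t in Ioi (1:ℝ), Real.exp (-(2⁻¹*t)))
                = (2⁻¹:ℝ)⁻¹ • ∫ x in Ioi ((2⁻¹:ℝ)*1), Real.exp (-x) :=
              integral_comp_mul_left_Ioi (fun x => Real.exp (-x)) 1 (by norm_num)
            rw [hcv, mul_one, integral_exp_neg_Ioi, smul_eq_mul]
            have h2qq : (2*q)^q = (2*q)^(q-1) * (2*q) := by
              have h := Real.rpow_add_one (by positivity : (2*q) ≠ 0) (q-1)
              rw [sub_add_cancel] at h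
              exact h
            have hee : Real.exp (2-q) * Real.exp (-2⁻¹) = Real.exp (1.5 - q) := by
              rw [← Real.exp_add]; norm_num; ring
            apply le_of_eq
            rw [hK, h2qq, ← hee]
            ring
    refine le_trans (add_le_add part1 part2) ?_
    rw [← ENNReal.ofReal_add zero_le_one (by positivity)]
    exact ENNReal.ofReal_le_ofReal (ineqB hq1')

noncomputable def tmH (a b y : ℝ) : ℝ := sInf {u | 1 ≤ u ∧ y ≤ a * Real.sqrt u + b * u}

lemma tmS_nonempty {a b : ℝ} (ha : 0 ≤ a) (hb : 0 ≤ b) (hab : 0 < a + b) (y : ℝ) :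
    {u | 1 ≤ u ∧ y ≤ a * Real.sqrt u + b * u}.Nonempty := by
  rcases hb.lt_or_eq with hb' | hb'
  · refine ⟨max 1 (y / b), le_max_left _ _, ?_⟩
    have h1 : y ≤ b * max 1 (y / b) := by
      rw [← div_le_iff₀' hb']
      exact le_max_right _ _
    have h2 : 0 ≤ a * Real.sqrt (max 1 (y / b)) := by positivity
    linarith
  · have ha' : 0 < a := by linarith
    refine ⟨max 1 ((y / a) ^ 2), le_max_left _ _, ?_⟩
    have h1 : y / a ≤ Real.sqrt (max 1 ((y / a) ^ 2)) := by
      calc y / a ≤ |y / a| := le_abs_self _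
      _ = Real.sqrt ((y / a) ^ 2) := (Real.sqrt_sq_eq_abs _).symm
      _ ≤ _ := Real.sqrt_le_sqrt (le_max_right _ _)
    have h2 : y ≤ a * Real.sqrt (max 1 ((y / a) ^ 2)) := by
      rw [← div_le_iff₀' ha']
      exact h1
    have h3 : 0 ≤ b * max 1 ((y / a) ^ 2) := by positivity
    linarith

lemma tmS_bddBelow (a b y : ℝ) :
    BddBelow {u | 1 ≤ u ∧ y ≤ a * Real.sqrt u + b * u} := ⟨1, fun u hu => hu.1⟩

lemma tmS_closed (a b y : ℝ) :
    IsClosed {u | 1 ≤ u ∧ y ≤ a * Real.sqrt u + b * u} := by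
  have : {u | 1 ≤ u ∧ y ≤ a * Real.sqrt u + b * u}
      = Ici 1 ∩ {u | y ≤ a * Real.sqrt u + b * u} := rfl
  rw [this]
  exact isClosed_Ici.inter (isClosed_le continuous_const (by continuity))

lemma tmH_mem {a b : ℝ} (ha : 0 ≤ a) (hb : 0 ≤ b) (hab : 0 < a + b) (y : ℝ) :
    1 ≤ tmH a b y ∧ y ≤ a * Real.sqrt (tmH a b y) + b * tmH a b y :=
  (tmS_closed a b y).csInf_mem (tmS_nonempty ha hb hab y) (tmS_bddBelow a b y)

lemma tmH_mono {a b : ℝ} (ha : 0 ≤ a) (hb : 0 ≤ b) (hab : 0 < a + b) :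
    Monotone (tmH a b) := by
  intro y₁ y₂ h
  exact csInf_le_csInf (tmS_bddBelow a b y₁) (tmS_nonempty ha hb hab y₂)
    (fun u hu => ⟨hu.1, le_trans h hu.2⟩)

lemma tmH_lt {a b y t : ℝ} (h1 : 1 ≤ t) (h2 : t < tmH a b y) :
    ¬ (y ≤ a * Real.sqrt t + b * t) := by
  intro hy
  exact absurd (csInf_le (tmS_bddBelow a b y) ⟨h1, hy⟩) (not_le.mpr h2)

lemma rpow_superadd {x y p : ℝ} (hx : 0 ≤ x) (hy : 0 ≤ y) (hp : 1 ≤ p) :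
    x^p + y^p ≤ (x+y)^p := by
  have h := NNReal.add_rpow_le_rpow_add x.toNNReal y.toNNReal hp
  have h2 := (NNReal.coe_le_coe).2 h
  push_cast at h2
  rwa [Real.coe_toNNReal x hx, Real.coe_toNNReal y hy] at h2

lemma finalineq {a b p : ℝ} (ha : 0 ≤ a) (hb : 0 ≤ b) (hp : 1 ≤ p) :
    (2*a)^p * (4.5*(p/2))^(p/2) + (2*b)^p * (4.5*p)^p
      ≤ (3 * Real.sqrt p * a + 9 * p * b) ^ p := by
  have hp0 : (0:ℝ) < p := by linarith
  have h1 : (4.5*(p/2)) = 2.25 * p := by ring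
  have h2 : (2.25*p)^(p/2) = (1.5 * Real.sqrt p)^p := by
    rw [show p/2 = (1/2)*p by ring, Real.rpow_mul (by positivity),
      ← Real.sqrt_eq_rpow, Real.sqrt_mul (by norm_num) p,
      show Real.sqrt 2.25 = 1.5 by
        rw [show (2.25:ℝ) = 1.5^2 by norm_num, Real.sqrt_sq (by norm_num)]]
  have h3 : (2*a)^p * (1.5 * Real.sqrt p)^p = (3 * Real.sqrt p * a)^p := by
    rw [← Real.mul_rpow (by positivity) (by positivity)]
    congr 1
    ring
  have h4 : (2*b)^p * (4.5*p)^p = (9 * p * b)^p := by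
    rw [← Real.mul_rpow (by positivity) (by positivity)]
    congr 1
    ring
  rw [h1, h2, h3, h4]
  exact rpow_superadd (by positivity) (by positivity) hp

theorem tail_to_moment {Ω : Type*} [MeasurableSpace Ω] (μ : Measure Ω)
    [IsProbabilityMeasure μ] (Y : Ω → ℝ) (hY : Measurable Y)
    (a b : ℝ) (ha : 0 ≤ a) (hb : 0 ≤ b)
    (htail : ∀ δ : ℝ, 0 < δ → δ < 1 →
      ENNReal.ofReal (1 - δ) ≤
        μ {ω | |Y ω| ≤ a * Real.sqrt (Real.log (Real.exp 1 / δ)) +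
          b * Real.log (Real.exp 1 / δ)}) :
    ∀ p : ℝ, 1 ≤ p →
      (∫ ω, |Y ω| ^ p ∂μ) ^ (1 / p) ≤ 3 * Real.sqrt p * a + 9 * p * b := by
  intro p hp
  have hp0 : (0:ℝ) < p := lt_of_lt_of_le one_pos hp
  have habsY : Measurable fun ω => |Y ω| := hY.abs
  have hmeasp : Measurable fun ω => |Y ω| ^ p := habsY.pow measurable_const
  have hnn : 0 ≤ᵐ[μ] fun ω => |Y ω| ^ p :=
    Filter.Eventually.of_forall fun ω => by positivity
  rcases (add_nonneg ha hb).eq_or_lt with hab | hab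
  · -- degenerate case: a = 0 and b = 0
    have ha0 : a = 0 := by linarith
    have hb0 : b = 0 := by linarith
    have hA : MeasurableSet {ω : Ω | |Y ω| ≤ (0:ℝ)} := measurableSet_le habsY measurable_const
    have h1 : (1:ℝ≥0∞) ≤ μ {ω : Ω | |Y ω| ≤ (0:ℝ)} := by
      by_contra hcon
      push_neg at hcon
      have hne : μ {ω : Ω | |Y ω| ≤ (0:ℝ)} ≠ ⊤ := measure_ne_top μ _
      set m := (μ {ω : Ω | |Y ω| ≤ (0:ℝ)}).toReal with hm
      have hm0 : 0 ≤ m := ENNReal.toReal_nonneg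
      have hm1 : m < 1 := by
        rw [hm, ← ENNReal.toReal_one]
        exact ENNReal.toReal_strict_mono ENNReal.one_ne_top hcon
      have hδ0 : 0 < (1-m)/2 := by linarith
      have hδ1 : (1-m)/2 < 1 := by linarith
      have hh := htail ((1-m)/2) hδ0 hδ1
      rw [ha0, hb0] at hh
      simp only [zero_mul, add_zero] at hh
      have h2 : 1 - (1-m)/2 ≤ m := by
        have h3 := ENNReal.toReal_mono hne hh
        rwa [ENNReal.toReal_ofReal (by linarith)] at h3
      linarith
    have hcompl : μ {ω : Ω | |Y ω| ≤ (0:ℝ)}ᶜ = 0 := by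
      have heq : μ {ω : Ω | |Y ω| ≤ (0:ℝ)} = 1 := le_antisymm prob_le_one h1
      rw [prob_compl_eq_one_sub hA, heq, tsub_self]
    have hae : (fun ω => |Y ω| ^ p) =ᵐ[μ] fun _ => (0:ℝ) := by
      rw [Filter.EventuallyEq, ae_iff]
      refine measure_mono_null (fun ω hω => ?_) hcompl
      simp only [mem_setOf_eq, mem_compl_iff] at *
      intro hle
      exact hω (by rw [le_antisymm hle (abs_nonneg _), Real.zero_rpow hp0.ne'])
    rw [integral_congr_ae hae, integral_zero, Real.zero_rpow (by positivity : 1/p ≠ 0),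
      ha0, hb0]
    norm_num
  · -- main case
    set U : Ω → ℝ := fun ω => tmH a b |Y ω| with hUdef
    have hU : Measurable U := (tmH_mono ha hb hab).measurable.comp habsY
    have hU1 : ∀ ω, 1 ≤ U ω := fun ω => (tmH_mem ha hb hab _).1
    have hU0 : ∀ ω, (0:ℝ) ≤ U ω := fun ω => le_trans zero_le_one (hU1 ω)
    have hYU : ∀ ω, |Y ω| ≤ a * Real.sqrt (U ω) + b * U ω := fun ω => (tmH_mem ha hb hab _).2
    have htailU : ∀ t : ℝ, 1 < t → μ {ω : Ω | t < U ω} ≤ ENNReal.ofReal (Real.exp (1-t)) := by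
      intro t ht
      set δ := Real.exp (1 - t) with hδ
      have hδ0 : 0 < δ := Real.exp_pos _
      have hδ1 : δ < 1 := Real.exp_lt_one_iff.mpr (by linarith)
      have hlog : Real.log (Real.exp 1 / δ) = t := by
        rw [Real.log_div (Real.exp_ne_zero 1) hδ0.ne', Real.log_exp, hδ, Real.log_exp]
        ring
      have hA := htail δ hδ0 hδ1
      rw [hlog] at hA
      have hAm : MeasurableSet {ω : Ω | |Y ω| ≤ a * Real.sqrt t + b * t} :=
        measurableSet_le habsY measurable_const
      have hsub : {ω : Ω | t < U ω} ⊆ {ω : Ω | |Y ω| ≤ a * Real.sqrt t + b * t}ᶜ := by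
        intro ω hω hmem
        exact tmH_lt ht.le hω hmem
      calc μ {ω : Ω | t < U ω} ≤ μ {ω : Ω | |Y ω| ≤ a * Real.sqrt t + b * t}ᶜ := measure_mono hsub
        _ = 1 - μ {ω : Ω | |Y ω| ≤ a * Real.sqrt t + b * t} := prob_compl_eq_one_sub hAm
        _ ≤ 1 - ENNReal.ofReal (1 - δ) := tsub_le_tsub_left hA 1
        _ = ENNReal.ofReal δ := by
            rw [← ENNReal.ofReal_one, ← ENNReal.ofReal_sub _ (by linarith : (0:ℝ) ≤ 1 - δ)]
            norm_num
    have hIa := moment_bound μ U hU hU1 htailU (p/2) (by linarith)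
    have hIb := moment_bound μ U hU hU1 htailU p (by linarith)
    have hpt : ∀ ω, |Y ω| ^ p ≤ (2*a)^p * U ω ^ (p/2) + (2*b)^p * U ω ^ p := by
      intro ω
      set x := a * Real.sqrt (U ω) with hx
      set y := b * U ω with hy
      have hx0 : 0 ≤ x := mul_nonneg ha (Real.sqrt_nonneg _)
      have hy0 : 0 ≤ y := mul_nonneg hb (hU0 ω)
      have hmax0 : 0 ≤ max x y := le_trans hx0 (le_max_left _ _)
      have h1 : |Y ω| ^ p ≤ (x + y) ^ p :=
        Real.rpow_le_rpow (abs_nonneg _) (hYU ω) hp0.le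
      have h2 : (x + y) ^ p ≤ (2 * max x y) ^ p := by
        apply Real.rpow_le_rpow (add_nonneg hx0 hy0) _ hp0.le
        calc x + y ≤ max x y + max x y := add_le_add (le_max_left _ _) (le_max_right _ _)
        _ = 2 * max x y := by ring
      have h3 : (2 * max x y) ^ p = 2^p * (max x y)^p :=
        Real.mul_rpow (by norm_num) hmax0
      have h4 : (max x y)^p ≤ x^p + y^p := by
        rcases max_cases x y with ⟨hm, _⟩ | ⟨hm, _⟩ <;> rw [hm]
        · nlinarith [Real.rpow_nonneg hy0 p]
        · nlinarith [Real.rpow_nonneg hx0 p]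
      have hsp : Real.sqrt (U ω) ^ p = U ω ^ (p/2) := by
        rw [Real.sqrt_eq_rpow, ← Real.rpow_mul (hU0 ω), show (1/2:ℝ)*p = p/2 by ring]
      have hxp : 2^p * x^p = (2*a)^p * U ω ^ (p/2) := by
        rw [hx, Real.mul_rpow ha (Real.sqrt_nonneg _), hsp,
          Real.mul_rpow (by norm_num : (0:ℝ) ≤ 2) ha]
        ring
      have hyp : 2^p * y^p = (2*b)^p * U ω ^ p := by
        rw [hy, Real.mul_rpow hb (hU0 ω), Real.mul_rpow (by norm_num : (0:ℝ) ≤ 2) hb]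
        ring
      have h2p : (0:ℝ) ≤ 2^p := by positivity
      calc |Y ω| ^ p ≤ (2 * max x y) ^ p := le_trans h1 h2
        _ = 2^p * (max x y)^p := h3
        _ ≤ 2^p * (x^p + y^p) := mul_le_mul_of_nonneg_left h4 h2p
        _ = 2^p * x^p + 2^p * y^p := by ring
        _ = (2*a)^p * U ω ^ (p/2) + (2*b)^p * U ω ^ p := by rw [hxp, hyp]
    have hUm1 : Measurable fun ω => ENNReal.ofReal ((2*a)^p * U ω ^ (p/2)) :=
      (measurable_const.mul (hU.pow measurable_const)).ennreal_ofReal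
    have hUm2 : Measurable fun ω => ENNReal.ofReal ((2*b)^p * U ω ^ p) :=
      (measurable_const.mul (hU.pow measurable_const)).ennreal_ofReal
    set M : ℝ := 3 * Real.sqrt p * a + 9 * p * b with hM
    have hM0 : 0 ≤ M := by positivity
    have hL : ∫⁻ ω, ENNReal.ofReal (|Y ω| ^ p) ∂μ ≤ ENNReal.ofReal (M ^ p) := by
      calc ∫⁻ ω, ENNReal.ofReal (|Y ω| ^ p) ∂μ
          ≤ ∫⁻ ω, (ENNReal.ofReal ((2*a)^p * U ω ^ (p/2))
              + ENNReal.ofReal ((2*b)^p * U ω ^ p)) ∂μ := by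
            refine lintegral_mono (fun ω => ?_)
            rw [← ENNReal.ofReal_add
              (mul_nonneg (Real.rpow_nonneg (by linarith) p) (Real.rpow_nonneg (hU0 ω) _))
              (mul_nonneg (Real.rpow_nonneg (by linarith) p) (Real.rpow_nonneg (hU0 ω) _))]
            exact ENNReal.ofReal_le_ofReal (hpt ω)
        _ = (∫⁻ ω, ENNReal.ofReal ((2*a)^p * U ω ^ (p/2)) ∂μ)
              + ∫⁻ ω, ENNReal.ofReal ((2*b)^p * U ω ^ p) ∂μ := lintegral_add_left hUm1 _
        _ ≤ ENNReal.ofReal ((2*a)^p) * ENNReal.ofReal ((4.5*(p/2))^(p/2))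
              + ENNReal.ofReal ((2*b)^p) * ENNReal.ofReal ((4.5*p)^p) := by
            refine add_le_add ?_ ?_
            · calc ∫⁻ ω, ENNReal.ofReal ((2*a)^p * U ω ^ (p/2)) ∂μ
                  = ENNReal.ofReal ((2*a)^p) * ∫⁻ ω, ENNReal.ofReal (U ω ^ (p/2)) ∂μ := by
                    rw [← lintegral_const_mul _ (hU.pow measurable_const).ennreal_ofReal]
                    congr 1
                    ext ω
                    rw [← ENNReal.ofReal_mul (by positivity)]
              _ ≤ _ := mul_le_mul_right hIa _
            · calc ∫⁻ ω, ENNReal.ofReal ((2*b)^p * U ω ^ p) ∂μ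
                  = ENNReal.ofReal ((2*b)^p) * ∫⁻ ω, ENNReal.ofReal (U ω ^ p) ∂μ := by
                    rw [← lintegral_const_mul _ (hU.pow measurable_const).ennreal_ofReal]
                    congr 1
                    ext ω
                    rw [← ENNReal.ofReal_mul (by positivity)]
              _ ≤ _ := mul_le_mul_right hIb _
        _ ≤ ENNReal.ofReal (M ^ p) := by
            rw [← ENNReal.ofReal_mul (by positivity), ← ENNReal.ofReal_mul (by positivity),
              ← ENNReal.ofReal_add (by positivity) (by positivity)]
            exact ENNReal.ofReal_le_ofReal (finalineq ha hb hp)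
    rw [integral_eq_lintegral_of_nonneg_ae hnn hmeasp.aestronglyMeasurable]
    have hle : (∫⁻ ω, ENNReal.ofReal (|Y ω| ^ p) ∂μ).toReal ≤ M ^ p :=
      ENNReal.toReal_le_of_le_ofReal (by positivity) hL
    calc (∫⁻ ω, ENNReal.ofReal (|Y ω| ^ p) ∂μ).toReal ^ (1/p)
        ≤ (M ^ p) ^ (1/p) := Real.rpow_le_rpow ENNReal.toReal_nonneg hle (by positivity)
      _ = M := by
          rw [← Real.rpow_mul hM0, mul_one_div, div_self hp0.ne', Real.rpow_one]
end

section
/- Let X_1, …, X_n be independent real random variables with E X_i = 0 and |X_i| ≤ M almost surely for all i. Then for every p ≥ 2, ‖∑_{i=1}^n X_i‖_p ≤ 4√(np)·M. -/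
open MeasureTheory ProbabilityTheory Real

lemma aux_rpow_le_exp {y p : ℝ} (hy : 0 ≤ y) (hp : 0 < p) :
    y ^ p ≤ (p / Real.exp 1) ^ p * Real.exp y := by
  have h0 : y / p ≤ Real.exp (y / p - 1) := by
    have := Real.add_one_le_exp (y / p - 1)
    linarith
  have h1 : y ≤ p * Real.exp (y / p - 1) := by
    rw [div_le_iff₀ hp] at h0; linarith [h0]
  calc y ^ p ≤ (p * Real.exp (y / p - 1)) ^ p :=
        Real.rpow_le_rpow hy h1 hp.le
    _ = (p / Real.exp 1) ^ p * Real.exp y := by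
        rw [Real.mul_rpow hp.le (Real.exp_nonneg _), ← Real.exp_mul,
          Real.div_rpow hp.le (Real.exp_nonneg _), Real.exp_one_rpow]
        have : (y / p - 1) * p = y - p := by field_simp
        rw [this, Real.exp_sub]
        ring

lemma aux_abs_rpow_le {x t p : ℝ} (ht : 0 < t) (hp : 0 < p) :
    |x| ^ p ≤ (p / (t * Real.exp 1)) ^ p * (Real.exp (t * x) + Real.exp (-t * x)) := by
  have h1 : (t * |x|) ^ p ≤ (p / Real.exp 1) ^ p * Real.exp (t * |x|) :=
    aux_rpow_le_exp (by positivity) hp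
  have h2 : Real.exp (t * |x|) ≤ Real.exp (t * x) + Real.exp (-t * x) := by
    rcases abs_cases x with ⟨h, _⟩ | ⟨h, _⟩ <;> rw [h]
    · nlinarith [Real.exp_pos (-t * x)]
    · rw [mul_neg, ← neg_mul]
      nlinarith [Real.exp_pos (t * x)]
  have hts : (0:ℝ) < t ^ p := Real.rpow_pos_of_pos ht p
  have key : t ^ p * |x| ^ p ≤ t ^ p * ((p / (t * Real.exp 1)) ^ p *
      (Real.exp (t * x) + Real.exp (-t * x))) := by
    rw [← Real.mul_rpow ht.le (abs_nonneg x)]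
    calc (t * |x|) ^ p ≤ (p / Real.exp 1) ^ p * Real.exp (t * |x|) := h1
      _ ≤ (p / Real.exp 1) ^ p * (Real.exp (t * x) + Real.exp (-t * x)) := by
          have : (0:ℝ) ≤ (p / Real.exp 1) ^ p := by positivity
          nlinarith
      _ = t ^ p * ((p / (t * Real.exp 1)) ^ p * (Real.exp (t * x) + Real.exp (-t * x))) := by
          rw [Real.div_rpow hp.le (by positivity : (0:ℝ) ≤ t * Real.exp 1),
            Real.div_rpow hp.le (Real.exp_nonneg _),
            Real.mul_rpow ht.le (Real.exp_nonneg _)]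
          have h3 : (0:ℝ) < Real.exp 1 ^ p := Real.rpow_pos_of_pos (Real.exp_pos 1) p
          field_simp
  exact le_of_mul_le_mul_left key hts

lemma aux_mgf_le {Ω : Type*} [MeasurableSpace Ω] (μ : Measure Ω) [IsProbabilityMeasure μ]
    (X : Ω → ℝ) (hX : Measurable X) (M : ℝ) (hM : 0 < M)
    (hbdd : ∀ᵐ ω ∂μ, |X ω| ≤ M) (hmean : ∫ ω, X ω ∂μ = 0) (t : ℝ) :
    mgf X μ t ≤ Real.exp (t ^ 2 * M ^ 2 / 2) := by
  have hXint : Integrable X μ := by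
    refine (integrable_const M).mono' hX.aestronglyMeasurable ?_
    filter_upwards [hbdd] with ω h using by simpa [Real.norm_eq_abs] using h
  have hexpint : Integrable (fun ω => Real.exp (t * X ω)) μ := by
    refine (integrable_const (Real.exp (|t| * M))).mono'
      ((hX.const_mul t).exp).aestronglyMeasurable ?_
    filter_upwards [hbdd] with ω h
    rw [Real.norm_eq_abs, abs_of_pos (Real.exp_pos _), Real.exp_le_exp]
    calc t * X ω ≤ |t * X ω| := le_abs_self _
      _ = |t| * |X ω| := abs_mul _ _
      _ ≤ |t| * M := by gcongr
  have hpt : ∀ᵐ ω ∂μ, Real.exp (t * X ω) ≤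
      Real.cosh (t * M) + X ω * (Real.sinh (t * M) / M) := by
    filter_upwards [hbdd] with ω h
    rw [abs_le] at h
    have ha : (0:ℝ) ≤ (M + X ω) / (2 * M) := by
      apply div_nonneg (by linarith) (by linarith)
    have hb : (0:ℝ) ≤ (M - X ω) / (2 * M) := by
      apply div_nonneg (by linarith) (by linarith)
    have hab : (M + X ω) / (2 * M) + (M - X ω) / (2 * M) = 1 := by
      field_simp; ring
    have hconv := convexOn_exp.2 (Set.mem_univ (t * M)) (Set.mem_univ (-(t * M))) ha hb hab
    simp only [smul_eq_mul] at hconv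
    have harg : (M + X ω) / (2 * M) * (t * M) + (M - X ω) / (2 * M) * -(t * M) = t * X ω := by
      field_simp; ring
    rw [harg] at hconv
    refine hconv.trans_eq ?_
    rw [Real.cosh_eq, Real.sinh_eq, Real.exp_neg]
    field_simp
    ring
  have hint2 : Integrable (fun ω => Real.cosh (t * M) + X ω * (Real.sinh (t * M) / M)) μ :=
    (integrable_const _).add (hXint.mul_const _)
  calc mgf X μ t ≤ ∫ ω, (Real.cosh (t * M) + X ω * (Real.sinh (t * M) / M)) ∂μ :=
        integral_mono_ae hexpint hint2 hpt
    _ = Real.cosh (t * M) := by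
        rw [integral_add (integrable_const _) (hXint.mul_const _), integral_const,
          integral_mul_const, hmean]
        simp
    _ ≤ Real.exp ((t * M) ^ 2 / 2) := Real.cosh_le_exp_half_sq _
    _ = Real.exp (t ^ 2 * M ^ 2 / 2) := by ring_nf

theorem hoeffding_moment {Ω : Type*} [MeasurableSpace Ω] (μ : Measure Ω)
    [IsProbabilityMeasure μ] (n : ℕ)
    (X : Fin n → Ω → ℝ) (hX : ∀ i, Measurable (X i))
    (hindep : iIndepFun X μ)
    (M : ℝ) (hbdd : ∀ i, ∀ᵐ ω ∂μ, |X i ω| ≤ M)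
    (hmean : ∀ i, ∫ ω, X i ω ∂μ = 0) :
    ∀ p : ℝ, 2 ≤ p →
      (∫ ω, |∑ i, X i ω| ^ p ∂μ) ^ (1 / p) ≤ 4 * Real.sqrt (n * p) * M := by
  intro p hp
  have hp0 : (0:ℝ) < p := lt_of_lt_of_le two_pos hp
  rcases Nat.eq_zero_or_pos n with hn | hn
  · subst hn
    simp [Real.zero_rpow hp0.ne', Real.zero_rpow (inv_ne_zero hp0.ne'), Real.zero_rpow (one_div_ne_zero hp0.ne')]
  have hM0 : 0 ≤ M := by
    haveI : (MeasureTheory.ae μ).NeBot := ae_neBot.mpr (IsProbabilityMeasure.ne_zero μ)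
    obtain ⟨ω, hω⟩ := (hbdd ⟨0, hn⟩).exists
    exact le_trans (abs_nonneg _) hω
  rcases eq_or_lt_of_le hM0 with hM | hM
  · -- M = 0 case
    have hzero : ∀ᵐ ω ∂μ, ∑ i, X i ω = 0 := by
      filter_upwards [ae_all_iff.2 hbdd] with ω h
      have hz : ∀ i, X i ω = 0 := fun i =>
        abs_nonpos_iff.mp (le_trans (h i) (le_of_eq hM.symm))
      simp [hz]
    have hE : (∫ ω, |∑ i, X i ω| ^ p ∂μ) = 0 := by
      rw [integral_congr_ae (g := fun _ => (0:ℝ)) ?_, integral_zero]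
      filter_upwards [hzero] with ω h
      rw [h]; simp [Real.zero_rpow hp0.ne']
    rw [hE, Real.zero_rpow (one_div_ne_zero hp0.ne'), ← hM, mul_zero]
  -- main case : 0 < M, 0 < n
  have hn0 : (0:ℝ) < (n:ℝ) := by exact_mod_cast hn
  set S : Ω → ℝ := fun ω => ∑ i, X i ω with hS_def
  have hS : Measurable S := Finset.measurable_sum _ (fun i _ => hX i)
  have hSbdd : ∀ᵐ ω ∂μ, |S ω| ≤ n * M := by
    filter_upwards [ae_all_iff.2 hbdd] with ω h
    calc |S ω| ≤ ∑ i, |X i ω| := Finset.abs_sum_le_sum_abs _ _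
      _ ≤ ∑ _i : Fin n, M := Finset.sum_le_sum (fun i _ => h i)
      _ = n * M := by simp [Finset.sum_const, Finset.card_univ, nsmul_eq_mul]
  have hpn : (0:ℝ) < p / n := by positivity
  have hsq : 0 < Real.sqrt (p / n) := Real.sqrt_pos.2 hpn
  set t : ℝ := Real.sqrt (p / n) / M with ht_def
  have ht : 0 < t := div_pos hsq hM
  -- mgf bound
  have hmgf : ∀ s : ℝ, mgf S μ s ≤ Real.exp (n * (s ^ 2 * M ^ 2 / 2)) := by
    intro s
    have hfun : S = ∑ i, X i := by ext ω; simp [hS_def]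
    have hprod : mgf S μ s = ∏ i, mgf (X i) μ s := by
      rw [hfun]; exact hindep.mgf_sum hX Finset.univ
    rw [hprod]
    calc ∏ i, mgf (X i) μ s ≤ ∏ _i : Fin n, Real.exp (s ^ 2 * M ^ 2 / 2) :=
          Finset.prod_le_prod (fun i _ => mgf_nonneg)
            (fun i _ => aux_mgf_le μ (X i) (hX i) M hM (hbdd i) (hmean i) s)
      _ = Real.exp (n * (s ^ 2 * M ^ 2 / 2)) := by
          rw [Finset.prod_const, Finset.card_univ, Fintype.card_fin, ← Real.exp_nat_mul]
  have hexpS : ∀ s : ℝ, Integrable (fun ω => Real.exp (s * S ω)) μ := by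
    intro s
    refine (integrable_const (Real.exp (|s| * (n * M)))).mono'
      ((hS.const_mul s).exp).aestronglyMeasurable ?_
    filter_upwards [hSbdd] with ω h
    rw [Real.norm_eq_abs, abs_of_pos (Real.exp_pos _), Real.exp_le_exp]
    calc s * S ω ≤ |s * S ω| := le_abs_self _
      _ = |s| * |S ω| := abs_mul _ _
      _ ≤ |s| * (n * M) := mul_le_mul_of_nonneg_left h (abs_nonneg s)
  have hSp : Integrable (fun ω => |S ω| ^ p) μ := by
    refine (integrable_const (((n:ℝ) * M) ^ p)).mono'
      (((Real.continuous_rpow_const hp0.le).measurable.comp hS.abs).aestronglyMeasurable) ?_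
    filter_upwards [hSbdd] with ω h
    rw [Real.norm_eq_abs, abs_of_nonneg (Real.rpow_nonneg (abs_nonneg _) _)]
    exact Real.rpow_le_rpow (abs_nonneg _) h hp0.le
  have hexpSneg : Integrable (fun ω => Real.exp (-t * S ω)) μ := hexpS (-t)
  -- the key t : n * t^2 * M^2 / 2 = p / 2
  have ht2 : (n:ℝ) * (t ^ 2 * M ^ 2 / 2) = p / 2 := by
    rw [ht_def, div_pow, Real.sq_sqrt hpn.le]
    field_simp
  have hineq : (∫ ω, |S ω| ^ p ∂μ) ≤
      (p / (t * Real.exp 1)) ^ p * (2 * Real.exp (p / 2)) := by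
    have h1 : (∫ ω, |S ω| ^ p ∂μ) ≤ ∫ ω, (p / (t * Real.exp 1)) ^ p *
        (Real.exp (t * S ω) + Real.exp (-t * S ω)) ∂μ := by
      refine integral_mono_ae hSp (((hexpS t).add hexpSneg).const_mul _) ?_
      filter_upwards with ω
      exact aux_abs_rpow_le ht hp0
    have hmt : mgf S μ t = ∫ ω, Real.exp (t * S ω) ∂μ := rfl
    have hmtn : mgf S μ (-t) = ∫ ω, Real.exp (-t * S ω) ∂μ := rfl
    have h2 : ∫ ω, (p / (t * Real.exp 1)) ^ p *
        (Real.exp (t * S ω) + Real.exp (-t * S ω)) ∂μ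
        = (p / (t * Real.exp 1)) ^ p * (mgf S μ t + mgf S μ (-t)) := by
      rw [integral_const_mul, integral_add (hexpS t) hexpSneg, hmt, hmtn]
    have h3 : mgf S μ t + mgf S μ (-t) ≤ 2 * Real.exp (p / 2) := by
      have ha := hmgf t
      have hb := hmgf (-t)
      rw [ht2] at ha
      rw [neg_sq, ht2] at hb
      linarith
    calc (∫ ω, |S ω| ^ p ∂μ)
        ≤ (p / (t * Real.exp 1)) ^ p * (mgf S μ t + mgf S μ (-t)) := h1.trans_eq h2
      _ ≤ (p / (t * Real.exp 1)) ^ p * (2 * Real.exp (p / 2)) := by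
          have : (0:ℝ) ≤ (p / (t * Real.exp 1)) ^ p := by positivity
          nlinarith
  have hE0 : 0 ≤ ∫ ω, |S ω| ^ p ∂μ := integral_nonneg (fun ω => by positivity)
  have hfinal : (∫ ω, |S ω| ^ p ∂μ) ^ (1/p) ≤
      ((p / (t * Real.exp 1)) ^ p * (2 * Real.exp (p / 2))) ^ (1/p) :=
    Real.rpow_le_rpow hE0 hineq (by positivity)
  refine hfinal.trans ?_
  have hct : (0:ℝ) ≤ p / (t * Real.exp 1) := by positivity
  have hsplit : ((p / (t * Real.exp 1)) ^ p * (2 * Real.exp (p / 2))) ^ (1/p)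
      = (p / (t * Real.exp 1)) * ((2:ℝ) ^ (1/p) * Real.exp (1/2)) := by
    rw [Real.mul_rpow (by positivity) (by positivity),
      ← Real.rpow_mul hct, mul_one_div_cancel hp0.ne', Real.rpow_one,
      Real.mul_rpow (by norm_num) (Real.exp_nonneg _), ← Real.exp_mul]
    congr 3
    field_simp
  rw [hsplit]
  have hkey : p / (t * Real.exp 1) = Real.sqrt ((n:ℝ) * p) * M / Real.exp 1 := by
    rw [ht_def, Real.sqrt_div hp0.le, Real.sqrt_mul hn0.le]
    have hsp : 0 < Real.sqrt p := Real.sqrt_pos.2 hp0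
    have hsn : 0 < Real.sqrt (n:ℝ) := Real.sqrt_pos.2 hn0
    have hpp : Real.sqrt p * Real.sqrt p = p := Real.mul_self_sqrt hp0.le
    field_simp
    linear_combination -hpp
  rw [hkey]
  have h2p : (2:ℝ) ^ (1/p) ≤ 2 := by
    calc (2:ℝ) ^ (1/p) ≤ (2:ℝ) ^ (1:ℝ) :=
          Real.rpow_le_rpow_of_exponent_le one_le_two ((div_le_one hp0).2 (by linarith))
      _ = 2 := Real.rpow_one 2
  have hexph : Real.exp (1/2 : ℝ) ≤ Real.exp 1 := Real.exp_le_exp.2 (by norm_num)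
  calc Real.sqrt ((n:ℝ) * p) * M / Real.exp 1 * ((2:ℝ) ^ (1/p) * Real.exp (1/2))
      ≤ Real.sqrt ((n:ℝ) * p) * M / Real.exp 1 * (2 * Real.exp 1) := by
        refine mul_le_mul_of_nonneg_left ?_ (by positivity)
        exact mul_le_mul h2p hexph (Real.exp_nonneg _) (by norm_num)
    _ = 2 * (Real.sqrt ((n:ℝ) * p) * M) := by
        field_simp
    _ ≤ 4 * Real.sqrt ((n:ℝ) * p) * M := by
        nlinarith [Real.sqrt_nonneg ((n:ℝ) * p), hM.le]
end

section
/- Let Z_1,…,Z_n be independent random variables and g_1,…,g_n: 𝒵^n → ℝ such that for each i, g_i has the bounded differences property with constant β in every coordinate except the i-th, and E[g_i(Z) | Z_{[n]∖{i}}] = 0 almost surely. Then for all i ≠ j, |E[g_i(Z) g_j(Z)]| ≤ 4β². -/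
open MeasureTheory ProbabilityTheory Real

namespace WeakCorrAux

variable {𝒵 : Type*} [MeasurableSpace 𝒵] {n : ℕ}
variable (𝔭 : Fin n → Measure 𝒵) [∀ k, IsProbabilityMeasure (𝔭 k)]

/-- Averaging a function over the `i`-th coordinate. -/
noncomputable def A (i : Fin n) (f : (Fin n → 𝒵) → ℝ) (z : Fin n → 𝒵) : ℝ :=
  ∫ t, f (Function.update z i t) ∂𝔭 i

lemma mp (i : Fin n) :
    MeasurePreserving (fun p : (Fin n → 𝒵) × 𝒵 => Function.update p.1 i p.2)
      ((Measure.pi 𝔭).prod (𝔭 i)) (Measure.pi 𝔭) := by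
  classical
  refine ⟨measurable_update', ?_⟩
  refine (Measure.pi_eq fun s hs => ?_).symm
  have hpre : (fun p : (Fin n → 𝒵) × 𝒵 => Function.update p.1 i p.2) ⁻¹' Set.pi Set.univ s
      = (Set.pi Set.univ (Function.update s i Set.univ)) ×ˢ (s i) := by
    ext ⟨z, t⟩
    simp only [Set.mem_preimage, Set.mem_pi, Set.mem_univ, forall_true_left, Set.mem_prod]
    constructor
    · intro hmem
      refine ⟨fun k => ?_, by simpa using hmem i⟩
      by_cases hk : k = i
      · subst hk; simp
      · simpa [Function.update_of_ne hk] using hmem k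
    · rintro ⟨h1, h2⟩ k
      by_cases hk : k = i
      · subst hk; simpa using h2
      · simpa [Function.update_of_ne hk] using h1 k
  rw [Measure.map_apply measurable_update' (MeasurableSet.univ_pi hs), hpre,
    Measure.prod_prod, Measure.pi_pi]
  have h1 : ∀ k, 𝔭 k (Function.update s i Set.univ k)
      = Function.update (fun k => 𝔭 k (s k)) i 1 k := by
    intro k
    by_cases hk : k = i
    · subst hk; simp
    · simp [Function.update_of_ne hk]
  calc (∏ k, 𝔭 k (Function.update s i Set.univ k)) * 𝔭 i (s i)
      = (∏ k, Function.update (fun k => 𝔭 k (s k)) i 1 k) * 𝔭 i (s i) := by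
        rw [Finset.prod_congr rfl fun k _ => h1 k]
    _ = (∏ k ∈ Finset.univ.erase i, 𝔭 k (s k)) * 𝔭 i (s i) := by
        rw [Finset.prod_update_of_mem (Finset.mem_univ i), one_mul,
          Finset.sdiff_singleton_eq_erase]
    _ = ∏ k, 𝔭 k (s k) := Finset.prod_erase_mul _ _ (Finset.mem_univ i)

lemma compT_integrable (i : Fin n) {f : (Fin n → 𝒵) → ℝ} (hf : Integrable f (Measure.pi 𝔭)) :
    Integrable (fun p : (Fin n → 𝒵) × 𝒵 => f (Function.update p.1 i p.2))
      ((Measure.pi 𝔭).prod (𝔭 i)) :=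
  ((mp 𝔭 i).integrable_comp hf.aestronglyMeasurable).2 hf

lemma F3 (i : Fin n) {f : (Fin n → 𝒵) → ℝ} (hf : Integrable f (Measure.pi 𝔭)) :
    ∫ z, f z ∂Measure.pi 𝔭 = ∫ z, A 𝔭 i f z ∂Measure.pi 𝔭 := by
  have h1 := compT_integrable 𝔭 i hf
  calc ∫ z, f z ∂Measure.pi 𝔭
      = ∫ p, f (Function.update p.1 i p.2) ∂((Measure.pi 𝔭).prod (𝔭 i)) := by
        have h2 := integral_map (μ := (Measure.pi 𝔭).prod (𝔭 i))
          (mp 𝔭 i).measurable.aemeasurable (f := f)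
          (by rw [(mp 𝔭 i).map_eq]; exact hf.aestronglyMeasurable)
        rw [(mp 𝔭 i).map_eq] at h2
        exact h2
    _ = ∫ z, ∫ t, f (Function.update z i t) ∂𝔭 i ∂Measure.pi 𝔭 := integral_prod _ h1
    _ = ∫ z, A 𝔭 i f z ∂Measure.pi 𝔭 := rfl

lemma F4 (i : Fin n) {φ : (Fin n → 𝒵) → ℝ} (hφm : Measurable φ)
    (h : φ =ᵐ[Measure.pi 𝔭] 0) :
    ∀ᵐ z ∂Measure.pi 𝔭, ∀ᵐ t ∂𝔭 i, φ (Function.update z i t) = 0 := by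
  have hN : MeasurableSet {z : Fin n → 𝒵 | φ z ≠ 0} :=
    (hφm (measurableSet_singleton (0 : ℝ))).compl
  have hN0 : Measure.pi 𝔭 {z | φ z ≠ 0} = 0 := by
    have := h
    rw [Filter.EventuallyEq, ae_iff] at this
    simpa using this
  have hprod : ∀ᵐ p ∂((Measure.pi 𝔭).prod (𝔭 i)), φ (Function.update p.1 i p.2) = 0 := by
    rw [ae_iff]
    have hset : {p : (Fin n → 𝒵) × 𝒵 | ¬ φ (Function.update p.1 i p.2) = 0}
        = (fun p : (Fin n → 𝒵) × 𝒵 => Function.update p.1 i p.2) ⁻¹' {z | φ z ≠ 0} := rfl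
    rw [hset, ← Measure.map_apply measurable_update' hN, (mp 𝔭 i).map_eq, hN0]
  exact Measure.ae_ae_of_ae_prod hprod

lemma F5 (i : Fin n) {f : (Fin n → 𝒵) → ℝ} (hf : Integrable f (Measure.pi 𝔭)) :
    ∀ᵐ z ∂Measure.pi 𝔭, Integrable (fun t => f (Function.update z i t)) (𝔭 i) :=
  (compT_integrable 𝔭 i hf).prod_right_ae

lemma F6 (i : Fin n) {f : (Fin n → 𝒵) → ℝ} (hf : Integrable f (Measure.pi 𝔭)) :
    Integrable (A 𝔭 i f) (Measure.pi 𝔭) :=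
  (compT_integrable 𝔭 i hf).integral_prod_left

lemma measA (i : Fin n) {f : (Fin n → 𝒵) → ℝ} (hf : Measurable f) :
    StronglyMeasurable (A 𝔭 i f) :=
  (hf.comp measurable_update').stronglyMeasurable.integral_prod_right'

end WeakCorrAux

open WeakCorrAux

theorem weak_correlation {Ω 𝒵 : Type*} [MeasurableSpace Ω] [MeasurableSpace 𝒵]
    (μ : Measure Ω) [IsProbabilityMeasure μ] (n : ℕ)
    (Z : Fin n → Ω → 𝒵) (hZ : ∀ i, Measurable (Z i))
    (hindep : iIndepFun Z μ)
    (g : Fin n → (Fin n → 𝒵) → ℝ) (hg : ∀ i, Measurable (g i)) (β : ℝ)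
    (hbd : ∀ (i j : Fin n), j ≠ i → ∀ (x x' : Fin n → 𝒵),
      (∀ k, k ≠ j → x k = x' k) → |g i x - g i x'| ≤ β)
    (hzero : ∀ i,
      (μ[(fun ω' => g i (fun j => Z j ω')) |
          MeasurableSpace.comap (fun ω' (j : {j : Fin n // j ≠ i}) => Z j ω')
            inferInstance]) =ᵐ[μ] 0)
    (hint : ∀ i, Integrable (fun ω => g i (fun j => Z j ω)) μ)
    (hint2 : ∀ i j, Integrable
      (fun ω => g i (fun k => Z k ω) * g j (fun k => Z k ω)) μ) :
    ∀ i j : Fin n, i ≠ j →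
      |∫ ω, g i (fun k => Z k ω) * g j (fun k => Z k ω) ∂μ| ≤ 4 * β ^ 2 := by
  classical
  intro i j hij
  -- the canonical product space
  set vec : Ω → (Fin n → 𝒵) := fun ω k => Z k ω with hvecdef
  have hvecm : Measurable vec := measurable_pi_lambda _ hZ
  set 𝔭 : Fin n → Measure 𝒵 := fun k => μ.map (Z k) with h𝔭def
  haveI : ∀ k, IsProbabilityMeasure (𝔭 k) := fun k =>
    Measure.isProbabilityMeasure_map (hZ k).aemeasurable
  have hmap : μ.map vec = Measure.pi 𝔭 := by
    refine (Measure.pi_eq fun s hs => ?_).symm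
    rw [Measure.map_apply hvecm (MeasurableSet.univ_pi hs)]
    have hpre : vec ⁻¹' Set.univ.pi s = ⋂ k ∈ Finset.univ, Z k ⁻¹' s k := by
      ext ω; simp [Set.mem_pi, vec]
    rw [hpre, hindep.measure_inter_preimage_eq_mul Finset.univ (fun k _ => hs k)]
    exact Finset.prod_congr rfl fun k _ => (Measure.map_apply (hZ k) (hs k)).symm
  have key_eq : ∀ {F : (Fin n → 𝒵) → ℝ}, AEStronglyMeasurable F (Measure.pi 𝔭) →
      ∫ ω, F (vec ω) ∂μ = ∫ z, F z ∂(Measure.pi 𝔭) := by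
    intro F hF
    rw [← hmap] at hF ⊢
    exact (integral_map hvecm.aemeasurable hF).symm
  have key_int : ∀ {F : (Fin n → 𝒵) → ℝ}, AEStronglyMeasurable F (Measure.pi 𝔭) →
      (Integrable (fun ω => F (vec ω)) μ ↔ Integrable F (Measure.pi 𝔭)) := by
    intro F hF
    rw [← hmap] at hF ⊢
    exact (integrable_map_measure hF hvecm.aemeasurable).symm
  -- integrability on the product space
  have Ig : ∀ k, Integrable (g k) (Measure.pi 𝔭) := fun k =>
    (key_int (hg k).aestronglyMeasurable).1 (hint k)
  have Ig2 : Integrable (fun z => g i z * g j z) (Measure.pi 𝔭) :=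
    (key_int ((hg i).mul (hg j)).aestronglyMeasurable).1 (hint2 i j)
  -- β is nonnegative
  have hΩ : Nonempty Ω := μ.nonempty_of_neZero
  obtain ⟨ω₀⟩ := hΩ
  have hβ : 0 ≤ β := by
    have := hbd i j hij.symm (vec ω₀) (vec ω₀) (fun k _ => rfl)
    simpa using this
  -- slices in a non-sensitive coordinate are integrable
  have slice_int : ∀ (a c : Fin n), c ≠ a → ∀ z,
      Integrable (fun t => g a (Function.update z c t)) (𝔭 c) := by
    intro a c hca z
    refine Integrable.mono' (integrable_const (|g a z| + β))
      ((hg a).comp (measurable_update z)).aestronglyMeasurable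
      (Filter.Eventually.of_forall fun t => ?_)
    have h1 := hbd a c hca (Function.update z c t) z
      (fun k hk => Function.update_of_ne hk _ _)
    have h2 : |g a (Function.update z c t)| - |g a z|
        ≤ |g a (Function.update z c t) - g a z| := abs_sub_abs_le_abs_sub _ _
    show |g a (Function.update z c t)| ≤ |g a z| + β
    linarith
  have hA_bound : ∀ (a c : Fin n), c ≠ a → ∀ z, |g a z - A 𝔭 c (g a) z| ≤ β := by
    intro a c hca z
    have hint' := slice_int a c hca z
    have hrw : g a z - A 𝔭 c (g a) z
        = ∫ t, (g a z - g a (Function.update z c t)) ∂𝔭 c := by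
      rw [integral_sub (integrable_const _) hint', integral_const]
      simp [A]
    rw [hrw]
    have := norm_integral_le_of_norm_le_const (μ := 𝔭 c)
      (f := fun t => g a z - g a (Function.update z c t)) (C := β)
      (Filter.Eventually.of_forall fun t => by
        have := hbd a c hca z (Function.update z c t)
          (fun k hk => (Function.update_of_ne hk _ _).symm)
        simpa using this)
    simpa using this
  have hA_abs : ∀ (a c : Fin n), c ≠ a → ∀ z, |A 𝔭 c (g a) z| ≤ |g a z| + β := by
    intro a c hca z
    have h1 := hA_bound a c hca z
    have h2 : |A 𝔭 c (g a) z| - |g a z| ≤ |A 𝔭 c (g a) z - g a z| :=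
      abs_sub_abs_le_abs_sub _ _
    rw [abs_sub_comm] at h2
    linarith
  -- Step B : the conditional mean zero hypothesis on the product space
  have Phi0 : ∀ a : Fin n, A 𝔭 a (g a) =ᵐ[Measure.pi 𝔭] 0 := by
    intro a
    set R : Ω → ({j : Fin n // j ≠ a} → 𝒵) := fun ω jj => Z jj ω with hRdef
    have hRm : Measurable R := measurable_pi_lambda _ fun jj => hZ jj
    have hm : MeasurableSpace.comap R inferInstance ≤ (inferInstance : MeasurableSpace Ω) :=
      hRm.comap_le
    haveI : SigmaFinite (μ.trim hm) := by
      have : IsFiniteMeasure (μ.trim hm) := ⟨by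
        rw [trim_measurableSet_eq hm MeasurableSet.univ]
        exact measure_lt_top μ _⟩
      infer_instance
    set φ : Ω → ℝ := fun ω => A 𝔭 a (g a) (vec ω) with hφdef
    set restr : (Fin n → 𝒵) → ({j : Fin n // j ≠ a} → 𝒵) := fun z jj => z jj with hrestrdef
    have hrestrm : Measurable restr := measurable_pi_lambda _ fun jj => measurable_pi_apply _
    have hAsm : StronglyMeasurable (A 𝔭 a (g a)) := measA 𝔭 a (hg a)
    have hAm : Measurable (A 𝔭 a (g a)) := hAsm.measurable
    have hφint : Integrable φ μ :=
      (key_int hAsm.aestronglyMeasurable).2 (F6 𝔭 a (Ig a))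
    have heq : ∀ s, MeasurableSet[MeasurableSpace.comap R inferInstance] s → μ s < ⊤ →
        ∫ ω in s, φ ω ∂μ = ∫ ω in s, g a (vec ω) ∂μ := by
      rintro s ⟨B, hB, rfl⟩ _
      have hsm0 : MeasurableSet (R ⁻¹' B) := hRm hB
      have hSm : MeasurableSet (restr ⁻¹' B) := hrestrm hB
      have hmem : ∀ ω, (vec ω ∈ restr ⁻¹' B) ↔ (ω ∈ R ⁻¹' B) := fun ω => Iff.rfl
      rw [← integral_indicator hsm0, ← integral_indicator hsm0]
      have h1 : Set.indicator (R ⁻¹' B) φ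
          = fun ω => Set.indicator (restr ⁻¹' B) (A 𝔭 a (g a)) (vec ω) := by
        funext ω
        by_cases hω : ω ∈ R ⁻¹' B
        · rw [Set.indicator_of_mem hω, Set.indicator_of_mem ((hmem ω).2 hω)]
        · rw [Set.indicator_of_notMem hω,
            Set.indicator_of_notMem (fun hc => hω ((hmem ω).1 hc))]
      have h2 : Set.indicator (R ⁻¹' B) (fun ω => g a (vec ω))
          = fun ω => Set.indicator (restr ⁻¹' B) (g a) (vec ω) := by
        funext ω
        by_cases hω : ω ∈ R ⁻¹' B
        · rw [Set.indicator_of_mem hω, Set.indicator_of_mem ((hmem ω).2 hω)]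
        · rw [Set.indicator_of_notMem hω,
            Set.indicator_of_notMem (fun hc => hω ((hmem ω).1 hc))]
      rw [h1, h2, key_eq (hAsm.aestronglyMeasurable.indicator hSm),
        key_eq ((hg a).aestronglyMeasurable.indicator hSm)]
      have hIind : Integrable (Set.indicator (restr ⁻¹' B) (g a)) (Measure.pi 𝔭) :=
        (Ig a).indicator hSm
      rw [F3 𝔭 a hIind]
      refine integral_congr_ae (Filter.Eventually.of_forall fun z => ?_)
      have hupd : ∀ t, (Function.update z a t ∈ restr ⁻¹' B) ↔ z ∈ restr ⁻¹' B := by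
        intro t
        have : restr (Function.update z a t) = restr z := by
          funext jj
          exact Function.update_of_ne jj.2 _ _
        simp [Set.mem_preimage, this]
      show Set.indicator (restr ⁻¹' B) (A 𝔭 a (g a)) z
          = A 𝔭 a (Set.indicator (restr ⁻¹' B) (g a)) z
      by_cases hz : z ∈ restr ⁻¹' B
      · rw [Set.indicator_of_mem hz]
        simp only [A]
        refine integral_congr_ae (Filter.Eventually.of_forall fun t => ?_)
        exact (Set.indicator_of_mem ((hupd t).2 hz) _).symm
      · rw [Set.indicator_of_notMem hz]
        symm
        have hz' : ∀ t, Set.indicator (restr ⁻¹' B) (g a) (Function.update z a t) = 0 :=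
          fun t => Set.indicator_of_notMem (fun hc => hz ((hupd t).1 hc)) _
        simp only [A, hz', integral_zero]
    have hφmeas : AEStronglyMeasurable[MeasurableSpace.comap R inferInstance] φ μ := by
      set ψ : ({j : Fin n // j ≠ a} → 𝒵) → ℝ :=
        fun w => ∫ t, g a (fun k => if h : k = a then t else w ⟨k, h⟩) ∂𝔭 a with hψdef
      have hpair : Measurable (fun p : ({j : Fin n // j ≠ a} → 𝒵) × 𝒵 =>
          (fun k => if h : k = a then p.2 else p.1 ⟨k, h⟩ : Fin n → 𝒵)) := by
        apply measurable_pi_lambda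
        intro k
        by_cases hk : k = a
        · simp only [hk, dif_pos]
          exact measurable_snd
        · simp only [dif_neg hk]
          exact (measurable_pi_apply _).comp measurable_fst
      have hψ : StronglyMeasurable ψ :=
        ((hg a).comp hpair).stronglyMeasurable.integral_prod_right'
      have hφψ : φ = ψ ∘ R := by
        funext ω
        show (∫ t, g a (Function.update (vec ω) a t) ∂𝔭 a)
            = ∫ t, g a (fun k => if h : k = a then t else R ω ⟨k, h⟩) ∂𝔭 a
        refine integral_congr_ae (Filter.Eventually.of_forall fun t => ?_)
        show g a (Function.update (vec ω) a t)
            = g a (fun k => if h : k = a then t else R ω ⟨k, h⟩)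
        congr 1
        funext k
        by_cases hk : k = a
        · subst hk; simp
        · simp only [Function.update_of_ne hk, dif_neg hk]; rfl
      exact ⟨ψ ∘ R, hψ.comp_measurable (comap_measurable R), by rw [hφψ]⟩
    have hcond : φ =ᵐ[μ] μ[(fun ω => g a (vec ω)) | MeasurableSpace.comap R inferInstance] :=
      ae_eq_condExp_of_forall_setIntegral_eq hm (hint a)
        (fun s _ _ => hφint.integrableOn) heq hφmeas
    have hφ0 : φ =ᵐ[μ] 0 := hcond.trans (hzero a)
    have hN : MeasurableSet {z : Fin n → 𝒵 | A 𝔭 a (g a) z ≠ 0} :=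
      (hAm (measurableSet_singleton (0 : ℝ))).compl
    have hν0 : Measure.pi 𝔭 {z | A 𝔭 a (g a) z ≠ 0} = 0 := by
      rw [← hmap, Measure.map_apply hvecm hN]
      have hpre : vec ⁻¹' {z | A 𝔭 a (g a) z ≠ 0} = {ω | φ ω ≠ 0} := rfl
      rw [hpre]
      have := hφ0
      rw [Filter.EventuallyEq, ae_iff] at this
      simpa using this
    rw [Filter.EventuallyEq, ae_iff]
    simpa using hν0
  -- Step C : the main computation
  set h : (Fin n → 𝒵) → ℝ := A 𝔭 i (g j) with hhdef
  set k : (Fin n → 𝒵) → ℝ := A 𝔭 j (g i) with hkdef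
  have hhm : Measurable h := (measA 𝔭 i (hg j)).measurable
  have hkm : Measurable k := (measA 𝔭 j (hg i)).measurable
  have hb_h : ∀ z, |h z| ≤ |g j z| + β := hA_abs j i hij
  have hb_k : ∀ z, |k z| ≤ |g i z| + β := hA_abs i j hij.symm
  have hupd_h : ∀ z t, h (Function.update z i t) = h z := by
    intro z t
    simp only [hhdef, A, Function.update_idem]
  have hupd_k : ∀ z s, k (Function.update z j s) = k z := by
    intro z s
    simp only [hkdef, A, Function.update_idem]
  -- integrability of the various products
  have Ifh : Integrable (fun z => g i z * h z) (Measure.pi 𝔭) := by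
    refine Integrable.mono' (Ig2.abs.add ((Ig i).abs.const_mul β))
      ((hg i).mul hhm).aestronglyMeasurable (Filter.Eventually.of_forall fun z => ?_)
    show |g i z * h z| ≤ |g i z * g j z| + β * |g i z|
    calc |g i z * h z| = |g i z| * |h z| := abs_mul _ _
      _ ≤ |g i z| * (|g j z| + β) := mul_le_mul_of_nonneg_left (hb_h z) (abs_nonneg _)
      _ = |g i z * g j z| + β * |g i z| := by rw [abs_mul]; ring
  have Ikg : Integrable (fun z => k z * g j z) (Measure.pi 𝔭) := by
    refine Integrable.mono' (Ig2.abs.add ((Ig j).abs.const_mul β))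
      (hkm.mul (hg j)).aestronglyMeasurable (Filter.Eventually.of_forall fun z => ?_)
    show |k z * g j z| ≤ |g i z * g j z| + β * |g j z|
    calc |k z * g j z| = |k z| * |g j z| := abs_mul _ _
      _ ≤ (|g i z| + β) * |g j z| := mul_le_mul_of_nonneg_right (hb_k z) (abs_nonneg _)
      _ = |g i z * g j z| + β * |g j z| := by rw [abs_mul]; ring
  have Ikh : Integrable (fun z => k z * h z) (Measure.pi 𝔭) := by
    refine Integrable.mono'
      (((Ig2.abs.add ((Ig i).abs.const_mul β)).add ((Ig j).abs.const_mul β)).add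
        (integrable_const (β * β)))
      (hkm.mul hhm).aestronglyMeasurable (Filter.Eventually.of_forall fun z => ?_)
    show |k z * h z| ≤ |g i z * g j z| + β * |g i z| + β * |g j z| + β * β
    calc |k z * h z| = |k z| * |h z| := abs_mul _ _
      _ ≤ (|g i z| + β) * (|g j z| + β) :=
        mul_le_mul (hb_k z) (hb_h z) (abs_nonneg _) (by positivity)
      _ = |g i z * g j z| + β * |g i z| + β * |g j z| + β * β := by rw [abs_mul]; ring
  -- the three vanishing integrals
  have e1 : ∫ z, g i z * h z ∂(Measure.pi 𝔭) = 0 := by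
    rw [F3 𝔭 i Ifh]
    have key : (fun z => A 𝔭 i (fun w => g i w * h w) z) =ᵐ[Measure.pi 𝔭] 0 := by
      filter_upwards [Phi0 i] with z hz
      have hz' : A 𝔭 i (g i) z = 0 := hz
      show A 𝔭 i (fun w => g i w * h w) z = (0 : ℝ)
      have hstep : A 𝔭 i (fun w => g i w * h w) z = A 𝔭 i (g i) z * h z := by
        simp only [A, hupd_h]
        exact integral_mul_const _ _
      rw [hstep, hz', zero_mul]
    exact integral_eq_zero_of_ae key
  have e2 : ∫ z, k z * g j z ∂(Measure.pi 𝔭) = 0 := by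
    rw [F3 𝔭 j Ikg]
    have key : (fun z => A 𝔭 j (fun w => k w * g j w) z) =ᵐ[Measure.pi 𝔭] 0 := by
      filter_upwards [Phi0 j] with z hz
      have hz' : A 𝔭 j (g j) z = 0 := hz
      show A 𝔭 j (fun w => k w * g j w) z = (0 : ℝ)
      have hstep : A 𝔭 j (fun w => k w * g j w) z = k z * A 𝔭 j (g j) z := by
        simp only [A, hupd_k]
        exact integral_const_mul _ _
      rw [hstep, hz', mul_zero]
    exact integral_eq_zero_of_ae key
  -- the hardest one : ∫ k h = 0
  have comp_fst_int : ∀ {F : 𝒵 → ℝ}, AEStronglyMeasurable F (𝔭 i) → Integrable F (𝔭 i) →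
      Integrable (fun p : 𝒵 × 𝒵 => F p.1) ((𝔭 i).prod (𝔭 j)) := by
    intro F hFm hF
    have hmapfst : ((𝔭 i).prod (𝔭 j)).map Prod.fst = 𝔭 i := by
      rw [show ((𝔭 i).prod (𝔭 j)).map Prod.fst = ((𝔭 i).prod (𝔭 j)).fst from rfl,
        Measure.fst_prod]
    exact (integrable_map_measure (by rwa [hmapfst]) measurable_fst.aemeasurable).1
      (by rwa [hmapfst])
  have e3 : ∫ z, k z * h z ∂(Measure.pi 𝔭) = 0 := by
    rw [F3 𝔭 i Ikh]
    have hAk0 : (fun z => A 𝔭 i k z) =ᵐ[Measure.pi 𝔭] 0 := by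
      have hAim : Measurable (A 𝔭 i (g i)) := (measA 𝔭 i (hg i)).measurable
      filter_upwards [F5 𝔭 i (Ig i), F4 𝔭 j hAim (Phi0 i)] with z hz1 hz2
      show A 𝔭 i k z = (0 : ℝ)
      -- swap the two integrals
      have hswap_int : Integrable
          (Function.uncurry fun t s => g i (Function.update (Function.update z i t) j s))
          ((𝔭 i).prod (𝔭 j)) := by
        have hmeas : Measurable (Function.uncurry fun t s =>
            g i (Function.update (Function.update z i t) j s)) := by
          apply (hg i).comp
          exact measurable_update'.comp
            (((measurable_update z).comp measurable_fst).prodMk measurable_snd)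
        refine Integrable.mono'
          ((comp_fst_int ((hg i).comp (measurable_update z)).aestronglyMeasurable hz1).abs.add
            (integrable_const β))
          hmeas.aestronglyMeasurable (Filter.Eventually.of_forall fun p => ?_)
        have hb := hbd i j hij.symm
          (Function.update (Function.update z i p.1) j p.2)
          (Function.update z i p.1)
          (fun kk hkk => Function.update_of_ne hkk _ _)
        have h2 : |g i (Function.update (Function.update z i p.1) j p.2)|
            - |g i (Function.update z i p.1)|
            ≤ |g i (Function.update (Function.update z i p.1) j p.2)
              - g i (Function.update z i p.1)| := abs_sub_abs_le_abs_sub _ _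
        show |g i (Function.update (Function.update z i p.1) j p.2)|
            ≤ |g i (Function.update z i p.1)| + β
        linarith
      have hAkz : A 𝔭 i k z
          = ∫ t, ∫ s, g i (Function.update (Function.update z i t) j s) ∂𝔭 j ∂𝔭 i := rfl
      rw [hAkz, integral_integral_swap hswap_int]
      have hinner : ∀ s, (∫ t, g i (Function.update (Function.update z i t) j s) ∂𝔭 i)
          = A 𝔭 i (g i) (Function.update z j s) := by
        intro s
        simp only [A]
        refine integral_congr_ae (Filter.Eventually.of_forall fun t => ?_)
        exact congrArg (g i) (Function.update_comm hij t s z)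
      calc (∫ s, ∫ t, g i (Function.update (Function.update z i t) j s) ∂𝔭 i ∂𝔭 j)
          = ∫ s, A 𝔭 i (g i) (Function.update z j s) ∂𝔭 j :=
            integral_congr_ae (Filter.Eventually.of_forall fun s => hinner s)
        _ = 0 := integral_eq_zero_of_ae (hz2.mono fun s hs => hs)
    have key : (fun z => A 𝔭 i (fun w => k w * h w) z) =ᵐ[Measure.pi 𝔭] 0 := by
      filter_upwards [hAk0] with z hz
      have hz' : A 𝔭 i k z = 0 := hz
      show A 𝔭 i (fun w => k w * h w) z = (0 : ℝ)
      have hstep : A 𝔭 i (fun w => k w * h w) z = A 𝔭 i k z * h z := by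
        simp only [A, hupd_h]
        exact integral_mul_const _ _
      rw [hstep, hz', zero_mul]
    exact integral_eq_zero_of_ae key
  -- the bounded term
  have Idiff : Integrable (fun z => (g i z - k z) * (g j z - h z)) (Measure.pi 𝔭) := by
    refine Integrable.mono' (integrable_const (β * β))
      (((hg i).sub hkm).mul ((hg j).sub hhm)).aestronglyMeasurable
      (Filter.Eventually.of_forall fun z => ?_)
    show |(g i z - k z) * (g j z - h z)| ≤ β * β
    calc |(g i z - k z) * (g j z - h z)| = |g i z - k z| * |g j z - h z| := abs_mul _ _
      _ ≤ β * β := mul_le_mul (hA_bound i j hij.symm z) (hA_bound j i hij z)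
          (abs_nonneg _) hβ
  have e4 : |∫ z, (g i z - k z) * (g j z - h z) ∂(Measure.pi 𝔭)| ≤ β * β := by
    have := norm_integral_le_of_norm_le_const (μ := Measure.pi 𝔭)
      (f := fun z => (g i z - k z) * (g j z - h z)) (C := β * β)
      (Filter.Eventually.of_forall fun z => by
        show |(g i z - k z) * (g j z - h z)| ≤ β * β
        calc |(g i z - k z) * (g j z - h z)| = |g i z - k z| * |g j z - h z| := abs_mul _ _
          _ ≤ β * β := mul_le_mul (hA_bound i j hij.symm z) (hA_bound j i hij z)
              (abs_nonneg _) hβ)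
    simpa using this
  -- putting everything together
  have I12 : Integrable (fun z => (g i z - k z) * (g j z - h z) + k z * g j z)
      (Measure.pi 𝔭) := by exact Idiff.add Ikg
  have I123 : Integrable
      (fun z => (g i z - k z) * (g j z - h z) + k z * g j z + g i z * h z)
      (Measure.pi 𝔭) := by exact I12.add Ifh
  have htotal : ∫ z, g i z * g j z ∂(Measure.pi 𝔭)
      = ∫ z, (g i z - k z) * (g j z - h z) ∂(Measure.pi 𝔭) := by
    calc ∫ z, g i z * g j z ∂(Measure.pi 𝔭)
        = ∫ z, ((g i z - k z) * (g j z - h z) + k z * g j z + g i z * h z)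
            - k z * h z ∂(Measure.pi 𝔭) := by
          refine integral_congr_ae (Filter.Eventually.of_forall fun z => ?_)
          show g i z * g j z
              = ((g i z - k z) * (g j z - h z) + k z * g j z + g i z * h z) - k z * h z
          ring
      _ = ∫ z, (g i z - k z) * (g j z - h z) ∂(Measure.pi 𝔭) := by
          rw [integral_sub I123 Ikh, integral_add I12 Ifh, integral_add Idiff Ikg,
            e1, e2, e3]
          ring
  have hfinal : ∫ ω, g i (fun k => Z k ω) * g j (fun k => Z k ω) ∂μ
      = ∫ z, g i z * g j z ∂(Measure.pi 𝔭) :=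
    key_eq ((hg i).mul (hg j)).aestronglyMeasurable
  rw [hfinal, htotal]
  nlinarith [sq_nonneg β, e4,
    abs_nonneg (∫ z, (g i z - k z) * (g j z - h z) ∂(Measure.pi 𝔭))]
end

section
/- With g_i as defined from a γ-uniformly stable algorithm with loss bounded by L (g_i(Z) = E_{Z_i'}[E_Z ℓ(A_{S^i}, Z) − ℓ(A_{S^i}, Z_i)]), each g_i satisfies: |g_i| ≤ L almost surely, E[g_i | Z_{[n]∖{i}}] = 0 almost surely, and as a deterministic function g_i satisfies the bounded differences property with constant 2γ in all coordinates except the i-th. -/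
open MeasureTheory Real

private lemma my_integrable_of_bounded {α : Type*} [MeasurableSpace α] {μ : Measure α}
    [IsFiniteMeasure μ] {f : α → ℝ} (hf : AEStronglyMeasurable f μ) {C : ℝ}
    (h : ∀ a, |f a| ≤ C) : Integrable f μ :=
  ⟨hf, HasFiniteIntegral.of_bounded (C := C) (ae_of_all _ (by simpa [Real.norm_eq_abs] using h))⟩

private lemma my_abs_integral_le {α : Type*} [MeasurableSpace α] {μ : Measure α}
    [IsProbabilityMeasure μ] {f : α → ℝ} {C : ℝ} (h : ∀ a, |f a| ≤ C) :
    |∫ a, f a ∂μ| ≤ C := by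
  have := norm_integral_le_of_norm_le_const (μ := μ) (f := f) (C := C)
      (ae_of_all _ (by simpa [Real.norm_eq_abs] using h))
  simpa [Real.norm_eq_abs] using this

theorem g_properties {𝒵 H : Type*} [MeasurableSpace 𝒵]
    (n : ℕ) (hn : 0 < n) (D : Measure 𝒵) [IsProbabilityMeasure D]
    (A : (Fin n → 𝒵) → H) (l : H → 𝒵 → ℝ)
    (hmeas : Measurable (fun p : (Fin n → 𝒵) × 𝒵 => l (A p.1) p.2))
    (γ L : ℝ) (hl0 : ∀ h z, 0 ≤ l h z) (hlL : ∀ h z, l h z ≤ L)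
    (hstab : ∀ (s : Fin n → 𝒵) (i : Fin n) (z' w : 𝒵),
      |l (A s) w - l (A (Function.update s i z')) w| ≤ γ)
    (g : Fin n → (Fin n → 𝒵) → ℝ)
    (hgdef : ∀ (i : Fin n) (s : Fin n → 𝒵),
      g i s = ∫ z', ((∫ w, l (A (Function.update s i z')) w ∂D) -
        l (A (Function.update s i z')) (s i)) ∂D) :
    (∀ (i : Fin n) (s : Fin n → 𝒵), |g i s| ≤ L) ∧
    (∀ (i : Fin n) (s : Fin n → 𝒵),
      ∫ t, g i (Function.update s i t) ∂D = 0) ∧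
    (∀ (i j : Fin n), j ≠ i → ∀ (s s' : Fin n → 𝒵),
      (∀ k, k ≠ j → s k = s' k) → |g i s - g i s'| ≤ 2 * γ) := by
  -- notation: for fixed i, s let φ z' w = l (A (update s i z')) w, F z' = ∫ w, φ z' w
  have hφmeas : ∀ (i : Fin n) (s : Fin n → 𝒵),
      Measurable (fun p : 𝒵 × 𝒵 => l (A (Function.update s i p.1)) p.2) := by
    intro i s
    exact hmeas.comp (((measurable_update s (a := i)).comp measurable_fst).prodMk
      measurable_snd)
  have hFmeas : ∀ (i : Fin n) (s : Fin n → 𝒵),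
      StronglyMeasurable (fun z' => ∫ w, l (A (Function.update s i z')) w ∂D) :=
    fun i s => (hφmeas i s).stronglyMeasurable.integral_prod_right'
  have hne : Nonempty 𝒵 := by
    rcases isEmpty_or_nonempty 𝒵 with he | hne
    · have h1 : (D : Measure 𝒵) Set.univ = 1 := measure_univ
      rw [Set.univ_eq_empty_iff.2 he] at h1
      simp at h1
    · exact hne
  have hL0 : 0 ≤ L :=
    (hl0 (A (fun _ => hne.some)) hne.some).trans (hlL (A (fun _ => hne.some)) hne.some)
  have habs : ∀ (h : H) (w : 𝒵), |l h w| ≤ L := by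
    intro h w
    rw [abs_le]
    constructor
    · linarith [hl0 h w]
    · exact hlL h w
  have hFbd : ∀ (i : Fin n) (s : Fin n → 𝒵) (z' : 𝒵),
      0 ≤ (∫ w, l (A (Function.update s i z')) w ∂D) ∧
      (∫ w, l (A (Function.update s i z')) w ∂D) ≤ L := by
    intro i s z'
    constructor
    · exact integral_nonneg fun w => hl0 _ _
    · have h1 : |∫ w, l (A (Function.update s i z')) w ∂D| ≤ L :=
        my_abs_integral_le fun w => habs _ _
      exact (le_abs_self _).trans h1
  -- Part 1
  have part1 : ∀ (i : Fin n) (s : Fin n → 𝒵), |g i s| ≤ L := by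
    intro i s
    rw [hgdef]
    refine my_abs_integral_le fun z' => abs_le.2 ⟨?_, ?_⟩
    · have := (hFbd i s z').1
      have := hlL (A (Function.update s i z')) (s i)
      linarith
    · have := (hFbd i s z').2
      have := hl0 (A (Function.update s i z')) (s i)
      linarith
  refine ⟨part1, ?_, ?_⟩
  -- Part 2
  · intro i s
    have hupd : ∀ (t z' : 𝒵),
        Function.update (Function.update s i t) i z' = Function.update s i z' := by
      intro t z'
      simp [Function.update_idem]
    have key : ∀ t : 𝒵, g i (Function.update s i t) =
        ∫ z', ((∫ w, l (A (Function.update s i z')) w ∂D) -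
          l (A (Function.update s i z')) t) ∂D := by
      intro t
      rw [hgdef]
      simp only [hupd, Function.update_self]
    simp only [key]
    -- swap the order of integration
    have hint : Integrable (Function.uncurry fun t z' =>
        ((∫ w, l (A (Function.update s i z')) w ∂D) - l (A (Function.update s i z')) t))
        (D.prod D) := by
      refine my_integrable_of_bounded ?_ (C := L) ?_
      · refine AEStronglyMeasurable.sub ?_ ?_
        · exact ((hFmeas i s).comp_measurable measurable_snd).aestronglyMeasurable
        · exact ((hφmeas i s).comp (measurable_snd.prodMk
            measurable_fst)).aestronglyMeasurable
      · rintro ⟨t, z'⟩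
        refine abs_le.2 ⟨?_, ?_⟩
        · have := (hFbd i s z').1
          have := hlL (A (Function.update s i z')) t
          simp only [Function.uncurry]
          linarith
        · have := (hFbd i s z').2
          have := hl0 (A (Function.update s i z')) t
          simp only [Function.uncurry]
          linarith
    rw [integral_integral_swap hint]
    have inner : ∀ z' : 𝒵, (∫ t, ((∫ w, l (A (Function.update s i z')) w ∂D) -
        l (A (Function.update s i z')) t) ∂D) = 0 := by
      intro z'
      have hintφ : Integrable (fun t => l (A (Function.update s i z')) t) D := by
        refine my_integrable_of_bounded ?_ (C := L) ?_
        · exact ((hφmeas i s).comp (measurable_const.prodMk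
            measurable_id)).aestronglyMeasurable
        · intro t
          exact abs_le.2 ⟨by linarith [hl0 (A (Function.update s i z')) t], hlL _ _⟩
      rw [integral_sub (integrable_const _) hintφ, integral_const]
      simp
    simp only [inner, integral_zero]
  -- Part 3
  · intro i j hji s s' hagree
    have hsi : s i = s' i := hagree i (fun h => hji h.symm)
    have hupd : ∀ z' : 𝒵, Function.update s' i z' =
        Function.update (Function.update s i z') j (s' j) := by
      intro z'
      funext k
      by_cases hk : k = i
      · subst hk
        rw [Function.update_self, Function.update_of_ne (fun h => hji h.symm),
          Function.update_self]
      · by_cases hk' : k = j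
        · subst hk'
          rw [Function.update_self, Function.update_of_ne hk]
        · rw [Function.update_of_ne hk, Function.update_of_ne hk',
            Function.update_of_ne hk, ← hagree k hk']
    have hpt : ∀ z' w : 𝒵,
        |l (A (Function.update s i z')) w - l (A (Function.update s' i z')) w| ≤ γ := by
      intro z' w
      rw [hupd z']
      exact hstab (Function.update s i z') j (s' j) w
    have hγ0 : 0 ≤ γ := le_trans (abs_nonneg _) (hpt (s i) (s i))
    -- integrability of both integrands
    have hintgr : ∀ (u : Fin n → 𝒵), Integrable (fun z' =>
        ((∫ w, l (A (Function.update u i z')) w ∂D) -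
          l (A (Function.update u i z')) (u i))) D := by
      intro u
      refine my_integrable_of_bounded ?_ (C := L) ?_
      · exact ((hFmeas i u).sub ((hφmeas i u).comp (measurable_id.prodMk
          measurable_const)).stronglyMeasurable).aestronglyMeasurable
      · intro z'
        refine abs_le.2 ⟨?_, ?_⟩
        · have := (hFbd i u z').1
          have := hlL (A (Function.update u i z')) (u i)
          linarith
        · have := (hFbd i u z').2
          have := hl0 (A (Function.update u i z')) (u i)
          linarith
    rw [hgdef, hgdef, ← integral_sub (hintgr s) (hintgr s')]
    refine my_abs_integral_le fun z' => ?_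
    have hF : |(∫ w, l (A (Function.update s i z')) w ∂D) -
        (∫ w, l (A (Function.update s' i z')) w ∂D)| ≤ γ := by
      have hintφ : ∀ (u : Fin n → 𝒵),
          Integrable (fun w => l (A (Function.update u i z')) w) D := by
        intro u
        refine my_integrable_of_bounded ?_ (C := L) ?_
        · exact ((hφmeas i u).comp (measurable_const.prodMk
            measurable_id)).aestronglyMeasurable
        · intro w
          exact abs_le.2 ⟨by linarith [hl0 (A (Function.update u i z')) w], hlL _ _⟩
      rw [← integral_sub (hintφ s) (hintφ s')]
      exact my_abs_integral_le fun w => hpt z' w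
    have hφdiff : |l (A (Function.update s i z')) (s i) -
        l (A (Function.update s' i z')) (s' i)| ≤ γ := by
      rw [← hsi]
      exact hpt z' (s i)
    calc |((∫ w, l (A (Function.update s i z')) w ∂D) -
            l (A (Function.update s i z')) (s i)) -
          ((∫ w, l (A (Function.update s' i z')) w ∂D) -
            l (A (Function.update s' i z')) (s' i))|
        ≤ |(∫ w, l (A (Function.update s i z')) w ∂D) -
            (∫ w, l (A (Function.update s' i z')) w ∂D)| +
          |l (A (Function.update s i z')) (s i) -
            l (A (Function.update s' i z')) (s' i)| := by
          have := abs_sub (((∫ w, l (A (Function.update s i z')) w ∂D) -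
            (∫ w, l (A (Function.update s' i z')) w ∂D)))
            ((l (A (Function.update s i z')) (s i) -
              l (A (Function.update s' i z')) (s' i)))
          refine (le_of_eq ?_).trans this
          congr 1
          ring
      _ ≤ γ + γ := add_le_add hF hφdiff
      _ = 2 * γ := by ring
end

section
/- Let a_1 ≥ a_2 ≥ … ≥ a_n ≥ 0 and let ε_1,…,ε_n be i.i.d. Rademacher signs. Then for every p ≥ 2 there exist universal constants c, C > 0 with c·(∑_{i=1}^{min(p,n)} a_i + √p·(∑_{i=p+1}^n a_i²)^{1/2}) ≤ ‖∑_{i=1}^n a_i ε_i‖_p ≤ C·(∑_{i=1}^{min(p,n)} a_i + √p·(∑_{i=p+1}^n a_i²)^{1/2}). -/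
open MeasureTheory ProbabilityTheory Real
open scoped ENNReal

namespace Hitczenko
open scoped Classical


noncomputable def sg (b : Bool) : ℝ := if b then 1 else -1

lemma sg_true : sg true = 1 := rfl
lemma sg_false : sg false = -1 := rfl
lemma abs_sg (b : Bool) : |sg b| = 1 := by cases b <;> simp [sg]
lemma sg_not (b : Bool) : sg (!b) = - sg b := by cases b <;> simp [sg]

noncomputable def Av (n : ℕ) (f : (Fin n → Bool) → ℝ) : ℝ :=
  (2 ^ n : ℝ)⁻¹ * ∑ s, f s

lemma Av_mono {n : ℕ} {f g : (Fin n → Bool) → ℝ} (h : ∀ s, f s ≤ g s) :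
    Av n f ≤ Av n g := by
  unfold Av
  have h2 : (0:ℝ) ≤ (2 ^ n : ℝ)⁻¹ := by positivity
  exact mul_le_mul_of_nonneg_left (Finset.sum_le_sum fun s _ => h s) h2

lemma Av_nonneg {n : ℕ} {f : (Fin n → Bool) → ℝ} (h : ∀ s, 0 ≤ f s) :
    0 ≤ Av n f := by
  unfold Av
  have : (0:ℝ) ≤ ∑ s, f s := Finset.sum_nonneg fun s _ => h s
  positivity

lemma Av_const (n : ℕ) (c : ℝ) : Av n (fun _ => c) = c := by
  unfold Av
  rw [Finset.sum_const, Finset.card_univ, nsmul_eq_mul]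
  have hc : ((Fintype.card (Fin n → Bool)) : ℝ) = 2 ^ n := by
    rw [Fintype.card_fun]; simp
  rw [hc, ← mul_assoc, inv_mul_cancel₀ (by positivity : ((2:ℝ)^n) ≠ 0), one_mul]

lemma Av_add (n : ℕ) (f g : (Fin n → Bool) → ℝ) :
    Av n (fun s => f s + g s) = Av n f + Av n g := by
  unfold Av; rw [Finset.sum_add_distrib]; ring

lemma Av_smul (n : ℕ) (c : ℝ) (f : (Fin n → Bool) → ℝ) :
    Av n (fun s => c * f s) = c * Av n f := by
  unfold Av; rw [← Finset.mul_sum]; ring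

lemma Av_prod (n : ℕ) (g : Fin n → Bool → ℝ) :
    Av n (fun s => ∏ i, g i (s i)) = ∏ i, ((g i true + g i false) / 2) := by
  unfold Av
  have h1 : ∑ s : Fin n → Bool, ∏ i, g i (s i) = ∏ i, (g i true + g i false) := by
    have := Finset.prod_univ_sum (fun _ : Fin n => (Finset.univ : Finset Bool)) (fun i b => g i b)
    rw [Fintype.piFinset_univ] at this
    rw [← this]
    apply Finset.prod_congr rfl
    intro i _
    simp [Fintype.sum_bool]
  rw [h1, Finset.prod_div_distrib]
  simp only [Finset.prod_const, Finset.card_univ, Fintype.card_fin]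
  rw [div_eq_mul_inv, mul_comm]




noncomputable def T {n : ℕ} (b : Fin n → ℝ) (s : Fin n → Bool) : ℝ :=
  ∑ i, b i * sg (s i)

lemma sq_le_sinh_sq (t : ℝ) : t ^ 2 ≤ Real.sinh t ^ 2 := by
  have key : ∀ u : ℝ, 0 ≤ u → u ≤ Real.sinh u := by
    intro u hu
    rcases eq_or_lt_of_le hu with h | h
    · simp [← h]
    · exact le_of_lt (Real.self_lt_sinh_iff.2 h)
  rcases le_or_gt 0 t with h | h
  · have := key t h
    have h0 : 0 ≤ Real.sinh t := le_trans h this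
    nlinarith
  · have := key (-t) (by linarith)
    rw [Real.sinh_neg] at this
    nlinarith

lemma one_add_half_sq_le_cosh (x : ℝ) : 1 + x ^ 2 / 2 ≤ Real.cosh x := by
  have h3 : Real.cosh (2 * (x / 2)) = Real.cosh (x / 2) ^ 2 + Real.sinh (x / 2) ^ 2 :=
    Real.cosh_two_mul _
  have h4 : Real.cosh (x / 2) ^ 2 = 1 + Real.sinh (x / 2) ^ 2 := Real.cosh_sq' _
  have h5 : (2 : ℝ) * (x / 2) = x := by ring
  have h2 : Real.cosh x = 1 + 2 * Real.sinh (x / 2) ^ 2 := by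
    rw [← h5, h3, h4]; ring
  have hsq := sq_le_sinh_sq (x / 2)
  rw [h2]; nlinarith

lemma cosh_ge_exp (x : ℝ) : Real.exp (x ^ 2 / 2 - x ^ 4 / 4) ≤ Real.cosh x := by
  have h1 : 1 + x ^ 2 / 2 ≤ Real.cosh x := one_add_half_sq_le_cosh x
  have hu : (0:ℝ) ≤ x ^ 2 / 2 := by positivity
  set u := x ^ 2 / 2 with hu_def
  have hpos : (0:ℝ) < 1 + u := by linarith
  have hlog : u - u ^ 2 ≤ Real.log (1 + u) := by
    have := Real.log_le_sub_one_of_pos (x := (1 + u)⁻¹) (by positivity)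
    rw [Real.log_inv] at this
    have h5 : (1 + u)⁻¹ - 1 = -(u / (1 + u)) := by field_simp; ring
    rw [h5] at this
    have h6 : u / (1 + u) ≤ Real.log (1 + u) := by linarith
    have h7 : u - u ^ 2 ≤ u / (1 + u) := by
      rw [le_div_iff₀ hpos]; nlinarith
    linarith
  have hexp : Real.exp (u - u ^ 2) ≤ 1 + u :=
    calc Real.exp (u - u ^ 2) ≤ Real.exp (Real.log (1 + u)) := Real.exp_le_exp.2 hlog
    _ = 1 + u := Real.exp_log hpos
  have h8 : x ^ 2 / 2 - x ^ 4 / 4 = u - u ^ 2 := by rw [hu_def]; ring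
  rw [h8]; linarith

/-- `t ^ p ≤ p ^ p * exp (t - p)` for `t ≥ 0`, `p ≥ 1`. -/
lemma pow_le_exp_aux (t : ℝ) (ht : 0 ≤ t) (p : ℕ) (hp : 1 ≤ p) :
    t ^ p ≤ (p : ℝ) ^ p * Real.exp (t - p) := by
  have hp0 : (0:ℝ) < p := by exact_mod_cast hp
  have h1 : t / p ≤ Real.exp (t / p - 1) := by
    have := Real.add_one_le_exp (t / p - 1)
    linarith
  have h2 : (t / p) ^ p ≤ Real.exp (t / p - 1) ^ p :=
    pow_le_pow_left₀ (by positivity) h1 p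
  rw [← Real.exp_nat_mul] at h2
  have h3 : (p : ℝ) * (t / p - 1) = t - p := by field_simp
  rw [h3] at h2
  have h4 : (t / p) ^ p = t ^ p / (p:ℝ) ^ p := div_pow t _ p
  rw [h4] at h2
  have h5 : (0:ℝ) < (p:ℝ) ^ p := by positivity
  calc t ^ p = (t ^ p / (p:ℝ)^p) * (p:ℝ)^p := by field_simp
  _ ≤ Real.exp (t - p) * (p:ℝ)^p := by
      exact mul_le_mul_of_nonneg_right h2 (le_of_lt h5)
  _ = (p : ℝ) ^ p * Real.exp (t - p) := by ring

/-- pointwise moment-MGF bound -/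
lemma abs_pow_le_mgf (x : ℝ) (l : ℝ) (hl : 0 < l) (p : ℕ) (hp : 1 ≤ p) :
    |x| ^ p ≤ ((p : ℝ) / l) ^ p * Real.exp (-(p:ℝ)) * (Real.exp (l * x) + Real.exp (-(l * x))) := by
  have ht : 0 ≤ l * |x| := by positivity
  have h1 := pow_le_exp_aux (l * |x|) ht p hp
  have h2 : Real.exp (l * |x|) ≤ Real.exp (l * x) + Real.exp (-(l * x)) := by
    rcases abs_cases x with ⟨h, _⟩ | ⟨h, _⟩
    · rw [h]; nlinarith [Real.exp_pos (-(l*x))]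
    · rw [h]; rw [mul_neg]; nlinarith [Real.exp_pos (l*x)]
  have h3 : (l * |x|) ^ p = l ^ p * |x| ^ p := mul_pow l _ p
  have h4 : Real.exp (l * |x| - p) = Real.exp (l * |x|) * Real.exp (-(p:ℝ)) := by
    rw [← Real.exp_add]; ring_nf
  rw [h3, h4] at h1
  have h5 : |x| ^ p ≤ (p:ℝ)^p / l^p * (Real.exp (l * |x|) * Real.exp (-(p:ℝ))) := by
    rw [div_mul_eq_mul_div, le_div_iff₀ (by positivity : (0:ℝ) < l ^ p)]
    calc |x| ^ p * l ^ p = l ^ p * |x| ^ p := by ring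
    _ ≤ (p:ℝ)^p * (Real.exp (l*|x|) * Real.exp (-(p:ℝ))) := h1
    _ = (p:ℝ)^p * (Real.exp (l*|x|) * Real.exp (-(p:ℝ))) := rfl
  calc |x| ^ p ≤ (p:ℝ)^p / l^p * (Real.exp (l * |x|) * Real.exp (-(p:ℝ))) := h5
  _ ≤ (p:ℝ)^p / l^p * ((Real.exp (l*x) + Real.exp (-(l*x))) * Real.exp (-(p:ℝ))) := by
      apply mul_le_mul_of_nonneg_left _ (by positivity)
      exact mul_le_mul_of_nonneg_right h2 (le_of_lt (Real.exp_pos _))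
  _ = ((p : ℝ) / l) ^ p * Real.exp (-(p:ℝ)) * (Real.exp (l * x) + Real.exp (-(l * x))) := by
      rw [div_pow]; ring




lemma mgf_eq {n : ℕ} (b : Fin n → ℝ) (l : ℝ) :
    Av n (fun s => Real.exp (l * T b s)) = ∏ i, Real.cosh (l * b i) := by
  have h1 : ∀ s : Fin n → Bool, Real.exp (l * T b s) = ∏ i, Real.exp (l * b i * sg (s i)) := by
    intro s
    rw [← Real.exp_sum]
    congr 1
    rw [T, Finset.mul_sum]
    apply Finset.sum_congr rfl; intro i _; ring
  calc Av n (fun s => Real.exp (l * T b s))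
      = Av n (fun s => ∏ i, Real.exp (l * b i * sg (s i))) := by
        congr 1; funext s; exact h1 s
  _ = ∏ i, ((Real.exp (l * b i * sg true) + Real.exp (l * b i * sg false)) / 2) :=
        Av_prod n (fun i c => Real.exp (l * b i * sg c))
  _ = ∏ i, Real.cosh (l * b i) := by
        apply Finset.prod_congr rfl; intro i _
        rw [Real.cosh_eq]
        simp [sg]




lemma abs_pow_midpoint (u v : ℝ) (p : ℕ) :
    |u| ^ p ≤ (|u + v| ^ p + |u - v| ^ p) / 2 := by
  have hcvx := convexOn_pow (𝕜 := ℝ) p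
  have h1 : |u| ≤ (1/2 : ℝ) * |u + v| + (1/2 : ℝ) * |u - v| := by
    have : u = (1/2 : ℝ) * (u + v) + (1/2 : ℝ) * (u - v) := by ring
    calc |u| = |(1/2 : ℝ) * (u + v) + (1/2 : ℝ) * (u - v)| := by rw [← this]
    _ ≤ |(1/2 : ℝ) * (u + v)| + |(1/2 : ℝ) * (u - v)| := abs_add_le _ _
    _ = (1/2 : ℝ) * |u + v| + (1/2 : ℝ) * |u - v| := by
        rw [abs_mul, abs_mul, abs_of_pos (show (0:ℝ) < 1/2 by norm_num)]
  have h2 : |u| ^ p ≤ ((1/2 : ℝ) * |u + v| + (1/2 : ℝ) * |u - v|) ^ p :=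
    pow_le_pow_left₀ (abs_nonneg u) h1 p
  have h3 := hcvx.2 (Set.mem_Ici.2 (abs_nonneg (u + v))) (Set.mem_Ici.2 (abs_nonneg (u - v)))
      (by norm_num : (0:ℝ) ≤ 1/2) (by norm_num : (0:ℝ) ≤ 1/2) (by norm_num : (1/2 : ℝ) + 1/2 = 1)
  simp only [smul_eq_mul] at h3
  calc |u| ^ p ≤ ((1/2 : ℝ) * |u + v| + (1/2 : ℝ) * |u - v|) ^ p := h2
  _ ≤ (1/2 : ℝ) * |u + v| ^ p + (1/2 : ℝ) * |u - v| ^ p := h3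
  _ = (|u + v| ^ p + |u - v| ^ p) / 2 := by ring

lemma step {n : ℕ} (b : Fin n → ℝ) (j : Fin n) (p : ℕ) :
    Av n (fun s => |T (Function.update b j 0) s| ^ p) ≤ Av n (fun s => |T b s| ^ p) := by
  set b' := Function.update b j 0 with hb'
  have hTb : ∀ s, T b s = T b' s + b j * sg (s j) := by
    intro s
    have h1 : T b s = (∑ i ∈ Finset.univ.erase j, b i * sg (s i)) + b j * sg (s j) := by
      rw [T, ← Finset.sum_erase_add Finset.univ _ (Finset.mem_univ j)]
    have h2 : T b' s = (∑ i ∈ Finset.univ.erase j, b i * sg (s i)) + 0 := by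
      rw [T, ← Finset.sum_erase_add Finset.univ _ (Finset.mem_univ j)]
      congr 1
      · apply Finset.sum_congr rfl
        intro i hi
        rw [hb', Function.update_of_ne (Finset.ne_of_mem_erase hi)]
      · rw [hb', Function.update_self]; ring
    rw [h1, h2]; ring
  -- the flip involution
  have hinv : Function.Involutive (fun s : Fin n → Bool => Function.update s j (!(s j))) := by
    intro s
    funext i
    by_cases hi : i = j
    · subst hi; simp
    · simp [Function.update_of_ne hi]
  set F := fun s : Fin n → Bool => Function.update s j (!(s j)) with hF
  have hTb'F : ∀ s, T b' (F s) = T b' s := by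
    intro s
    rw [T, T]
    rw [← Finset.sum_erase_add Finset.univ _ (Finset.mem_univ j),
        ← Finset.sum_erase_add Finset.univ (fun i => b' i * sg (s i)) (Finset.mem_univ j)]
    congr 1
    · apply Finset.sum_congr rfl
      intro i hi
      have : F s i = s i := Function.update_of_ne (Finset.ne_of_mem_erase hi) _ _
      rw [this]
    · rw [hb']; simp [Function.update_self]
  have hFj : ∀ s, sg (F s j) = - sg (s j) := by
    intro s
    rw [hF]; simp only [Function.update_self]; exact sg_not _
  have hsum : ∑ s, |T b s| ^ p = ∑ s, |T b' s - b j * sg (s j)| ^ p := by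
    rw [← Equiv.sum_comp (hinv.toPerm F) (fun s => |T b s| ^ p)]
    apply Finset.sum_congr rfl
    intro s _
    have : (hinv.toPerm F) s = F s := rfl
    rw [this, hTb (F s), hTb'F s, hFj s]
    ring_nf
  have hmid : ∀ s : Fin n → Bool, |T b' s| ^ p ≤
      (|T b s| ^ p + |T b' s - b j * sg (s j)| ^ p) / 2 := by
    intro s
    have := abs_pow_midpoint (T b' s) (b j * sg (s j)) p
    rw [← hTb s] at this
    exact this
  have h5 : Av n (fun s => |T b' s| ^ p) ≤
      Av n (fun s => (|T b s| ^ p + |T b' s - b j * sg (s j)| ^ p) / 2) := Av_mono hmid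
  have h6 : Av n (fun s => (|T b s| ^ p + |T b' s - b j * sg (s j)| ^ p) / 2) =
      Av n (fun s => |T b s| ^ p) := by
    unfold Av
    rw [← Finset.sum_div]
    rw [Finset.sum_add_distrib, ← hsum]
    field_simp
    ring
  calc Av n (fun s => |T b' s| ^ p) ≤ _ := h5
  _ = Av n (fun s => |T b s| ^ p) := h6

lemma zero_mask {n : ℕ} (b : Fin n → ℝ) (D : Finset (Fin n)) (p : ℕ) :
    Av n (fun s => |T (fun i => if i ∈ D then 0 else b i) s| ^ p) ≤
      Av n (fun s => |T b s| ^ p) := by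
  induction D using Finset.induction_on generalizing b with
  | empty => simp
  | @insert j D hj IH =>
    have h1 : (fun i => if i ∈ insert j D then (0:ℝ) else b i) =
        (fun i => if i ∈ D then 0 else (Function.update b j 0) i) := by
      funext i
      by_cases hij : i = j
      · subst hij
        simp [Function.update_self, hj]
      · by_cases hiD : i ∈ D <;> simp [Finset.mem_insert, hij, hiD, Function.update_of_ne hij]
    rw [h1]
    exact le_trans (IH (Function.update b j 0)) (step b j p)

lemma mask_le {n : ℕ} (b : Fin n → ℝ) (A : Finset (Fin n)) (p : ℕ) :
    Av n (fun s => |∑ i ∈ A, b i * sg (s i)| ^ p) ≤ Av n (fun s => |T b s| ^ p) := by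
  have h1 : ∀ s : Fin n → Bool, ∑ i ∈ A, b i * sg (s i) =
      T (fun i => if i ∈ Aᶜ then 0 else b i) s := by
    intro s
    rw [T]
    rw [show (∑ i, (if i ∈ Aᶜ then (0:ℝ) else b i) * sg (s i)) =
        ∑ i, (if i ∈ A then b i * sg (s i) else 0) from ?_]
    · rw [Finset.sum_ite_mem, Finset.univ_inter]
    · apply Finset.sum_congr rfl
      intro i _
      by_cases hi : i ∈ A <;> simp [hi]
  calc Av n (fun s => |∑ i ∈ A, b i * sg (s i)| ^ p)
      = Av n (fun s => |T (fun i => if i ∈ Aᶜ then 0 else b i) s| ^ p) := by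
        congr 1; funext s; rw [h1 s]
  _ ≤ Av n (fun s => |T b s| ^ p) := zero_mask b Aᶜ p

lemma head_lower {n : ℕ} (b : Fin n → ℝ) (A : Finset (Fin n)) (hb : ∀ i ∈ A, 0 ≤ b i) (p : ℕ) :
    (2:ℝ)⁻¹ ^ A.card * (∑ i ∈ A, b i) ^ p ≤
      Av n (fun s => |∑ i ∈ A, b i * sg (s i)| ^ p) := by
  set H := ∑ i ∈ A, b i with hH
  have hH0 : 0 ≤ H := Finset.sum_nonneg hb
  set ind := fun s : Fin n → Bool => ∏ i, (if i ∈ A then (if s i then (1:ℝ) else 0) else 1)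
    with hind
  have hAv : Av n (fun s => ind s * H ^ p) = (2:ℝ)⁻¹ ^ A.card * H ^ p := by
    have h1 : Av n (fun s => ind s * H ^ p) = Av n (fun s => H ^ p * ind s) := by
      congr 1; funext s; ring
    rw [h1, Av_smul]
    have h2 : Av n ind = (2:ℝ)⁻¹ ^ A.card := by
      rw [hind, Av_prod n (fun i c => if i ∈ A then (if c then (1:ℝ) else 0) else 1)]
      have h3 : ∀ i : Fin n, ((if i ∈ A then (if true then (1:ℝ) else 0) else 1) +
          (if i ∈ A then (if false then (1:ℝ) else 0) else 1)) / 2 =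
          (if i ∈ A then (2:ℝ)⁻¹ else 1) := by
        intro i; by_cases hi : i ∈ A <;> simp [hi] <;> norm_num
      rw [Finset.prod_congr rfl (fun i _ => h3 i)]
      rw [Finset.prod_ite_mem, Finset.univ_inter, Finset.prod_const]
    rw [h2]; ring
  rw [← hAv]
  apply Av_mono
  intro s
  by_cases h : ∀ i ∈ A, s i = true
  · have hind1 : ind s = 1 := by
      rw [hind]
      apply Finset.prod_eq_one
      intro i _
      by_cases hi : i ∈ A
      · simp [hi, h i hi]
      · simp [hi]
    have hsum : ∑ i ∈ A, b i * sg (s i) = H := by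
      rw [hH]
      apply Finset.sum_congr rfl
      intro i hi
      rw [h i hi]
      simp [sg]
    rw [hind1, hsum, one_mul, abs_of_nonneg hH0]
  · push_neg at h
    obtain ⟨i0, hi0A, hi0⟩ := h
    have hind0 : ind s = 0 := by
      rw [hind]
      apply Finset.prod_eq_zero (Finset.mem_univ i0)
      simp [hi0A, hi0]
    rw [hind0, zero_mul]
    positivity






lemma Av_mono' {n : ℕ} {f g : (Fin n → Bool) → ℝ} (h : ∀ s, f s ≤ g s) :
    Av n f ≤ Av n g := by
  unfold Av
  exact mul_le_mul_of_nonneg_left (Finset.sum_le_sum fun s _ => h s) (by positivity)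

lemma moment_upper {n : ℕ} (b : Fin n → ℝ) (p : ℕ) (hp : 1 ≤ p) :
    Av n (fun s => |T b s| ^ p) ≤ 2 * (Real.sqrt p * Real.sqrt (∑ i, b i ^ 2)) ^ p := by
  set σ2 := ∑ i, b i ^ 2 with hσ2def
  have hσ2 : 0 ≤ σ2 := Finset.sum_nonneg fun i _ => sq_nonneg _
  rcases eq_or_lt_of_le hσ2 with hz | hpos
  · -- all b i = 0
    have hb : ∀ i, b i = 0 := by
      intro i
      have h := (Finset.sum_eq_zero_iff_of_nonneg (fun i _ => sq_nonneg (b i))).1 hz.symm i (Finset.mem_univ i)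
      exact pow_eq_zero_iff two_ne_zero |>.1 h
    have hT : ∀ s, T b s = 0 := by
      intro s; rw [T]; apply Finset.sum_eq_zero; intro i _; rw [hb i]; ring
    have hL : Av n (fun s => |T b s| ^ p) = 0 := by
      have : (fun s : Fin n → Bool => |T b s| ^ p) = fun _ => (0:ℝ) := by
        funext s; rw [hT s]; simp [zero_pow (Nat.one_le_iff_ne_zero.1 hp)]
      rw [this, Av_const]
    rw [hL]
    positivity
  · have hσ : 0 < Real.sqrt σ2 := Real.sqrt_pos.2 hpos
    have hp0 : (0:ℝ) < p := by exact_mod_cast Nat.lt_of_lt_of_le Nat.zero_lt_one hp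
    have hsp : 0 < Real.sqrt p := Real.sqrt_pos.2 hp0
    set σ := Real.sqrt σ2 with hσdef
    set l := Real.sqrt p / σ with hldef
    have hl : 0 < l := by positivity
    have hptwise : ∀ s, |T b s| ^ p ≤
        ((p : ℝ) / l) ^ p * Real.exp (-(p:ℝ)) * (Real.exp (l * T b s) + Real.exp (-(l * T b s))) :=
      fun s => abs_pow_le_mgf (T b s) l hl p hp
    have hAv1 : Av n (fun s => Real.exp (l * T b s)) ≤ Real.exp ((p:ℝ) / 2) := by
      rw [mgf_eq]
      have hterm : ∀ i : Fin n, Real.cosh (l * b i) ≤ Real.exp ((l * b i) ^ 2 / 2) :=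
        fun i => Real.cosh_le_exp_half_sq _
      calc ∏ i, Real.cosh (l * b i) ≤ ∏ i, Real.exp ((l * b i) ^ 2 / 2) := by
            apply Finset.prod_le_prod (fun i _ => (Real.cosh_pos _).le) (fun i _ => hterm i)
      _ = Real.exp (∑ i, (l * b i) ^ 2 / 2) := (Real.exp_sum _ _).symm
      _ = Real.exp ((p:ℝ) / 2) := by
            congr 1
            have hsum : ∑ i, (l * b i) ^ 2 / 2 = l ^ 2 * σ2 / 2 := by
              rw [hσ2def, Finset.mul_sum, Finset.sum_div]
              apply Finset.sum_congr rfl; intro i _; ring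
            rw [hsum, hldef, div_pow, Real.sq_sqrt hp0.le, hσdef, Real.sq_sqrt hσ2]
            field_simp
    have hAv2 : Av n (fun s => Real.exp (-(l * T b s))) ≤ Real.exp ((p:ℝ) / 2) := by
      have : ∀ s : Fin n → Bool, Real.exp (-(l * T b s)) = Real.exp ((-l) * T b s) := by
        intro s; ring_nf
      calc Av n (fun s => Real.exp (-(l * T b s)))
          = Av n (fun s => Real.exp ((-l) * T b s)) := by congr 1; funext s; rw [this s]
      _ = ∏ i, Real.cosh ((-l) * b i) := mgf_eq b (-l)
      _ ≤ ∏ i, Real.exp (((-l) * b i) ^ 2 / 2) :=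
            Finset.prod_le_prod (fun i _ => (Real.cosh_pos _).le)
              (fun i _ => Real.cosh_le_exp_half_sq _)
      _ = Real.exp (∑ i, ((-l) * b i) ^ 2 / 2) := (Real.exp_sum _ _).symm
      _ = Real.exp ((p:ℝ) / 2) := by
            congr 1
            have hsum : ∑ i, ((-l) * b i) ^ 2 / 2 = l ^ 2 * σ2 / 2 := by
              rw [hσ2def, Finset.mul_sum, Finset.sum_div]
              apply Finset.sum_congr rfl; intro i _; ring
            rw [hsum, hldef, div_pow, Real.sq_sqrt hp0.le, hσdef, Real.sq_sqrt hσ2]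
            field_simp
    have hpl : (p:ℝ) / l = Real.sqrt p * σ := by
      have h1 : Real.sqrt p * Real.sqrt p = (p:ℝ) := Real.mul_self_sqrt hp0.le
      rw [hldef, div_div_eq_mul_div, div_eq_iff (ne_of_gt hsp)]
      linear_combination (-σ) * h1
    have hC : (0:ℝ) ≤ ((p:ℝ)/l)^p * Real.exp (-(p:ℝ)) := by positivity
    calc Av n (fun s => |T b s| ^ p)
        ≤ Av n (fun s => ((p:ℝ)/l)^p * Real.exp (-(p:ℝ)) *
            (Real.exp (l * T b s) + Real.exp (-(l * T b s)))) := Av_mono' hptwise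
      _ = ((p:ℝ)/l)^p * Real.exp (-(p:ℝ)) *
            (Av n (fun s => Real.exp (l * T b s)) + Av n (fun s => Real.exp (-(l * T b s)))) := by
          rw [← Av_add]
          have heq : (fun s : Fin n → Bool => ((p:ℝ)/l)^p * Real.exp (-(p:ℝ)) *
              (Real.exp (l * T b s) + Real.exp (-(l * T b s)))) =
              (fun s : Fin n → Bool => (((p:ℝ)/l)^p * Real.exp (-(p:ℝ))) *
              ((fun s => Real.exp (l * T b s) + Real.exp (-(l * T b s))) s)) := rfl
          rw [heq, Av_smul]
      _ ≤ ((p:ℝ)/l)^p * Real.exp (-(p:ℝ)) * (Real.exp ((p:ℝ)/2) + Real.exp ((p:ℝ)/2)) := by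
          exact mul_le_mul_of_nonneg_left (add_le_add hAv1 hAv2) hC
      _ = (Real.sqrt p * σ)^p * (2 * Real.exp (-(p:ℝ) + (p:ℝ)/2)) := by
          rw [hpl, Real.exp_add]; ring
      _ ≤ (Real.sqrt p * σ)^p * (2 * 1) := by
          apply mul_le_mul_of_nonneg_left _ (by positivity)
          have : Real.exp (-(p:ℝ) + (p:ℝ)/2) ≤ 1 := by
            rw [Real.exp_le_one_iff]; linarith
          linarith
      _ = 2 * (Real.sqrt p * Real.sqrt σ2) ^ p := by rw [hσdef]; ring


lemma Av_cauchy {n : ℕ} (f g : (Fin n → Bool) → ℝ) :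
    Av n (fun s => f s * g s) ^ 2 ≤ Av n (fun s => f s ^ 2) * Av n (fun s => g s ^ 2) := by
  unfold Av
  have h := Finset.sum_mul_sq_le_sq_mul_sq Finset.univ f g
  have h2 : (0:ℝ) ≤ (2 ^ n : ℝ)⁻¹ := by positivity
  calc ((2 ^ n : ℝ)⁻¹ * ∑ s, f s * g s) ^ 2
      = (2 ^ n : ℝ)⁻¹ * (2 ^ n : ℝ)⁻¹ * (∑ s, f s * g s) ^ 2 := by ring
  _ ≤ (2 ^ n : ℝ)⁻¹ * (2 ^ n : ℝ)⁻¹ * ((∑ s, f s ^ 2) * ∑ s, g s ^ 2) := by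
      apply mul_le_mul_of_nonneg_left h (by positivity)
  _ = (2 ^ n : ℝ)⁻¹ * (∑ s, f s ^ 2) * ((2 ^ n : ℝ)⁻¹ * ∑ s, g s ^ 2) := by ring

lemma moment_lower {n : ℕ} (b : Fin n → ℝ) (p : ℕ) (hp : 2 ≤ p)
    (hpos : 0 < ∑ i, b i ^ 2)
    (hsmall : ∀ i, (p : ℝ) * b i ^ 2 ≤ ∑ i, b i ^ 2) :
    (Real.sqrt p * Real.sqrt (∑ i, b i ^ 2) / 8) ^ p * (Real.exp (-(2:ℝ) * p) / 25)
      ≤ Av n (fun s => |T b s| ^ p) := by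
  set σ2 := ∑ i, b i ^ 2 with hσ2def
  have hp0 : (2:ℝ) ≤ (p:ℝ) := by exact_mod_cast hp
  have hppos : (0:ℝ) < p := by linarith
  have hσ : 0 < Real.sqrt σ2 := Real.sqrt_pos.2 hpos
  set σ := Real.sqrt σ2 with hσdef
  have hσsq : σ ^ 2 = σ2 := Real.sq_sqrt hpos.le
  have hsp : 0 < Real.sqrt p := Real.sqrt_pos.2 hppos
  have hspsq : Real.sqrt p ^ 2 = (p:ℝ) := Real.sq_sqrt hppos.le
  set l := Real.sqrt p / σ with hldef
  have hl : 0 < l := by positivity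
  have hl2 : l ^ 2 = (p:ℝ) / σ2 := by
    rw [hldef, div_pow, hspsq, hσsq]
  set τ := Real.sqrt p * σ / 8 with hτdef
  have hτ0 : 0 < τ := by positivity
  have hlτ : l * τ = (p:ℝ) / 8 := by
    have h1 : Real.sqrt p * Real.sqrt p = (p:ℝ) := Real.mul_self_sqrt hppos.le
    calc l * τ = (Real.sqrt p * Real.sqrt p) * (σ / σ) / 8 := by rw [hldef, hτdef]; ring
    _ = (p:ℝ) / 8 := by rw [h1, div_self hσ.ne']; ring
  -- Step 1 : lower bound for M1
  have hM1 : Real.exp ((p:ℝ)/4) ≤ Av n (fun s => Real.exp (l * T b s)) := by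
    rw [mgf_eq]
    have hb4 : ∑ i, b i ^ 4 ≤ σ2 * σ2 / p := by
      have h1 : ∀ i : Fin n, b i ^ 4 ≤ b i ^ 2 * (σ2 / p) := by
        intro i
        have h2 := hsmall i
        have h3 : b i ^ 2 ≤ σ2 / p := by
          rw [le_div_iff₀ hppos]; linarith
        have h4 : (0:ℝ) ≤ b i ^ 2 := sq_nonneg _
        calc b i ^ 4 = b i ^ 2 * b i ^ 2 := by ring
        _ ≤ b i ^ 2 * (σ2 / p) := mul_le_mul_of_nonneg_left h3 h4
      calc ∑ i, b i ^ 4 ≤ ∑ i, b i ^ 2 * (σ2 / p) := Finset.sum_le_sum fun i _ => h1 i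
      _ = σ2 * (σ2 / p) := by rw [← Finset.sum_mul, ← hσ2def]
      _ = σ2 * σ2 / p := by ring
    have hsum : (p:ℝ)/4 ≤ ∑ i, ((l * b i) ^ 2 / 2 - (l * b i) ^ 4 / 4) := by
      have he : ∑ i, ((l * b i) ^ 2 / 2 - (l * b i) ^ 4 / 4) =
          l ^ 2 / 2 * σ2 - l ^ 4 / 4 * ∑ i, b i ^ 4 := by
        rw [Finset.sum_sub_distrib, hσ2def, Finset.mul_sum, Finset.mul_sum]
        congr 1
        · apply Finset.sum_congr rfl; intro i _; ring
        · apply Finset.sum_congr rfl; intro i _; ring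
      rw [he]
      have hl4 : l ^ 4 = (p:ℝ)^2 / σ2^2 := by
        have : l ^ 4 = (l ^ 2) ^ 2 := by ring
        rw [this, hl2, div_pow]
      have h5 : l ^ 4 / 4 * ∑ i, b i ^ 4 ≤ (p:ℝ) / 4 := by
        rw [hl4]
        have h6 : (0:ℝ) ≤ (p:ℝ)^2 / σ2^2 / 4 := by positivity
        calc (p:ℝ)^2/σ2^2/4 * ∑ i, b i ^ 4 ≤ (p:ℝ)^2/σ2^2/4 * (σ2 * σ2 / p) :=
              mul_le_mul_of_nonneg_left hb4 h6
        _ = (p:ℝ)/4 := by field_simp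
      have h7 : l ^ 2 / 2 * σ2 = (p:ℝ)/2 := by
        rw [hl2]; field_simp
      rw [h7]
      linarith
    calc Real.exp ((p:ℝ)/4) ≤ Real.exp (∑ i, ((l * b i) ^ 2 / 2 - (l * b i) ^ 4 / 4)) :=
          Real.exp_le_exp.2 hsum
    _ = ∏ i, Real.exp ((l * b i) ^ 2 / 2 - (l * b i) ^ 4 / 4) := Real.exp_sum _ _
    _ ≤ ∏ i, Real.cosh (l * b i) :=
          Finset.prod_le_prod (fun i _ => (Real.exp_pos _).le) (fun i _ => cosh_ge_exp _)
  -- Step 2 : upper bound for M2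
  have hM2 : Av n (fun s => Real.exp (2 * l * T b s)) ≤ Real.exp (2 * (p:ℝ)) := by
    rw [mgf_eq]
    calc ∏ i, Real.cosh (2 * l * b i) ≤ ∏ i, Real.exp ((2 * l * b i) ^ 2 / 2) :=
          Finset.prod_le_prod (fun i _ => (Real.cosh_pos _).le)
            (fun i _ => Real.cosh_le_exp_half_sq _)
    _ = Real.exp (∑ i, (2 * l * b i) ^ 2 / 2) := (Real.exp_sum _ _).symm
    _ ≤ Real.exp (2 * (p:ℝ)) := by
        apply Real.exp_le_exp.2
        have : ∑ i, (2 * l * b i) ^ 2 / 2 = 2 * l ^ 2 * σ2 := by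
          rw [hσ2def, Finset.mul_sum]
          apply Finset.sum_congr rfl; intro i _; ring
        rw [this, hl2]
        have h9 : 2 * ((p:ℝ)/σ2) * σ2 = 2 * (p:ℝ) := by field_simp
        rw [h9]
  -- Step 3 : Paley-Zygmund style split
  set ind := fun s : Fin n → Bool => if τ ≤ T b s then (1:ℝ) else 0 with hinddef
  set P := Av n ind with hPdef
  have hP0 : 0 ≤ P := Av_nonneg (fun s => by rw [hinddef]; positivity)
  have hsplit : Av n (fun s => Real.exp (l * T b s)) ≤
      Real.exp (l * τ) + Av n (fun s => Real.exp (l * T b s) * ind s) := by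
    have hpt : ∀ s, Real.exp (l * T b s) ≤
        Real.exp (l * τ) + Real.exp (l * T b s) * ind s := by
      intro s
      rw [hinddef]
      by_cases h : τ ≤ T b s
      · simp only [h, if_true, mul_one]
        have := Real.exp_pos (l * τ)
        linarith
      · simp only [h, if_false, mul_zero, add_zero]
        apply Real.exp_le_exp.2
        push_neg at h
        exact mul_le_mul_of_nonneg_left h.le hl.le
    calc Av n (fun s => Real.exp (l * T b s)) ≤
        Av n (fun s => Real.exp (l * τ) + Real.exp (l * T b s) * ind s) := Av_mono hpt
    _ = Real.exp (l * τ) + Av n (fun s => Real.exp (l * T b s) * ind s) := by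
        rw [Av_add]
        congr 1
        exact Av_const n _
  -- Step 4 : Cauchy-Schwarz
  have hCS : Av n (fun s => Real.exp (l * T b s) * ind s) ^ 2 ≤ Real.exp (2 * (p:ℝ)) * P := by
    have h1 := Av_cauchy (fun s => Real.exp (l * T b s)) ind
    have h2 : Av n (fun s => Real.exp (l * T b s) ^ 2) =
        Av n (fun s => Real.exp (2 * l * T b s)) := by
      congr 1; funext s
      rw [← Real.exp_nat_mul]
      congr 1; push_cast; ring
    have h3 : Av n (fun s => ind s ^ 2) = P := by
      rw [hPdef]
      congr 1; funext s
      rw [hinddef]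
      by_cases h : τ ≤ T b s <;> simp [h]
    rw [h2, h3] at h1
    calc Av n (fun s => Real.exp (l * T b s) * ind s) ^ 2 ≤
        Av n (fun s => Real.exp (2 * l * T b s)) * P := h1
    _ ≤ Real.exp (2 * (p:ℝ)) * P := mul_le_mul_of_nonneg_right hM2 hP0
  -- Step 5 : combine to get a lower bound on P
  have hquarter : Real.exp (l * τ) ≤ (4/5) * Real.exp ((p:ℝ)/4) := by
    rw [hlτ]
    have h1 : Real.exp ((p:ℝ)/8) = Real.exp ((p:ℝ)/4) * Real.exp ((p:ℝ)/8 - (p:ℝ)/4) := by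
      rw [← Real.exp_add]; ring_nf
    rw [h1]
    have h2 : Real.exp ((p:ℝ)/8 - (p:ℝ)/4) ≤ 4/5 := by
      have h3 : (p:ℝ)/8 - (p:ℝ)/4 ≤ -(1/4 : ℝ) := by linarith
      have h4 : Real.exp ((p:ℝ)/8 - (p:ℝ)/4) ≤ Real.exp (-(1/4 : ℝ)) := Real.exp_le_exp.2 h3
      have h5 : Real.exp (-(1/4:ℝ)) ≤ 4/5 := by
        rw [Real.exp_neg]
        have h := Real.add_one_le_exp (1/4:ℝ)
        have h54 : (5/4:ℝ) ≤ Real.exp (1/4) := by linarith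
        have h55 : (Real.exp ((1:ℝ)/4))⁻¹ ≤ ((5:ℝ)/4)⁻¹ := by
          apply inv_anti₀ (by norm_num) h54
        have : ((5:ℝ)/4)⁻¹ = 4/5 := by norm_num
        rw [this] at h55
        convert h55 using 2
      linarith
    calc Real.exp ((p:ℝ)/4) * Real.exp ((p:ℝ)/8 - (p:ℝ)/4) ≤ Real.exp ((p:ℝ)/4) * (4/5) :=
          mul_le_mul_of_nonneg_left h2 (Real.exp_pos _).le
    _ = (4/5) * Real.exp ((p:ℝ)/4) := by ring
  have hAvind : Real.exp ((p:ℝ)/4) / 5 ≤ Av n (fun s => Real.exp (l * T b s) * ind s) := by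
    have := hM1
    have h6 : Real.exp ((p:ℝ)/4) - (4/5) * Real.exp ((p:ℝ)/4) = Real.exp ((p:ℝ)/4) / 5 := by ring
    linarith [hsplit, hquarter]
  have hPlow : Real.exp (-(2:ℝ)*p) / 25 ≤ P := by
    have h1 : (Real.exp ((p:ℝ)/4) / 5) ^ 2 ≤ Real.exp (2 * (p:ℝ)) * P := by
      calc (Real.exp ((p:ℝ)/4) / 5) ^ 2 ≤ Av n (fun s => Real.exp (l * T b s) * ind s) ^ 2 := by
            apply pow_le_pow_left₀ (by positivity) hAvind
      _ ≤ Real.exp (2 * (p:ℝ)) * P := hCS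
    have h2 : (Real.exp ((p:ℝ)/4) / 5) ^ 2 = Real.exp ((p:ℝ)/2) / 25 := by
      have hc : ((2:ℕ):ℝ) * ((p:ℝ)/4) = (p:ℝ)/2 := by push_cast; ring
      rw [div_pow, ← Real.exp_nat_mul, hc]
      norm_num
    rw [h2] at h1
    have hE : (0:ℝ) < Real.exp (2 * (p:ℝ)) := Real.exp_pos _
    have h4 : Real.exp ((p:ℝ)/2) / 25 / Real.exp (2 * (p:ℝ)) ≤ P := by
      rw [div_le_iff₀ hE]
      rw [mul_comm] at h1
      exact h1
    have h5 : Real.exp ((p:ℝ)/2) / 25 / Real.exp (2 * (p:ℝ)) =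
        Real.exp ((p:ℝ)/2 - 2 * (p:ℝ)) / 25 := by
      rw [Real.exp_sub]; ring
    have h6 : Real.exp (-(2:ℝ)*p) ≤ Real.exp ((p:ℝ)/2 - 2 * (p:ℝ)) :=
      Real.exp_le_exp.2 (by linarith)
    rw [h5] at h4
    have h7 : Real.exp (-(2:ℝ)*p) / 25 ≤ Real.exp ((p:ℝ)/2 - 2 * (p:ℝ)) / 25 := by linarith
    linarith
  -- Step 7 : conclude
  have hpt : ∀ s, τ ^ p * ind s ≤ |T b s| ^ p := by
    intro s
    rw [hinddef]
    by_cases h : τ ≤ T b s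
    · simp only [h, if_true, mul_one]
      exact pow_le_pow_left₀ hτ0.le (le_trans h (le_abs_self _)) p
    · simp only [h, if_false, mul_zero]
      positivity
  calc τ ^ p * (Real.exp (-(2:ℝ)*p) / 25) ≤ τ ^ p * P :=
        mul_le_mul_of_nonneg_left hPlow (by positivity)
  _ = Av n (fun s => τ ^ p * ind s) := (Av_smul n _ ind).symm
  _ ≤ Av n (fun s => |T b s| ^ p) := Av_mono hpt





noncomputable def nu : Measure ℝ :=
  (1 / 2 : ℝ≥0∞) • Measure.dirac (1 : ℝ) + (1 / 2 : ℝ≥0∞) • Measure.dirac (-1 : ℝ)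

instance : IsProbabilityMeasure nu := by
  constructor
  simp [nu]
  exact ENNReal.inv_two_add_inv_two

lemma nu_apply {A : Set ℝ} (hA : MeasurableSet A) :
    nu A = 2⁻¹ * ((if (1:ℝ) ∈ A then 1 else 0) + (if (-1:ℝ) ∈ A then 1 else 0)) := by
  rw [nu, Measure.add_apply, Measure.smul_apply, Measure.smul_apply,
      Measure.dirac_apply' _ hA, Measure.dirac_apply' _ hA]
  simp only [Set.indicator_apply, Pi.one_apply, smul_eq_mul]
  rw [mul_add]
  norm_num

lemma pi_nu_eq (n : ℕ) :
    Measure.pi (fun _ : Fin n => nu) =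
      ∑ s : Fin n → Bool, ((2 : ℝ≥0∞) ^ n)⁻¹ • Measure.dirac (fun i => sg (s i)) := by
  apply Measure.pi_eq
  intro A hA
  rw [Measure.finset_sum_apply]
  have hterm : ∀ s : Fin n → Bool,
      ((((2 : ℝ≥0∞) ^ n)⁻¹ • Measure.dirac (fun i => sg (s i)) : Measure (Fin n → ℝ)))
          (Set.pi Set.univ A)
        = ((2:ℝ≥0∞)^n)⁻¹ * ∏ i, (if sg (s i) ∈ A i then (1:ℝ≥0∞) else 0) := by
    intro s
    rw [Measure.smul_apply, smul_eq_mul,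
        Measure.dirac_apply' _ (MeasurableSet.univ_pi hA)]
    congr 1
    rw [Set.indicator_apply]
    have hmem : ((fun i => sg (s i)) ∈ Set.pi Set.univ A) ↔ ∀ i, sg (s i) ∈ A i := by
      simp [Set.mem_pi]
    rw [Finset.prod_boole]
    simp only [Finset.mem_univ, forall_true_left, Pi.one_apply]
    by_cases h : ∀ i, sg (s i) ∈ A i
    · rw [if_pos (hmem.2 h), if_pos h]
    · rw [if_neg (fun hh => h (hmem.1 hh)), if_neg h]
  calc ∑ s : Fin n → Bool,
        ((((2 : ℝ≥0∞) ^ n)⁻¹ • Measure.dirac (fun i => sg (s i)) : Measure (Fin n → ℝ)))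
          (Set.pi Set.univ A)
      = ∑ s : Fin n → Bool, ((2:ℝ≥0∞)^n)⁻¹ * ∏ i, (if sg (s i) ∈ A i then (1:ℝ≥0∞) else 0) :=
        Finset.sum_congr rfl fun s _ => hterm s
  _ = ((2:ℝ≥0∞)^n)⁻¹ * ∑ s : Fin n → Bool, ∏ i, (if sg (s i) ∈ A i then (1:ℝ≥0∞) else 0) := by
        rw [Finset.mul_sum]
  _ = ((2:ℝ≥0∞)^n)⁻¹ * ∏ i, ((if sg true ∈ A i then (1:ℝ≥0∞) else 0) +
        (if sg false ∈ A i then (1:ℝ≥0∞) else 0)) := by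
        congr 1
        have := Finset.prod_univ_sum (fun _ : Fin n => (Finset.univ : Finset Bool))
          (fun i b => if sg b ∈ A i then (1:ℝ≥0∞) else 0)
        rw [Fintype.piFinset_univ] at this
        rw [← this]
        apply Finset.prod_congr rfl
        intro i _
        rw [show (Finset.univ : Finset Bool) = {true, false} from rfl]
        rw [Finset.sum_insert (by simp), Finset.sum_singleton]
  _ = ∏ i, nu (A i) := by
        rw [show ((2:ℝ≥0∞)^n)⁻¹ = ∏ _i : Fin n, (2:ℝ≥0∞)⁻¹ by
          rw [Finset.prod_const, Finset.card_univ, Fintype.card_fin, ENNReal.inv_pow]]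
        rw [← Finset.prod_mul_distrib]
        apply Finset.prod_congr rfl
        intro i _
        rw [nu_apply (hA i)]
        simp [sg]
  _ = ∏ i, nu (A i) := rfl

variable {Ω : Type} [MeasurableSpace Ω] (μ : Measure Ω) [IsProbabilityMeasure μ]

lemma joint_law (n : ℕ) (ε : Fin n → Ω → ℝ) (hmeas : ∀ i, Measurable (ε i))
    (hindep : iIndepFun ε μ)
    (hlaw : ∀ i, μ.map (ε i) = nu) :
    Measure.pi (fun _ : Fin n => nu) = μ.map (fun ω (i : Fin n) => ε i ω) := by
  have hvec : Measurable (fun ω (i : Fin n) => ε i ω) :=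
    measurable_pi_lambda _ fun i => hmeas i
  apply Measure.pi_eq
  intro A hA
  rw [Measure.map_apply hvec (MeasurableSet.univ_pi hA)]
  have hpre : (fun ω (i : Fin n) => ε i ω) ⁻¹' (Set.pi Set.univ A) =
      ⋂ i ∈ (Finset.univ : Finset (Fin n)), ε i ⁻¹' (A i) := by
    ext ω
    simp [Set.mem_pi]
  rw [hpre]
  rw [hindep.measure_inter_preimage_eq_mul Finset.univ (fun i _ => hA i)]
  apply Finset.prod_congr rfl
  intro i _
  rw [← Measure.map_apply (hmeas i) (hA i), hlaw i]

lemma integral_eq_Av (n : ℕ) (ε : Fin n → Ω → ℝ) (hmeas : ∀ i, Measurable (ε i))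
    (hindep : iIndepFun ε μ)
    (hlaw : ∀ i, μ.map (ε i) = nu)
    (F : (Fin n → ℝ) → ℝ) (hF : StronglyMeasurable F) :
    ∫ ω, F (fun i => ε i ω) ∂μ = Av n (fun s => F (fun i => sg (s i))) := by
  have hvec : Measurable (fun ω (i : Fin n) => ε i ω) :=
    measurable_pi_lambda _ fun i => hmeas i
  have h1 : ∫ ω, F (fun i => ε i ω) ∂μ = ∫ x, F x ∂(μ.map (fun ω (i : Fin n) => ε i ω)) :=
    (integral_map hvec.aemeasurable hF.aestronglyMeasurable).symm
  rw [h1, ← joint_law μ n ε hmeas hindep hlaw, pi_nu_eq n]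
  have hc : ((2:ℝ≥0∞)^n)⁻¹ ≠ ⊤ := by
    simp
  have hint : ∀ s : Fin n → Bool,
      Integrable F (((2:ℝ≥0∞)^n)⁻¹ • Measure.dirac (fun i => sg (s i))) := by
    intro s
    apply Integrable.smul_measure _ hc
    refine ⟨hF.aestronglyMeasurable, ?_⟩
    rw [HasFiniteIntegral, lintegral_dirac' _ hF.measurable.enorm]
    exact enorm_lt_top
  rw [integral_finset_sum_measure (fun s _ => hint s)]
  have h2 : ∀ s : Fin n → Bool,
      ∫ x, F x ∂(((2:ℝ≥0∞)^n)⁻¹ • Measure.dirac (fun i => sg (s i)))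
        = (2^n : ℝ)⁻¹ * F (fun i => sg (s i)) := by
    intro s
    rw [integral_smul_measure, integral_dirac' F _ hF]
    simp [smul_eq_mul]
  rw [Finset.sum_congr rfl (fun s _ => h2 s)]
  rw [Av, Finset.mul_sum]




lemma sum_filter_lt (n p : ℕ) (f : ℕ → ℝ) :
    ∑ i ∈ Finset.univ.filter (fun i : Fin n => (i:ℕ) < p), f i.val
      = ∑ j ∈ Finset.range (min p n), f j := by
  have h1 : ∑ i ∈ Finset.univ.filter (fun i : Fin n => (i:ℕ) < p), f i.val
      = ∑ i : Fin n, (fun j => if j < p then f j else 0) i.val := by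
    rw [Finset.sum_filter]
  rw [h1, Fin.sum_univ_eq_sum_range (fun j => if j < p then f j else 0) n, ← Finset.sum_filter]
  congr 1
  ext j
  simp only [Finset.mem_filter, Finset.mem_range, lt_min_iff]
  tauto

lemma sum_filter_ge (n p : ℕ) (f : ℕ → ℝ) :
    ∑ i ∈ Finset.univ.filter (fun i : Fin n => ¬ (i:ℕ) < p), f i.val
      = ∑ j ∈ Finset.Ico p n, f j := by
  have h1 : ∑ i ∈ Finset.univ.filter (fun i : Fin n => ¬ (i:ℕ) < p), f i.val
      = ∑ i : Fin n, (fun j => if ¬ j < p then f j else 0) i.val := by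
    rw [Finset.sum_filter]
  rw [h1, Fin.sum_univ_eq_sum_range (fun j => if ¬ j < p then f j else 0) n, ← Finset.sum_filter]
  congr 1
  ext j
  simp only [Finset.mem_filter, Finset.mem_range, Finset.mem_Ico, not_lt]
  tauto

lemma card_filter_lt (n p : ℕ) :
    (Finset.univ.filter (fun i : Fin n => (i:ℕ) < p)).card = min p n := by
  have h := sum_filter_lt n p (fun _ => (1:ℝ))
  rw [Finset.sum_const, Finset.sum_const, Finset.card_range] at h
  simp only [nsmul_eq_mul, mul_one] at h
  exact_mod_cast h

lemma exp_neg_two_ge : (1/10 : ℝ) ≤ Real.exp (-2) := by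
  have h1 : Real.exp 1 < 2.7182818286 := Real.exp_one_lt_d9
  have h2 : Real.exp 2 = Real.exp 1 * Real.exp 1 := by
    rw [← Real.exp_add]; norm_num
  have h3 : Real.exp 2 ≤ 10 := by nlinarith [Real.exp_pos 1]
  have h4 : Real.exp (-2 : ℝ) = (Real.exp 2)⁻¹ := by rw [← Real.exp_neg]
  rw [h4]
  rw [le_inv_comm₀ (by norm_num) (Real.exp_pos 2)]
  calc Real.exp 2 ≤ 10 := h3
  _ = (1/10 : ℝ)⁻¹ := by norm_num

lemma cube_lower (n : ℕ) (a : ℕ → ℝ) (ha0 : ∀ i, i < n → 0 ≤ a i)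
    (hmono : ∀ i j, i ≤ j → j < n → a j ≤ a i) (p : ℕ) (hp : 2 ≤ p) :
    ((1/800 : ℝ) * ((∑ i ∈ Finset.range (min p n), a i) +
        Real.sqrt p * Real.sqrt (∑ i ∈ Finset.Ico p n, (a i) ^ 2))) ^ p
      ≤ Av n (fun s => |T (fun i => a i.val) s| ^ p) := by
  set b : Fin n → ℝ := fun i => a i.val with hbdef
  set A : Finset (Fin n) := Finset.univ.filter (fun i : Fin n => (i:ℕ) < p) with hAdef
  set H := ∑ i ∈ Finset.range (min p n), a i with hHdef
  set T2 := ∑ i ∈ Finset.Ico p n, (a i) ^ 2 with hT2def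
  set I := Av n (fun s => |T b s| ^ p) with hIdef
  have hbpos : ∀ i : Fin n, 0 ≤ b i := fun i => ha0 i.val i.isLt
  have hHA : ∑ i ∈ A, b i = H := by
    rw [hAdef, hHdef, hbdef]
    exact sum_filter_lt n p a
  have hH0 : 0 ≤ H := by
    rw [hHdef]
    apply Finset.sum_nonneg
    intro j hj
    rw [Finset.mem_range, lt_min_iff] at hj
    exact ha0 j hj.2
  have hT20 : 0 ≤ T2 := by
    rw [hT2def]; exact Finset.sum_nonneg fun j _ => sq_nonneg _
  have hI0 : 0 ≤ I := Av_nonneg fun s => by positivity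
  -- head bound : (H/2)^p ≤ I
  have hhead : (H / 2) ^ p ≤ I := by
    have h1 := head_lower b A (fun i _ => hbpos i) p
    have h2 := mask_le b A p
    rw [hHA, card_filter_lt n p] at h1
    have h3 : ((2:ℝ)⁻¹) ^ p * H ^ p ≤ ((2:ℝ)⁻¹) ^ (min p n) * H ^ p := by
      apply mul_le_mul_of_nonneg_right _ (by positivity)
      apply pow_le_pow_of_le_one (by norm_num) (by norm_num) (min_le_left p n)
    calc (H / 2) ^ p = ((2:ℝ)⁻¹) ^ p * H ^ p := by
          rw [div_eq_mul_inv, mul_pow]; ring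
    _ ≤ ((2:ℝ)⁻¹) ^ (min p n) * H ^ p := h3
    _ ≤ Av n (fun s => |∑ i ∈ A, b i * sg (s i)| ^ p) := h1
    _ ≤ I := h2
  -- tail coefficients
  set bt : Fin n → ℝ := fun i => if (i:ℕ) < p then 0 else b i with hbtdef
  have hbtsq : ∑ i, bt i ^ 2 = T2 := by
    rw [hT2def, ← sum_filter_ge n p (fun j => (a j)^2), ← Finset.sum_filter_add_sum_filter_not
      Finset.univ (fun i : Fin n => (i:ℕ) < p) (fun i => bt i ^ 2)]
    have hz : ∑ i ∈ Finset.univ.filter (fun i : Fin n => (i:ℕ) < p), bt i ^ 2 = 0 := by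
      apply Finset.sum_eq_zero
      intro i hi
      rw [Finset.mem_filter] at hi
      rw [hbtdef]
      simp [hi.2]
    rw [hz, zero_add]
    apply Finset.sum_congr rfl
    intro i hi
    rw [Finset.mem_filter] at hi
    rw [hbtdef, hbdef]
    simp [hi.2]
  have htail_mask : Av n (fun s => |T bt s| ^ p) ≤ I := by
    have h1 : ∀ s, T bt s = ∑ i ∈ Finset.univ.filter (fun i : Fin n => ¬ (i:ℕ) < p),
        b i * sg (s i) := by
      intro s
      rw [T, Finset.sum_filter]
      apply Finset.sum_congr rfl
      intro i _
      rw [hbtdef]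
      by_cases h : (i:ℕ) < p <;> simp [h]
    calc Av n (fun s => |T bt s| ^ p)
        = Av n (fun s => |∑ i ∈ Finset.univ.filter (fun i : Fin n => ¬ (i:ℕ) < p),
            b i * sg (s i)| ^ p) := by
          congr 1; funext s; rw [h1 s]
    _ ≤ I := mask_le b _ p
  rcases eq_or_lt_of_le hT20 with hT2z | hT2pos
  · -- tail is zero
    have hs : Real.sqrt T2 = 0 := by rw [← hT2z, Real.sqrt_zero]
    have hK : (1/800 : ℝ) * (H + Real.sqrt p * Real.sqrt T2) ≤ H / 2 := by
      rw [hs, mul_zero, add_zero]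
      linarith
    calc ((1/800 : ℝ) * (H + Real.sqrt p * Real.sqrt T2)) ^ p ≤ (H / 2) ^ p := by
          apply pow_le_pow_left₀ (by positivity) hK
    _ ≤ I := hhead
  · by_cases hsmall : ∀ i : Fin n, (p : ℝ) * bt i ^ 2 ≤ ∑ j, bt j ^ 2
    · -- small coefficients : use moment_lower on the tail
      have hml := moment_lower bt p hp (by rw [hbtsq]; exact hT2pos) hsmall
      rw [hbtsq] at hml
      have hy : (Real.sqrt p * Real.sqrt T2 / 400) ^ p ≤ I := by
        have h2 : (Real.sqrt p * Real.sqrt T2 / 400) ^ p ≤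
            (Real.sqrt p * Real.sqrt T2 / 8) ^ p * (Real.exp (-(2:ℝ) * p) / 25) := by
          have he : Real.exp (-(2:ℝ) * p) = Real.exp (-2 : ℝ) ^ p := by
            rw [← Real.exp_nat_mul]; congr 1; ring
          have h10 : (1/10 : ℝ) ^ p ≤ Real.exp (-2:ℝ) ^ p :=
            pow_le_pow_left₀ (by norm_num) exp_neg_two_ge p
          have h5 : (1/5 : ℝ) ^ p ≤ (1/5 : ℝ) ^ 2 :=
            pow_le_pow_of_le_one (by norm_num) (by norm_num) hp
          have key : (Real.sqrt p * Real.sqrt T2 / 400) ^ p =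
              (Real.sqrt p * Real.sqrt T2 / 8) ^ p * ((1/10:ℝ)^p * (1/5:ℝ)^p) := by
            rw [← mul_pow, ← mul_pow]
            congr 1
            ring
          rw [key, he]
          apply mul_le_mul_of_nonneg_left _ (by positivity)
          calc (1/10:ℝ)^p * (1/5:ℝ)^p ≤ Real.exp (-2:ℝ)^p * (1/5:ℝ)^2 := by
                apply mul_le_mul h10 h5 (by positivity) (by positivity)
          _ = Real.exp (-2:ℝ)^p / 25 := by
                rw [show ((1:ℝ)/5)^2 = 1/25 by norm_num]; ring
        calc (Real.sqrt p * Real.sqrt T2 / 400) ^ p ≤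
            (Real.sqrt p * Real.sqrt T2 / 8) ^ p * (Real.exp (-(2:ℝ) * p) / 25) := h2
        _ ≤ Av n (fun s => |T bt s| ^ p) := hml
        _ ≤ I := htail_mask
      -- combine with the head bound
      have hcomb : (1/800 : ℝ) * (H + Real.sqrt p * Real.sqrt T2) ≤
          max (H / 2) (Real.sqrt p * Real.sqrt T2 / 400) := by
        have h1 : (1/800:ℝ) * (H + Real.sqrt p * Real.sqrt T2) =
            (H/800) + (Real.sqrt p * Real.sqrt T2 / 800) := by ring
        have h2 : H / 800 ≤ max (H / 2) (Real.sqrt p * Real.sqrt T2 / 400) / 2 := by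
          have := le_max_left (H/2) (Real.sqrt p * Real.sqrt T2 / 400)
          linarith
        have h3 : Real.sqrt p * Real.sqrt T2 / 800 ≤
            max (H / 2) (Real.sqrt p * Real.sqrt T2 / 400) / 2 := by
          have := le_max_right (H/2) (Real.sqrt p * Real.sqrt T2 / 400)
          linarith
        rw [h1]
        linarith
      have hmax : (max (H / 2) (Real.sqrt p * Real.sqrt T2 / 400)) ^ p ≤ I := by
        rcases max_cases (H/2) (Real.sqrt p * Real.sqrt T2 / 400) with ⟨hm, _⟩ | ⟨hm, _⟩
        · rw [hm]; exact hhead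
        · rw [hm]; exact hy
      calc ((1/800 : ℝ) * (H + Real.sqrt p * Real.sqrt T2)) ^ p
          ≤ (max (H / 2) (Real.sqrt p * Real.sqrt T2 / 400)) ^ p := by
            apply pow_le_pow_left₀ (by positivity) hcomb
      _ ≤ I := hmax
    · -- some tail coefficient is large : tail term is dominated by the head
      push_neg at hsmall
      obtain ⟨i0, hi0⟩ := hsmall
      rw [hbtsq] at hi0
      have hbt0 : bt i0 ≠ 0 := by
        intro h
        rw [h] at hi0
        simp at hi0
        linarith
      have hi0p : ¬ ((i0 : ℕ) < p) := by
        intro h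
        apply hbt0
        rw [hbtdef]
        simp [h]
      push_neg at hi0p
      have hbti0 : bt i0 = a i0.val := by
        rw [hbtdef]; simp [not_lt.2 hi0p]; rfl
      have hai0 : 0 ≤ a i0.val := ha0 _ i0.isLt
      have hpn : p < n := lt_of_le_of_lt hi0p i0.isLt
      have hmin : min p n = p := min_eq_left hpn.le
      -- √p √T2 ≤ p * a i0
      have hsq : Real.sqrt p * Real.sqrt T2 ≤ (p:ℝ) * a i0.val := by
        have h1 : T2 ≤ (p:ℝ) * (a i0.val) ^ 2 := by
          rw [hbti0] at hi0
          linarith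
        have h2 : Real.sqrt T2 ≤ Real.sqrt ((p:ℝ) * (a i0.val)^2) := Real.sqrt_le_sqrt h1
        have h3 : Real.sqrt ((p:ℝ) * (a i0.val)^2) = Real.sqrt p * a i0.val := by
          rw [Real.sqrt_mul (by positivity), Real.sqrt_sq hai0]
        calc Real.sqrt p * Real.sqrt T2 ≤ Real.sqrt p * (Real.sqrt p * a i0.val) := by
              apply mul_le_mul_of_nonneg_left _ (Real.sqrt_nonneg _)
              rw [← h3]; exact h2
        _ = (Real.sqrt p * Real.sqrt p) * a i0.val := by ring
        _ = (p:ℝ) * a i0.val := by rw [Real.mul_self_sqrt (by positivity)]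
      -- p * a i0 ≤ H
      have hpa : (p:ℝ) * a i0.val ≤ H := by
        rw [hHdef, hmin]
        calc (p:ℝ) * a i0.val = ∑ _j ∈ Finset.range p, a i0.val := by
              rw [Finset.sum_const, Finset.card_range, nsmul_eq_mul]
        _ ≤ ∑ j ∈ Finset.range p, a j := by
              apply Finset.sum_le_sum
              intro j hj
              rw [Finset.mem_range] at hj
              exact hmono j i0.val (le_trans hj.le hi0p) i0.isLt
      have hK : (1/800 : ℝ) * (H + Real.sqrt p * Real.sqrt T2) ≤ H / 2 := by
        have : Real.sqrt p * Real.sqrt T2 ≤ H := le_trans hsq hpa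
        linarith
      calc ((1/800 : ℝ) * (H + Real.sqrt p * Real.sqrt T2)) ^ p ≤ (H / 2) ^ p :=
            pow_le_pow_left₀ (by positivity) hK p
      _ ≤ I := hhead

lemma Av_Lp_add {n : ℕ} (p : ℕ) (hp : 1 ≤ p) (f g : (Fin n → Bool) → ℝ) :
    (Av n (fun s => |f s + g s| ^ p)) ^ (1/(p:ℝ)) ≤
      (Av n (fun s => |f s| ^ p)) ^ (1/(p:ℝ)) + (Av n (fun s => |g s| ^ p)) ^ (1/(p:ℝ)) := by
  have hp1 : (1:ℝ) ≤ (p:ℝ) := by exact_mod_cast hp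
  have key := Real.Lp_add_le (s := Finset.univ) (f := f) (g := g) hp1
  have e1 : ∑ s, |f s + g s| ^ ((p:ℕ):ℝ) = ∑ s : Fin n → Bool, |f s + g s| ^ p :=
    Finset.sum_congr rfl fun s _ => Real.rpow_natCast _ p
  have e2 : ∑ s, |f s| ^ ((p:ℕ):ℝ) = ∑ s : Fin n → Bool, |f s| ^ p :=
    Finset.sum_congr rfl fun s _ => Real.rpow_natCast _ p
  have e3 : ∑ s, |g s| ^ ((p:ℕ):ℝ) = ∑ s : Fin n → Bool, |g s| ^ p :=
    Finset.sum_congr rfl fun s _ => Real.rpow_natCast _ p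
  rw [e1, e2, e3] at key
  unfold Av
  have hc : (0:ℝ) ≤ ((2:ℝ)^n)⁻¹ := by positivity
  have h1 : ∀ h : (Fin n → Bool) → ℝ, (∀ s, 0 ≤ h s) →
      (((2:ℝ)^n)⁻¹ * ∑ s, h s) ^ (1/(p:ℝ)) =
        (((2:ℝ)^n)⁻¹) ^ (1/(p:ℝ)) * (∑ s, h s) ^ (1/(p:ℝ)) := by
    intro h hh
    exact Real.mul_rpow hc (Finset.sum_nonneg fun s _ => hh s)
  rw [h1 _ (fun s => by positivity), h1 _ (fun s => by positivity),
      h1 _ (fun s => by positivity), ← mul_add]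
  exact mul_le_mul_of_nonneg_left key (Real.rpow_nonneg hc _)

lemma cube_upper (n : ℕ) (a : ℕ → ℝ) (ha0 : ∀ i, i < n → 0 ≤ a i) (p : ℕ) (hp : 2 ≤ p) :
    (Av n (fun s => |T (fun i => a i.val) s| ^ p)) ^ (1/(p:ℝ)) ≤
      2 * ((∑ i ∈ Finset.range (min p n), a i) +
        Real.sqrt p * Real.sqrt (∑ i ∈ Finset.Ico p n, (a i) ^ 2)) := by
  have hp1 : 1 ≤ p := le_trans one_le_two hp
  have hpne : p ≠ 0 := by omega
  set b : Fin n → ℝ := fun i => a i.val with hbdef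
  set H := ∑ i ∈ Finset.range (min p n), a i with hHdef
  set T2 := ∑ i ∈ Finset.Ico p n, (a i) ^ 2 with hT2def
  have hbpos : ∀ i : Fin n, 0 ≤ b i := fun i => ha0 i.val i.isLt
  have hH0 : 0 ≤ H := by
    rw [hHdef]
    apply Finset.sum_nonneg
    intro j hj
    rw [Finset.mem_range, lt_min_iff] at hj
    exact ha0 j hj.2
  have hT20 : 0 ≤ T2 := by
    rw [hT2def]; exact Finset.sum_nonneg fun j _ => sq_nonneg _
  set bh : Fin n → ℝ := fun i => if (i:ℕ) < p then b i else 0 with hbhdef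
  set bt : Fin n → ℝ := fun i => if (i:ℕ) < p then 0 else b i with hbtdef
  have hsplit : ∀ s, T b s = T bh s + T bt s := by
    intro s
    rw [T, T, T, ← Finset.sum_add_distrib]
    apply Finset.sum_congr rfl
    intro i _
    rw [hbhdef, hbtdef]
    by_cases h : (i:ℕ) < p <;> simp [h] <;> ring
  have hbtsq : ∑ i, bt i ^ 2 = T2 := by
    rw [hT2def, ← sum_filter_ge n p (fun j => (a j)^2), ← Finset.sum_filter_add_sum_filter_not
      Finset.univ (fun i : Fin n => (i:ℕ) < p) (fun i => bt i ^ 2)]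
    have hz : ∑ i ∈ Finset.univ.filter (fun i : Fin n => (i:ℕ) < p), bt i ^ 2 = 0 := by
      apply Finset.sum_eq_zero
      intro i hi
      rw [Finset.mem_filter] at hi
      rw [hbtdef]
      simp [hi.2]
    rw [hz, zero_add]
    apply Finset.sum_congr rfl
    intro i hi
    rw [Finset.mem_filter] at hi
    rw [hbtdef, hbdef]
    simp [hi.2]
  have hbhsum : ∑ i, bh i = H := by
    rw [hHdef, ← sum_filter_lt n p a, Finset.sum_filter]
  -- Minkowski
  have hmink : (Av n (fun s => |T b s| ^ p)) ^ (1/(p:ℝ)) ≤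
      (Av n (fun s => |T bh s| ^ p)) ^ (1/(p:ℝ)) + (Av n (fun s => |T bt s| ^ p)) ^ (1/(p:ℝ)) := by
    have h1 : (fun s : Fin n → Bool => |T b s| ^ p) =
        (fun s : Fin n → Bool => |T bh s + T bt s| ^ p) := by
      funext s; rw [hsplit s]
    rw [h1]
    exact Av_Lp_add p hp1 (T bh) (T bt)
  -- head estimate
  have hhead : (Av n (fun s => |T bh s| ^ p)) ^ (1/(p:ℝ)) ≤ H := by
    have hpt : ∀ s, |T bh s| ^ p ≤ H ^ p := by
      intro s
      apply pow_le_pow_left₀ (abs_nonneg _)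
      calc |T bh s| ≤ ∑ i, |bh i * sg (s i)| := Finset.abs_sum_le_sum_abs _ _
      _ = ∑ i, bh i := by
          apply Finset.sum_congr rfl
          intro i _
          have hbh0 : 0 ≤ bh i := by
            rw [hbhdef]
            dsimp only
            by_cases h : (i:ℕ) < p
            · simpa [h] using hbpos i
            · simp [h]
          rw [abs_mul, abs_sg, mul_one, abs_of_nonneg hbh0]
      _ = H := hbhsum
    have h2 : Av n (fun s => |T bh s| ^ p) ≤ H ^ p := by
      calc Av n (fun s => |T bh s| ^ p) ≤ Av n (fun _ => H ^ p) := Av_mono hpt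
      _ = H ^ p := Av_const n _
    calc (Av n (fun s => |T bh s| ^ p)) ^ (1/(p:ℝ)) ≤ (H ^ p) ^ (1/(p:ℝ)) :=
          Real.rpow_le_rpow (Av_nonneg fun s => by positivity) h2 (by positivity)
    _ = H := by
        rw [one_div, Real.pow_rpow_inv_natCast hH0 hpne]
  -- tail estimate
  have htail : (Av n (fun s => |T bt s| ^ p)) ^ (1/(p:ℝ)) ≤
      2 * (Real.sqrt p * Real.sqrt T2) := by
    have h1 := moment_upper bt p hp1
    rw [hbtsq] at h1
    have h2 : 2 * (Real.sqrt p * Real.sqrt T2) ^ p ≤ (2 * (Real.sqrt p * Real.sqrt T2)) ^ p := by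
      have e : (2 * (Real.sqrt p * Real.sqrt T2)) ^ p =
          2 ^ p * (Real.sqrt p * Real.sqrt T2) ^ p := mul_pow 2 _ p
      rw [e]
      exact mul_le_mul_of_nonneg_right (le_self_pow₀ one_le_two hpne) (by positivity)
    calc (Av n (fun s => |T bt s| ^ p)) ^ (1/(p:ℝ)) ≤
        ((2 * (Real.sqrt p * Real.sqrt T2)) ^ p) ^ (1/(p:ℝ)) :=
          Real.rpow_le_rpow (Av_nonneg fun s => by positivity) (le_trans h1 h2) (by positivity)
    _ = 2 * (Real.sqrt p * Real.sqrt T2) := by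
        rw [one_div, Real.pow_rpow_inv_natCast (by positivity) hpne]
  calc (Av n (fun s => |T b s| ^ p)) ^ (1/(p:ℝ)) ≤
      (Av n (fun s => |T bh s| ^ p)) ^ (1/(p:ℝ)) + (Av n (fun s => |T bt s| ^ p)) ^ (1/(p:ℝ)) :=
        hmink
  _ ≤ H + 2 * (Real.sqrt p * Real.sqrt T2) := add_le_add hhead htail
  _ ≤ 2 * (H + Real.sqrt p * Real.sqrt T2) := by
      have : (0:ℝ) ≤ Real.sqrt p * Real.sqrt T2 := by positivity
      linarith


end Hitczenko

open MeasureTheory ProbabilityTheory Real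
open scoped ENNReal

theorem hitczenko_rademacher : ∃ c C : ℝ, 0 < c ∧ 0 < C ∧
    ∀ (Ω : Type) [MeasurableSpace Ω] (μ : Measure Ω) [IsProbabilityMeasure μ]
      (n : ℕ) (ε : Fin n → Ω → ℝ),
      (∀ i, Measurable (ε i)) →
      iIndepFun ε μ →
      (∀ i, μ.map (ε i) =
        (1 / 2 : ℝ≥0∞) • Measure.dirac (1 : ℝ) +
          (1 / 2 : ℝ≥0∞) • Measure.dirac (-1 : ℝ)) →
      ∀ (a : ℕ → ℝ),
      (∀ i, i < n → 0 ≤ a i) →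
      (∀ i j, i ≤ j → j < n → a j ≤ a i) →
      ∀ p : ℕ, 2 ≤ p →
        c * ((∑ i ∈ Finset.range (min p n), a i) +
            Real.sqrt p * Real.sqrt (∑ i ∈ Finset.Ico p n, (a i) ^ 2)) ≤
          (∫ ω, |∑ i : Fin n, a i.val * ε i ω| ^ (p : ℝ) ∂μ) ^ (1 / (p : ℝ)) ∧
        (∫ ω, |∑ i : Fin n, a i.val * ε i ω| ^ (p : ℝ) ∂μ) ^ (1 / (p : ℝ)) ≤
          C * ((∑ i ∈ Finset.range (min p n), a i) +
            Real.sqrt p * Real.sqrt (∑ i ∈ Finset.Ico p n, (a i) ^ 2)) := by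
  refine ⟨1/800, 2, by norm_num, by norm_num, ?_⟩
  intro Ω _ μ _ n ε hmeas hindep hlaw a ha0 hmono p hp
  have hpne : p ≠ 0 := by omega
  have hlaw' : ∀ i, μ.map (ε i) = Hitczenko.nu := fun i => hlaw i
  have hcont : Continuous fun x : Fin n → ℝ => |∑ i, a i.val * x i| ^ p := by
    apply Continuous.pow
    apply Continuous.abs
    exact continuous_finset_sum _ (fun i _ => continuous_const.mul (continuous_apply i))
  have hF : StronglyMeasurable fun x : Fin n → ℝ => |∑ i, a i.val * x i| ^ p :=
    hcont.stronglyMeasurable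
  have hInt : ∫ ω, |∑ i : Fin n, a i.val * ε i ω| ^ (p : ℝ) ∂μ =
      Hitczenko.Av n (fun s => |Hitczenko.T (fun i => a i.val) s| ^ p) := by
    have h1 : (fun ω => |∑ i : Fin n, a i.val * ε i ω| ^ (p : ℝ)) =
        (fun ω => (fun x : Fin n → ℝ => |∑ i, a i.val * x i| ^ p) (fun i => ε i ω)) := by
      funext ω
      rw [Real.rpow_natCast]
    rw [h1, Hitczenko.integral_eq_Av μ n ε hmeas hindep hlaw' _ hF]
    rfl
  rw [hInt]
  have hK0 : 0 ≤ (∑ i ∈ Finset.range (min p n), a i) +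
      Real.sqrt p * Real.sqrt (∑ i ∈ Finset.Ico p n, (a i) ^ 2) := by
    have h1 : 0 ≤ ∑ i ∈ Finset.range (min p n), a i := by
      apply Finset.sum_nonneg
      intro j hj
      rw [Finset.mem_range, lt_min_iff] at hj
      exact ha0 j hj.2
    have h2 : (0:ℝ) ≤ Real.sqrt p * Real.sqrt (∑ i ∈ Finset.Ico p n, (a i) ^ 2) := by
      positivity
    linarith
  constructor
  · have hlow := Hitczenko.cube_lower n a ha0 hmono p hp
    have hI0 : 0 ≤ Hitczenko.Av n (fun s => |Hitczenko.T (fun i => a i.val) s| ^ p) :=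
      Hitczenko.Av_nonneg fun s => by positivity
    have hcK : (0:ℝ) ≤ (1/800) * ((∑ i ∈ Finset.range (min p n), a i) +
        Real.sqrt p * Real.sqrt (∑ i ∈ Finset.Ico p n, (a i) ^ 2)) := by
      positivity
    calc (1/800 : ℝ) * ((∑ i ∈ Finset.range (min p n), a i) +
          Real.sqrt p * Real.sqrt (∑ i ∈ Finset.Ico p n, (a i) ^ 2))
        = (((1/800 : ℝ) * ((∑ i ∈ Finset.range (min p n), a i) +
            Real.sqrt p * Real.sqrt (∑ i ∈ Finset.Ico p n, (a i) ^ 2))) ^ p) ^ (1/(p:ℝ)) := by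
          rw [show (1:ℝ)/(p:ℝ) = ((p:ℝ))⁻¹ from one_div _,
            Real.pow_rpow_inv_natCast hcK hpne]
    _ ≤ (Hitczenko.Av n (fun s => |Hitczenko.T (fun i => a i.val) s| ^ p)) ^ (1/(p:ℝ)) :=
          Real.rpow_le_rpow (by positivity) hlow (by positivity)
  · exact Hitczenko.cube_upper n a ha0 p hp
end

section
/- Let Z_1,…,Z_n be i.i.d. Rademacher signs, M, β ≥ 0, and g_i(Z) = M·Z_i + (β/2)·Z_i·∑_{j≠i} Z_j. Then there exist universal constants κ > 0 and c > 0 such that for every p with κ ≤ p ≤ n, ‖∑_{i=1}^n g_i(Z)‖_p ≥ c·(p·n·β + M·√(pn)). -/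
open MeasureTheory ProbabilityTheory Real
open scoped ENNReal

namespace ChaosLB

noncomputable def nu : Measure ℝ :=
  (1 / 2 : ℝ≥0∞) • Measure.dirac (1 : ℝ) + (1 / 2 : ℝ≥0∞) • Measure.dirac (-1 : ℝ)

def sgn (b : Bool) : ℝ := if b then 1 else -1

instance : IsProbabilityMeasure nu :=
  ⟨by simp [nu, Measure.dirac_apply]; rw [ENNReal.inv_two_add_inv_two]⟩

noncomputable def D (n : ℕ) : Measure (Fin n → ℝ) :=
  ((2 : ℝ≥0∞) ^ n)⁻¹ •
    ∑ ε ∈ (Finset.univ : Finset (Fin n → Bool)), Measure.dirac (fun i => sgn (ε i))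

lemma D_eq_pi (n : ℕ) : D n = Measure.pi (fun _ : Fin n => nu) := by
  refine (Measure.pi_eq (μ := fun _ : Fin n => nu) fun s hs => ?_).symm
  have hpi : MeasurableSet (Set.pi Set.univ s) := MeasurableSet.pi Set.countable_univ
    (fun i _ => hs i)
  rw [D, Measure.smul_apply, Measure.coe_finset_sum, Finset.sum_apply]
  have h1 : ∀ ε : Fin n → Bool, Measure.dirac (fun i => sgn (ε i)) (Set.pi Set.univ s)
      = ∏ i, Set.indicator (s i) (1 : ℝ → ℝ≥0∞) (sgn (ε i)) := by
    intro ε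
    rw [Measure.dirac_apply' _ hpi]
    by_cases h : (fun i => sgn (ε i)) ∈ Set.pi Set.univ s
    · rw [Set.indicator_of_mem h]
      rw [Set.mem_univ_pi] at h
      simp only [Set.indicator_of_mem (h _)]
      simp
    · rw [Set.indicator_of_notMem h]
      rw [Set.mem_univ_pi] at h
      push_neg at h
      obtain ⟨i, hi⟩ := h
      exact (Finset.prod_eq_zero (Finset.mem_univ i) (by
        simp [Set.indicator_of_notMem hi])).symm
  simp only [h1]
  have h2 : ∀ i, nu (s i) = (2:ℝ≥0∞)⁻¹ * ∑ b : Bool, Set.indicator (s i) (1 : ℝ → ℝ≥0∞) (sgn b) := by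
    intro i
    rw [nu, Measure.add_apply, Measure.smul_apply, Measure.smul_apply,
      Measure.dirac_apply' _ (hs i), Measure.dirac_apply' _ (hs i)]
    rw [Fintype.sum_bool]
    rw [mul_add]
    simp [sgn, one_div]
  have key : ∑ x : Fin n → Bool, ∏ i, Set.indicator (s i) (1 : ℝ → ℝ≥0∞) (sgn (x i))
      = ∏ i, ∑ b : Bool, Set.indicator (s i) (1 : ℝ → ℝ≥0∞) (sgn b) := by
    rw [← Fintype.piFinset_univ]
    exact Finset.sum_prod_piFinset Finset.univ (fun i b => Set.indicator (s i) (1 : ℝ → ℝ≥0∞) (sgn b))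
  rw [key]
  simp only [h2]
  rw [Finset.prod_mul_distrib, Finset.prod_const, Finset.card_univ, Fintype.card_fin,
    smul_eq_mul, ENNReal.inv_pow]

lemma map_eq_D {Ω : Type} [MeasurableSpace Ω] (μ : Measure Ω) [IsProbabilityMeasure μ]
    (n : ℕ) (Z : Fin n → Ω → ℝ) (hZ : ∀ i, Measurable (Z i))
    (hind : iIndepFun Z μ)
    (hmap : ∀ i, μ.map (Z i) = nu) :
    μ.map (fun ω i => Z i ω) = D n := by
  rw [D_eq_pi]
  refine (Measure.pi_eq fun s hs => ?_).symm
  have hme : Measurable (fun ω i => Z i ω) := measurable_pi_lambda _ hZ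
  rw [Measure.map_apply hme (MeasurableSet.pi Set.countable_univ fun i _ => hs i)]
  have hpre : (fun ω i => Z i ω) ⁻¹' Set.pi Set.univ s = ⋂ i ∈ Finset.univ, Z i ⁻¹' s i := by
    ext ω; simp [Set.mem_univ_pi]
  rw [hpre, hind.measure_inter_preimage_eq_mul Finset.univ (fun i _ => hs i)]
  refine Finset.prod_congr rfl fun i _ => ?_
  rw [← hmap i, Measure.map_apply (hZ i) (hs i)]

lemma integrable_dirac'' {α : Type*} [MeasurableSpace α] {f : α → ℝ}
    (hf : StronglyMeasurable f) (a : α) : Integrable f (Measure.dirac a) := by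
  refine ⟨hf.aestronglyMeasurable, ?_⟩
  have h : ∫⁻ x, ‖f x‖ₑ ∂(Measure.dirac a) = ‖f a‖ₑ :=
    lintegral_dirac' a (hf.measurable.enorm)
  simp [HasFiniteIntegral, h]

lemma integral_D (n : ℕ) (g : (Fin n → ℝ) → ℝ) (hg : StronglyMeasurable g) :
    ∫ x, g x ∂(D n) = ((2:ℝ) ^ n)⁻¹ * ∑ ε : Fin n → Bool, g (fun i => sgn (ε i)) := by
  rw [D, integral_smul_measure,
    integral_finset_sum_measure (fun ε _ => integrable_dirac'' hg _)]
  congr 1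
  · simp
  · exact Finset.sum_congr rfl fun ε _ => integral_dirac' _ _ hg

/-- odd double factorial: `odf k = (2k-1)!!` -/
def odf : ℕ → ℕ
  | 0 => 1
  | (k+1) => (2*k+1) * odf k

/-- lower bound quantity for the `2k`-th moment of a sum of `n` signs -/
def mlb (n k : ℕ) : ℕ := odf k * n.descFactorial k

lemma mlb_rec (n k : ℕ) :
    mlb (n+1) (k+1) = mlb n (k+1) + (k+1)*(2*k+1) * mlb n k := by
  rcases le_or_gt k n with h | h
  · have hd : (n+1).descFactorial (k+1) = (n+1) * n.descFactorial k :=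
      Nat.succ_descFactorial_succ n k
    have hd2 : n.descFactorial (k+1) = (n - k) * n.descFactorial k :=
      Nat.descFactorial_succ n k
    have hnk : n + 1 = (n - k) + (k + 1) := by omega
    rw [mlb, mlb, mlb, hd, hd2, odf]
    rw [hnk]
    ring
  · have hd0 : n.descFactorial k = 0 := Nat.descFactorial_eq_zero_iff_lt.mpr h
    have hd1 : n.descFactorial (k+1) = 0 := Nat.descFactorial_eq_zero_iff_lt.mpr (by omega)
    have hd2 : (n+1).descFactorial (k+1) = (n+1) * n.descFactorial k :=
      Nat.succ_descFactorial_succ n k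
    rw [mlb, mlb, mlb, hd0, hd1, hd2]
    simp
    exact Or.inr h

lemma choose_two_k (k : ℕ) : (2*k+2).choose (2*k) = (k+1)*(2*k+1) := by
  have h1 := Nat.choose_symm (n := 2*k+2) (k := 2) (by omega)
  rw [show 2*k+2-2 = 2*k from by omega] at h1
  rw [h1, Nat.choose_two_right]
  have h2 : (2*k+2) * (2*k+2-1) = 2 * ((k+1)*(2*k+1)) := by
    have : 2*k+2-1 = 2*k+1 := by omega
    rw [this]; ring
  rw [h2, Nat.mul_div_cancel_left _ (by norm_num)]

lemma pair_pow_lb (s : ℝ) (k : ℕ) :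
    2 * s ^ (2*k+2) + 2 * (((k+1)*(2*k+1) : ℕ) : ℝ) * s ^ (2*k)
      ≤ (s + 1) ^ (2*k+2) + (s + -1) ^ (2*k+2) := by
  rw [add_pow, add_pow, ← Finset.sum_add_distrib]
  have hsub : ({2*k, 2*k+2} : Finset ℕ) ⊆ Finset.range (2*k+2+1) := by
    intro j hj
    simp only [Finset.mem_insert, Finset.mem_singleton] at hj
    rcases hj with h|h <;> simp [h] <;> omega
  refine le_trans ?_ (Finset.sum_le_sum_of_subset_of_nonneg hsub ?_)
  · rw [Finset.sum_pair (by omega : 2*k ≠ 2*k+2)]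
    have e1 : 2*k+2 - (2*k) = 2 := by omega
    have e2 : 2*k+2 - (2*k+2) = 0 := by omega
    rw [e1, e2, choose_two_k, Nat.choose_self]
    simp only [one_pow, pow_zero, neg_one_sq, Nat.cast_one, mul_one]
    ring_nf
    nlinarith [sq_nonneg s]
  · intro j hj hnot
    have hje : j ≤ 2*k+2 := by
      simp only [Finset.mem_range] at hj; omega
    rcases Nat.even_or_odd j with he | ho
    · have hmj : Even (2*k+2 - j) := (Nat.even_sub hje).mpr (iff_of_true ⟨k+1, by ring⟩ he)
      have h0 : (0:ℝ) ≤ s ^ j * (((2*k+2).choose j : ℕ) : ℝ) :=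
        mul_nonneg (he.pow_nonneg s) (Nat.cast_nonneg _)
      simp only [one_pow, hmj.neg_one_pow, mul_one]
      linarith
    · have hmj : Odd (2*k+2 - j) := Nat.Even.sub_odd hje (⟨k+1, by ring⟩) ho
      simp only [one_pow, hmj.neg_one_pow, mul_one, mul_neg_one]
      have : s ^ j * (((2*k+2).choose j : ℕ) : ℝ) + -s ^ j * (((2*k+2).choose j : ℕ) : ℝ) = 0 := by
        ring
      linarith

lemma sum_pow_lb (n k : ℕ) :
    ((2^n * mlb n k : ℕ) : ℝ) ≤ ∑ ε : Fin n → Bool, (∑ i, sgn (ε i)) ^ (2*k) := by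
  induction n generalizing k with
  | zero =>
    cases k with
    | zero => simp [mlb, odf]
    | succ k => simp [mlb]
  | succ n ih =>
    have hre : ∑ ε : Fin (n+1) → Bool, (∑ i, sgn (ε i)) ^ (2*k)
        = ∑ q : Bool × (Fin n → Bool), (sgn q.1 + ∑ i, sgn (q.2 i)) ^ (2*k) := by
      rw [← (Fin.consEquiv (fun _ : Fin (n+1) => Bool)).sum_comp
        (fun ε => (∑ i, sgn (ε i)) ^ (2*k))]
      refine Fintype.sum_congr _ _ fun q => ?_
      congr 1
      rw [Fin.sum_univ_succ]
      simp [Fin.consEquiv]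
    rw [hre, Fintype.sum_prod_type, Fintype.sum_bool]
    cases k with
    | zero =>
      simp only [Nat.mul_zero, pow_zero, Finset.sum_const, Finset.card_univ, nsmul_eq_mul, mul_one]
      rw [Fintype.card_fun, Fintype.card_bool, Fintype.card_fin]
      simp [mlb, odf]
      push_cast
      rw [pow_succ]
      ring_nf
      norm_num
    | succ j =>
      have hpt : ∀ ε : Fin n → Bool,
          2 * (∑ i, sgn (ε i)) ^ (2*(j+1))
              + 2 * (((j+1)*(2*j+1) : ℕ) : ℝ) * (∑ i, sgn (ε i)) ^ (2*j)
            ≤ (sgn true + ∑ i, sgn (ε i)) ^ (2*(j+1))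
              + (sgn false + ∑ i, sgn (ε i)) ^ (2*(j+1)) := by
        intro ε
        have h := pair_pow_lb (∑ i, sgn (ε i)) j
        have e2 : 2*j+2 = 2*(j+1) := by ring
        rw [e2] at h
        simpa [sgn, add_comm] using h
      calc ((2^(n+1) * mlb (n+1) (j+1) : ℕ) : ℝ)
          = 2 * ((2^n * mlb n (j+1) : ℕ) : ℝ)
            + 2 * (((j+1)*(2*j+1) : ℕ) : ℝ) * ((2^n * mlb n j : ℕ) : ℝ) := by
            have hrec := mlb_rec n j
            push_cast [hrec]
            ring
        _ ≤ 2 * ∑ ε : Fin n → Bool, (∑ i, sgn (ε i)) ^ (2*(j+1))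
            + 2 * (((j+1)*(2*j+1) : ℕ) : ℝ) * ∑ ε : Fin n → Bool, (∑ i, sgn (ε i)) ^ (2*j) := by
            refine add_le_add ?_ ?_
            · exact mul_le_mul_of_nonneg_left (ih (j+1)) (by norm_num)
            · exact mul_le_mul_of_nonneg_left (ih j) (by positivity)
        _ = ∑ ε : Fin n → Bool, (2 * (∑ i, sgn (ε i)) ^ (2*(j+1))
              + 2 * (((j+1)*(2*j+1) : ℕ) : ℝ) * (∑ i, sgn (ε i)) ^ (2*j)) := by
            rw [Finset.sum_add_distrib, ← Finset.mul_sum, ← Finset.mul_sum]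
        _ ≤ ∑ ε : Fin n → Bool, ((sgn true + ∑ i, sgn (ε i)) ^ (2*(j+1))
              + (sgn false + ∑ i, sgn (ε i)) ^ (2*(j+1))) :=
            Finset.sum_le_sum fun ε _ => hpt ε
        _ = (∑ ε : Fin n → Bool, (sgn true + ∑ i, sgn (ε i)) ^ (2*(j+1)))
            + ∑ ε : Fin n → Bool, (sgn false + ∑ i, sgn (ε i)) ^ (2*(j+1)) :=
            Finset.sum_add_distrib

lemma factorial_le_odf (k : ℕ) : k.factorial ≤ odf k := by
  induction k with
  | zero => simp [odf]
  | succ k ih =>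
    rw [odf, Nat.factorial_succ]
    exact Nat.mul_le_mul (by omega) ih

lemma pow_mul_factorial_le (n k : ℕ) (h : k ≤ n) :
    n^k * k.factorial ≤ n.descFactorial k * k^k := by
  have hf : (∏ i ∈ Finset.range k, (k - i)) = k.factorial := by
    rw [← Finset.prod_range_add_one_eq_factorial, ← Finset.prod_range_reflect (fun j => j + 1) k]
    refine Finset.prod_congr rfl fun i hi => ?_
    simp only [Finset.mem_range] at hi
    omega
  rw [← hf, Nat.descFactorial_eq_prod_range]
  have hl : n ^ k * ∏ i ∈ Finset.range k, (k - i) = ∏ i ∈ Finset.range k, n * (k - i) := by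
    rw [Finset.prod_mul_distrib, Finset.prod_const, Finset.card_range]
  have hr : (∏ i ∈ Finset.range k, (n - i)) * k ^ k = ∏ i ∈ Finset.range k, (n - i) * k := by
    rw [Finset.prod_mul_distrib, Finset.prod_const, Finset.card_range]
  rw [hl, hr]
  refine Finset.prod_le_prod' fun i hi => ?_
  simp only [Finset.mem_range] at hi
  have h1 : i ≤ k := le_of_lt hi
  have h2 : i ≤ n := h1.trans h
  zify [h1, h2]
  nlinarith [mul_le_mul_of_nonneg_left (show (k:ℤ) ≤ n by exact_mod_cast h)
    (show (0:ℤ) ≤ i by positivity)]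

lemma le_mlb (n k : ℕ) (h : k ≤ n) :
    ((k : ℝ) * n)^k ≤ (mlb n k : ℝ) * Real.exp 1 ^ (2*k) := by
  set E : ℝ := Real.exp 1 ^ k with hE
  have hEpos : 0 < E := by positivity
  have h1 : (k:ℝ)^k ≤ (k.factorial : ℝ) * E := by
    have := Real.pow_div_factorial_le_exp (x := (k:ℝ)) (Nat.cast_nonneg k) k
    rw [div_le_iff₀ (by positivity)] at this
    calc (k:ℝ)^k ≤ Real.exp k * k.factorial := this
      _ = (k.factorial : ℝ) * E := by
        rw [hE, ← Real.exp_one_pow]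
        ring
  have h2 : (n:ℝ)^k * (k.factorial : ℝ) ≤ (n.descFactorial k : ℝ) * (k:ℝ)^k := by
    exact_mod_cast Nat.cast_le.mpr (pow_mul_factorial_le n k h)
  have h3 : (k.factorial : ℝ) ≤ (odf k : ℝ) := Nat.cast_le.mpr (factorial_le_odf k)
  have hd : (0:ℝ) ≤ (n.descFactorial k : ℝ) := Nat.cast_nonneg _
  calc ((k : ℝ) * n)^k = (k:ℝ)^k * (n:ℝ)^k := mul_pow _ _ _
    _ ≤ ((k.factorial : ℝ) * E) * (n:ℝ)^k :=
        mul_le_mul_of_nonneg_right h1 (by positivity)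
    _ = ((n:ℝ)^k * (k.factorial : ℝ)) * E := by ring
    _ ≤ ((n.descFactorial k : ℝ) * (k:ℝ)^k) * E :=
        mul_le_mul_of_nonneg_right h2 (le_of_lt hEpos)
    _ ≤ ((n.descFactorial k : ℝ) * ((k.factorial : ℝ) * E)) * E :=
        mul_le_mul_of_nonneg_right
          (mul_le_mul_of_nonneg_left h1 hd) (le_of_lt hEpos)
    _ = ((k.factorial : ℝ) * (n.descFactorial k : ℝ)) * E^2 := by ring
    _ ≤ ((odf k : ℝ) * (n.descFactorial k : ℝ)) * E^2 :=
        mul_le_mul_of_nonneg_right (mul_le_mul_of_nonneg_right h3 hd) (by positivity)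
    _ = (mlb n k : ℝ) * Real.exp 1 ^ (2*k) := by
        rw [mlb, hE]
        push_cast
        rw [← pow_mul, Nat.mul_comm k 2]

noncomputable def Sb {n : ℕ} (ε : Fin n → Bool) : ℝ := ∑ i, sgn (ε i)

lemma wsum (n : ℕ) : ∑ _ε : Fin n → Bool, ((2:ℝ)^n)⁻¹ = 1 := by
  rw [Finset.sum_const, Finset.card_univ, Fintype.card_fun, Fintype.card_bool, Fintype.card_fin,
    nsmul_eq_mul]
  push_cast
  rw [mul_inv_cancel₀ (by positivity)]

lemma Np_add_le (n : ℕ) {p : ℝ} (hp : 1 ≤ p) (g h : (Fin n → Bool) → ℝ) :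
    (∑ ε : Fin n → Bool, ((2:ℝ)^n)⁻¹ * |g ε + h ε| ^ p) ^ (1/p)
      ≤ (∑ ε : Fin n → Bool, ((2:ℝ)^n)⁻¹ * |g ε| ^ p) ^ (1/p)
        + (∑ ε : Fin n → Bool, ((2:ℝ)^n)⁻¹ * |h ε| ^ p) ^ (1/p) := by
  have hp0 : p ≠ 0 := by linarith
  set a : ℝ := (((2:ℝ)^n)⁻¹) ^ (1/p) with ha
  have ha0 : (0:ℝ) ≤ a := Real.rpow_nonneg (by positivity) _
  have key : ∀ u : ℝ, ((2:ℝ)^n)⁻¹ * |u| ^ p = |a * u| ^ p := by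
    intro u
    rw [abs_mul, abs_of_nonneg ha0, Real.mul_rpow ha0 (abs_nonneg u), ha,
      ← Real.rpow_mul (by positivity), one_div_mul_cancel hp0, Real.rpow_one]
  simp_rw [key]
  have hsplit : ∀ ε, a * (g ε + h ε) = a * g ε + a * h ε := fun ε => by ring
  simp_rw [hsplit]
  exact Real.Lp_add_le Finset.univ (fun ε => a * g ε) (fun ε => a * h ε) hp

lemma Np_smul (n : ℕ) {p : ℝ} (hp : 1 ≤ p) (c : ℝ) (g : (Fin n → Bool) → ℝ) :
    (∑ ε : Fin n → Bool, ((2:ℝ)^n)⁻¹ * |c * g ε| ^ p) ^ (1/p)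
      = |c| * (∑ ε : Fin n → Bool, ((2:ℝ)^n)⁻¹ * |g ε| ^ p) ^ (1/p) := by
  have hp0 : p ≠ 0 := by linarith
  have key : ∀ ε, ((2:ℝ)^n)⁻¹ * |c * g ε| ^ p = |c|^p * (((2:ℝ)^n)⁻¹ * |g ε| ^ p) := by
    intro ε
    rw [abs_mul, Real.mul_rpow (abs_nonneg c) (abs_nonneg _)]
    ring
  have hS : ∑ ε : Fin n → Bool, |c|^p * (((2:ℝ)^n)⁻¹ * |g ε|^p)
      = |c|^p * ∑ ε : Fin n → Bool, ((2:ℝ)^n)⁻¹ * |g ε|^p := by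
    rw [Finset.mul_sum]
  simp_rw [key]
  rw [hS]
  have hS0 : (0:ℝ) ≤ ∑ ε : Fin n → Bool, ((2:ℝ)^n)⁻¹ * |g ε|^p :=
    Finset.sum_nonneg fun ε _ => by positivity
  rw [Real.mul_rpow (Real.rpow_nonneg (abs_nonneg c) p) hS0,
    ← Real.rpow_mul (abs_nonneg c), mul_one_div_cancel hp0, Real.rpow_one]

lemma Np_const (n : ℕ) {p : ℝ} (hp : 1 ≤ p) {c : ℝ} (hc : 0 ≤ c) :
    (∑ _ε : Fin n → Bool, ((2:ℝ)^n)⁻¹ * |c| ^ p) ^ (1/p) = c := by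
  have hp0 : p ≠ 0 := by linarith
  have h1 : ∑ _ε : Fin n → Bool, ((2:ℝ)^n)⁻¹ * |c| ^ p
      = (∑ _ε : Fin n → Bool, ((2:ℝ)^n)⁻¹) * |c| ^ p := by
    rw [Finset.sum_mul]
  rw [h1, wsum, one_mul, abs_of_nonneg hc, ← Real.rpow_mul hc,
    mul_one_div_cancel hp0, Real.rpow_one]

lemma Np_jensen (n : ℕ) {r : ℝ} (hr : 1 ≤ r) (z : (Fin n → Bool) → ℝ) (hz : ∀ ε, 0 ≤ z ε) :
    ∑ ε : Fin n → Bool, ((2:ℝ)^n)⁻¹ * z ε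
      ≤ (∑ ε : Fin n → Bool, ((2:ℝ)^n)⁻¹ * z ε ^ r) ^ (1/r) :=
  Real.arith_mean_le_rpow_mean Finset.univ _ _ (fun _ _ => by positivity)
    (wsum n) (fun ε _ => hz ε) hr

lemma Np_sym (n : ℕ) (G : ℝ → ℝ) :
    ∑ ε : Fin n → Bool, G (Sb ε) = ∑ ε : Fin n → Bool, G (-(Sb ε)) := by
  have hb : Function.Bijective (fun (ε : Fin n → Bool) i => !(ε i)) :=
    Function.Involutive.bijective fun ε => by funext i; simp
  refine Fintype.sum_bijective _ hb _ _ fun ε => ?_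
  congr 1
  rw [Sb, Sb, ← Finset.sum_neg_distrib]
  refine Finset.sum_congr rfl fun i _ => ?_
  cases ε i <;> simp [sgn]

lemma mlb_lb_sum (n k : ℕ) (hkn : k ≤ n) :
    ((k:ℝ) * n / Real.exp 1 ^ 2) ^ k
      ≤ ∑ ε : Fin n → Bool, ((2:ℝ)^n)⁻¹ * (Sb ε)^(2*k) := by
  have h1 := sum_pow_lb n k
  have h2 := le_mlb n k hkn
  have e1 : ∑ ε : Fin n → Bool, ((2:ℝ)^n)⁻¹ * (Sb ε)^(2*k)
      = ((2:ℝ)^n)⁻¹ * ∑ ε : Fin n → Bool, (Sb ε)^(2*k) := by rw [Finset.mul_sum]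
  rw [e1]
  have h3 : ((2:ℝ)^n) * (mlb n k : ℝ) ≤ ∑ ε : Fin n → Bool, (Sb ε)^(2*k) := by
    push_cast at h1
    simpa [Sb] using h1
  have h4 : ((k:ℝ) * n / Real.exp 1 ^ 2) ^ k ≤ (mlb n k : ℝ) := by
    rw [div_pow, div_le_iff₀ (by positivity), ← pow_mul]
    exact h2
  calc ((k:ℝ) * n / Real.exp 1 ^ 2) ^ k ≤ (mlb n k : ℝ) := h4
    _ = ((2:ℝ)^n)⁻¹ * (((2:ℝ)^n) * (mlb n k : ℝ)) := by
        field_simp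
    _ ≤ ((2:ℝ)^n)⁻¹ * ∑ ε : Fin n → Bool, (Sb ε)^(2*k) := by
        exact mul_le_mul_of_nonneg_left h3 (by positivity)

lemma Sq_moment (n : ℕ) {p : ℝ} (k : ℕ) (hk1 : 1 ≤ k) (hkn : k ≤ n) (hkp : (k:ℝ) ≤ p) :
    (k:ℝ) * n / Real.exp 1 ^ 2
      ≤ (∑ ε : Fin n → Bool, ((2:ℝ)^n)⁻¹ * |(Sb ε)^2| ^ p) ^ (1/p) := by
  have hk0 : (0:ℝ) < k := by exact_mod_cast hk1
  have hkne : (k:ℝ) ≠ 0 := ne_of_gt hk0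
  have hp0 : 0 < p := lt_of_lt_of_le hk0 hkp
  have hr : 1 ≤ p / (k:ℝ) := (one_le_div hk0).mpr hkp
  have hz : ∀ ε : Fin n → Bool, (0:ℝ) ≤ (Sb ε)^(2*k) := fun ε => by
    rw [pow_mul]; positivity
  have hJ := Np_jensen n hr (fun ε => (Sb ε)^(2*k)) hz
  have hzr : ∀ ε : Fin n → Bool, (((Sb ε)^(2*k) : ℝ)) ^ (p/(k:ℝ)) = |(Sb ε)^2| ^ p := by
    intro ε
    have hq : (0:ℝ) ≤ (Sb ε)^2 := sq_nonneg _
    rw [pow_mul, abs_of_nonneg hq, ← Real.rpow_natCast ((Sb ε)^2) k,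
      ← Real.rpow_mul hq]
    congr 1
    field_simp
  simp only [hzr] at hJ
  have hlb := mlb_lb_sum n k hkn
  have hT0 : (0:ℝ) ≤ ∑ ε : Fin n → Bool, ((2:ℝ)^n)⁻¹ * |(Sb ε)^2| ^ p :=
    Finset.sum_nonneg fun ε _ => by positivity
  have hchain : ((k:ℝ)*n/Real.exp 1^2)^k
      ≤ (∑ ε : Fin n → Bool, ((2:ℝ)^n)⁻¹ * |(Sb ε)^2| ^ p) ^ ((k:ℝ)/p) := by
    have he : (1:ℝ)/(p/(k:ℝ)) = (k:ℝ)/p := by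
      rw [one_div_div]
    rw [← he]
    exact le_trans hlb hJ
  have hx0 : (0:ℝ) ≤ (k:ℝ)*n/Real.exp 1^2 := by positivity
  have hfin := Real.rpow_le_rpow (by positivity) hchain
    (le_of_lt (one_div_pos.mpr hk0))
  rw [← Real.rpow_natCast ((k:ℝ)*n/Real.exp 1^2) k, ← Real.rpow_mul hx0,
    mul_one_div_cancel hkne, Real.rpow_one, ← Real.rpow_mul hT0] at hfin
  have he2 : (k:ℝ)/p * (1/(k:ℝ)) = 1/p := by field_simp
  rw [he2] at hfin
  exact hfin

lemma S_moment (n : ℕ) {p : ℝ} (k : ℕ) (hk1 : 1 ≤ k) (hkn : k ≤ n) (hkp : 2*(k:ℝ) ≤ p) :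
    Real.sqrt ((k:ℝ) * n / Real.exp 1 ^ 2)
      ≤ (∑ ε : Fin n → Bool, ((2:ℝ)^n)⁻¹ * |Sb ε| ^ p) ^ (1/p) := by
  have hk0 : (0:ℝ) < k := by exact_mod_cast hk1
  have hkne : (k:ℝ) ≠ 0 := ne_of_gt hk0
  have hp0 : 0 < p := lt_of_lt_of_le (by positivity) hkp
  have hr : 1 ≤ p / (2*(k:ℝ)) := (one_le_div (by positivity)).mpr hkp
  have hz : ∀ ε : Fin n → Bool, (0:ℝ) ≤ (Sb ε)^(2*k) := fun ε => by
    rw [pow_mul]; positivity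
  have hJ := Np_jensen n hr (fun ε => (Sb ε)^(2*k)) hz
  have hzr : ∀ ε : Fin n → Bool, (((Sb ε)^(2*k) : ℝ)) ^ (p/(2*(k:ℝ))) = |Sb ε| ^ p := by
    intro ε
    have habs : ((Sb ε)^(2*k) : ℝ) = |Sb ε|^(2*k) := by
      rw [pow_abs, abs_of_nonneg (hz ε)]
    rw [habs, ← Real.rpow_natCast |Sb ε| (2*k), ← Real.rpow_mul (abs_nonneg _)]
    congr 1
    push_cast
    field_simp
  simp only [hzr] at hJ
  have hlb := mlb_lb_sum n k hkn
  have hT0 : (0:ℝ) ≤ ∑ ε : Fin n → Bool, ((2:ℝ)^n)⁻¹ * |Sb ε| ^ p :=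
    Finset.sum_nonneg fun ε _ => by positivity
  have hchain : ((k:ℝ)*n/Real.exp 1^2)^k
      ≤ (∑ ε : Fin n → Bool, ((2:ℝ)^n)⁻¹ * |Sb ε| ^ p) ^ ((2*(k:ℝ))/p) := by
    have he : (1:ℝ)/(p/(2*(k:ℝ))) = (2*(k:ℝ))/p := by
      rw [one_div_div]
    rw [← he]
    exact le_trans hlb hJ
  have hx0 : (0:ℝ) ≤ (k:ℝ)*n/Real.exp 1^2 := by positivity
  have hfin := Real.rpow_le_rpow (by positivity) hchain
    (le_of_lt (one_div_pos.mpr (by positivity : (0:ℝ) < 2*(k:ℝ))))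
  rw [← Real.rpow_natCast ((k:ℝ)*n/Real.exp 1^2) k, ← Real.rpow_mul hx0,
    ← Real.rpow_mul hT0] at hfin
  have he2 : (2*(k:ℝ))/p * (1/(2*(k:ℝ))) = 1/p := by field_simp
  have he3 : (k:ℝ) * (1/(2*(k:ℝ))) = 1/2 := by field_simp
  rw [he2, he3] at hfin
  rw [Real.sqrt_eq_rpow]
  exact hfin

lemma sym_sum (n : ℕ) (M c p : ℝ) :
    ∑ ε : Fin n → Bool, ((2:ℝ)^n)⁻¹ * |-(M * Sb ε) + c * ((Sb ε)^2 - (n:ℝ))| ^ p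
      = ∑ ε : Fin n → Bool, ((2:ℝ)^n)⁻¹ * |M * Sb ε + c * ((Sb ε)^2 - (n:ℝ))| ^ p := by
  have h := Np_sym n (fun t => ((2:ℝ)^n)⁻¹ * |M * t + c * (t^2 - (n:ℝ))| ^ p)
  simp only [mul_neg, neg_sq] at h
  exact h.symm

lemma core (n : ℕ) (M β p : ℝ) (hM : 0 ≤ M) (hβ : 0 ≤ β)
    (hp36 : 36 ≤ p) (hpn : p ≤ n) :
    1/144 * (p * n * β + M * Real.sqrt (p * n)) ≤
      (∑ ε : Fin n → Bool, ((2:ℝ)^n)⁻¹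
        * |M * Sb ε + (β/2) * ((Sb ε)^2 - (n:ℝ))| ^ p) ^ (1/p) := by
  have hp1 : (1:ℝ) ≤ p := by linarith
  have hp0 : (0:ℝ) < p := by linarith
  have hn : (36:ℝ) ≤ (n:ℝ) := le_trans hp36 hpn
  have hn0 : (0:ℝ) < (n:ℝ) := by linarith
  have hNf0 : (0:ℝ) ≤ (∑ ε : Fin n → Bool, ((2:ℝ)^n)⁻¹
      * |M * Sb ε + (β/2) * ((Sb ε)^2 - (n:ℝ))| ^ p) ^ (1/p) :=
    Real.rpow_nonneg (Finset.sum_nonneg fun ε _ => by positivity) _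
  have he9 : Real.exp 1 ^ 2 ≤ 9 := by
    have h3 : Real.exp 1 ≤ 3 := by
      have := Real.exp_one_lt_d9
      linarith
    nlinarith [Real.exp_pos 1]
  -- Lower bound via the M-part
  have hMpart : M * (Real.sqrt (p * (n:ℝ)) / 6) ≤
      (∑ ε : Fin n → Bool, ((2:ℝ)^n)⁻¹
        * |M * Sb ε + (β/2) * ((Sb ε)^2 - (n:ℝ))| ^ p) ^ (1/p) := by
    -- Minkowski with f and -f'
    have hadd := Np_add_le n hp1
      (fun ε => M * Sb ε + (β/2) * ((Sb ε)^2 - (n:ℝ)))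
      (fun ε => -(-(M * Sb ε) + (β/2) * ((Sb ε)^2 - (n:ℝ))))
    have e1 : ∑ ε : Fin n → Bool, ((2:ℝ)^n)⁻¹
        * |(M * Sb ε + (β/2) * ((Sb ε)^2 - (n:ℝ)))
            + -(-(M * Sb ε) + (β/2) * ((Sb ε)^2 - (n:ℝ)))| ^ p
        = ∑ ε : Fin n → Bool, ((2:ℝ)^n)⁻¹ * |(2*M) * Sb ε| ^ p :=
      Finset.sum_congr rfl fun ε _ => by rw [show
        (M * Sb ε + (β/2) * ((Sb ε)^2 - (n:ℝ)))
            + -(-(M * Sb ε) + (β/2) * ((Sb ε)^2 - (n:ℝ))) = (2*M) * Sb ε from by ring]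
    have e2 : ∑ ε : Fin n → Bool, ((2:ℝ)^n)⁻¹
        * |-(-(M * Sb ε) + (β/2) * ((Sb ε)^2 - (n:ℝ)))| ^ p
        = ∑ ε : Fin n → Bool, ((2:ℝ)^n)⁻¹
          * |M * Sb ε + (β/2) * ((Sb ε)^2 - (n:ℝ))| ^ p := by
      rw [show (fun ε : Fin n → Bool => ((2:ℝ)^n)⁻¹
          * |-(-(M * Sb ε) + (β/2) * ((Sb ε)^2 - (n:ℝ)))| ^ p)
        = fun ε : Fin n → Bool => ((2:ℝ)^n)⁻¹
          * |-(M * Sb ε) + (β/2) * ((Sb ε)^2 - (n:ℝ))| ^ p from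
        funext fun ε => by rw [abs_neg]]
      exact sym_sum n M (β/2) p
    rw [e1, e2] at hadd
    rw [Np_smul n hp1 (2*M) Sb, abs_of_nonneg (by linarith : (0:ℝ) ≤ 2*M)] at hadd
    -- moment bound for NS with k = ⌊p/2⌋
    set k : ℕ := Nat.floor (p/2) with hk'
    have hk1 : 1 ≤ k := Nat.one_le_floor_iff _ |>.mpr (by linarith)
    have hkle : (k:ℝ) ≤ p/2 := Nat.floor_le (by linarith)
    have hkn : k ≤ n := by
      have : (k:ℝ) ≤ (n:ℝ) := le_trans hkle (by linarith)
      exact_mod_cast this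
    have hklb : p/2 - 1 < (k:ℝ) := Nat.sub_one_lt_floor _
    have hS := S_moment n (p := p) k hk1 hkn (by linarith)
    have hss : Real.sqrt (p * (n:ℝ)) / 6 ≤ Real.sqrt ((k:ℝ) * n / Real.exp 1 ^ 2) := by
      have h1 : p * (n:ℝ) / 36 ≤ (k:ℝ) * n / Real.exp 1 ^ 2 := by
        have hk4 : p/4 ≤ (k:ℝ) := by linarith
        calc p * (n:ℝ) / 36 = (p/4) * n / 9 := by ring
          _ ≤ (k:ℝ) * n / Real.exp 1 ^ 2 :=
            div_le_div₀ (by positivity)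
              (mul_le_mul_of_nonneg_right hk4 (le_of_lt hn0))
              (by positivity) he9
      have h36 : Real.sqrt 36 = 6 := by
        rw [show (36:ℝ) = 6^2 from by norm_num]
        exact Real.sqrt_sq (by norm_num)
      calc Real.sqrt (p * (n:ℝ)) / 6 = Real.sqrt (p * (n:ℝ)) / Real.sqrt 36 := by rw [h36]
        _ = Real.sqrt (p * (n:ℝ) / 36) := (Real.sqrt_div (by positivity) 36).symm
        _ ≤ _ := Real.sqrt_le_sqrt h1
    have hNS := le_trans hss hS
    have hfin := mul_le_mul_of_nonneg_left hNS hM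
    linarith [hfin, hadd]
  -- Lower bound via the β-part
  have hBpart : β * (p * (n:ℝ) / 36) ≤ 2 * (∑ ε : Fin n → Bool, ((2:ℝ)^n)⁻¹
        * |M * Sb ε + (β/2) * ((Sb ε)^2 - (n:ℝ))| ^ p) ^ (1/p) := by
    have hadd := Np_add_le n hp1
      (fun ε => M * Sb ε + (β/2) * ((Sb ε)^2 - (n:ℝ)))
      (fun ε => -(M * Sb ε) + (β/2) * ((Sb ε)^2 - (n:ℝ)))
    have e1 : ∑ ε : Fin n → Bool, ((2:ℝ)^n)⁻¹
        * |(M * Sb ε + (β/2) * ((Sb ε)^2 - (n:ℝ)))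
            + (-(M * Sb ε) + (β/2) * ((Sb ε)^2 - (n:ℝ)))| ^ p
        = ∑ ε : Fin n → Bool, ((2:ℝ)^n)⁻¹ * |β * ((Sb ε)^2 - (n:ℝ))| ^ p :=
      Finset.sum_congr rfl fun ε _ => by rw [show
        (M * Sb ε + (β/2) * ((Sb ε)^2 - (n:ℝ)))
            + (-(M * Sb ε) + (β/2) * ((Sb ε)^2 - (n:ℝ)))
          = β * ((Sb ε)^2 - (n:ℝ)) from by ring]
    rw [e1, sym_sum n M (β/2) p,
      Np_smul n hp1 β (fun ε => (Sb ε)^2 - (n:ℝ)), abs_of_nonneg hβ] at hadd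
    -- hadd : β * NQ ≤ Nf + Nf
    -- NQ ≥ NSq - n
    have htri := Np_add_le n hp1 (fun ε => (Sb ε)^2 - (n:ℝ)) (fun _ => (n:ℝ))
    have e3 : ∑ ε : Fin n → Bool, ((2:ℝ)^n)⁻¹ * |((Sb ε)^2 - (n:ℝ)) + (n:ℝ)| ^ p
        = ∑ ε : Fin n → Bool, ((2:ℝ)^n)⁻¹ * |(Sb ε)^2| ^ p :=
      Finset.sum_congr rfl fun ε _ => by rw [sub_add_cancel]
    rw [e3, Np_const n hp1 (le_of_lt hn0)] at htri
    -- moment bound for NSq with k = ⌊p⌋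
    set k : ℕ := Nat.floor p with hk'
    have hk1 : 1 ≤ k := Nat.one_le_floor_iff _ |>.mpr (by linarith)
    have hkle : (k:ℝ) ≤ p := Nat.floor_le (by linarith)
    have hkn : k ≤ n := by
      have : (k:ℝ) ≤ (n:ℝ) := le_trans hkle hpn
      exact_mod_cast this
    have hklb : p - 1 < (k:ℝ) := Nat.sub_one_lt_floor _
    have hSq := Sq_moment n k hk1 hkn hkle
    have hq : p * (n:ℝ) / 18 ≤ (k:ℝ) * n / Real.exp 1 ^ 2 := by
      have hk2 : p/2 ≤ (k:ℝ) := by linarith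
      calc p * (n:ℝ) / 18 = (p/2) * n / 9 := by ring
        _ ≤ (k:ℝ) * n / Real.exp 1 ^ 2 :=
          div_le_div₀ (by positivity)
            (mul_le_mul_of_nonneg_right hk2 (le_of_lt hn0))
            (by positivity) he9
    have hNSq := le_trans hq hSq
    -- pn/18 - n ≥ pn/36 since p ≥ 36
    have hnn : (n:ℝ) ≤ p * (n:ℝ) / 36 := by nlinarith
    have hNQ : p * (n:ℝ) / 36 ≤ (∑ ε : Fin n → Bool, ((2:ℝ)^n)⁻¹
        * |(Sb ε)^2 - (n:ℝ)| ^ p) ^ (1/p) := by linarith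
    have hfin := mul_le_mul_of_nonneg_left hNQ hβ
    linarith [hfin, hadd]
  linarith [hMpart, hBpart, hNf0]

end ChaosLB

open ChaosLB

theorem chaos_lower_bound : ∃ κ c : ℝ, 0 < κ ∧ 0 < c ∧
    ∀ (Ω : Type) [MeasurableSpace Ω] (μ : Measure Ω) [IsProbabilityMeasure μ]
      (n : ℕ) (Z : Fin n → Ω → ℝ),
      (∀ i, Measurable (Z i)) →
      iIndepFun Z μ →
      (∀ i, μ.map (Z i) =
        (1 / 2 : ℝ≥0∞) • Measure.dirac (1 : ℝ) +
          (1 / 2 : ℝ≥0∞) • Measure.dirac (-1 : ℝ)) →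
      ∀ M β : ℝ, 0 ≤ M → 0 ≤ β →
      ∀ p : ℝ, κ ≤ p → p ≤ n →
        c * (p * n * β + M * Real.sqrt (p * n)) ≤
          (∫ ω, |∑ i, (M * Z i ω +
            (β / 2) * Z i ω * ∑ j ∈ Finset.univ.erase i, Z j ω)| ^ p ∂μ) ^ (1 / p) := by
  refine ⟨36, 1/144, by norm_num, by norm_num, ?_⟩
  intro Ω _ μ _ n Z hZ hind hmaps M β hM hβ p hp36 hpn
  set G : (Fin n → ℝ) → ℝ := fun x =>
    |∑ i, (M * x i + (β / 2) * x i * ∑ j ∈ Finset.univ.erase i, x j)| ^ p with hG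
  have hGm : StronglyMeasurable G := by
    apply Measurable.stronglyMeasurable
    have hsum : Measurable fun x : Fin n → ℝ =>
        ∑ i, (M * x i + (β/2) * x i * ∑ j ∈ Finset.univ.erase i, x j) := by
      apply Finset.measurable_sum
      intro i _
      have hxi : Measurable fun x : Fin n → ℝ => x i := measurable_pi_apply i
      have hsj : Measurable fun x : Fin n → ℝ => ∑ j ∈ Finset.univ.erase i, x j :=
        Finset.measurable_sum _ fun j _ => measurable_pi_apply j
      exact (measurable_const.mul hxi).add ((measurable_const.mul hxi).mul hsj)
    exact ((Real.continuous_rpow_const (by linarith : (0:ℝ) ≤ p)).measurable).comp hsum.abs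
  have hme : Measurable (fun ω i => Z i ω) := measurable_pi_lambda _ hZ
  have hmap : μ.map (fun ω i => Z i ω) = D n :=
    map_eq_D μ n Z hZ hind (fun i => hmaps i)
  have hint : (∫ ω, |∑ i, (M * Z i ω +
        (β / 2) * Z i ω * ∑ j ∈ Finset.univ.erase i, Z j ω)| ^ p ∂μ)
      = ((2:ℝ)^n)⁻¹ * ∑ ε : Fin n → Bool, G (fun i => sgn (ε i)) := by
    rw [← integral_D n G hGm, ← hmap,
      integral_map hme.aemeasurable hGm.aestronglyMeasurable]
  have hGe : ∀ ε : Fin n → Bool,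
      G (fun i => sgn (ε i)) = |M * Sb ε + (β/2) * ((Sb ε)^2 - (n:ℝ))| ^ p := by
    intro ε
    have hsq : ∀ i : Fin n, sgn (ε i) * sgn (ε i) = 1 := fun i => by
      cases ε i <;> norm_num [sgn]
    have h1 : ∀ i : Fin n, M * sgn (ε i)
        + (β / 2) * sgn (ε i) * ∑ j ∈ Finset.univ.erase i, sgn (ε j)
        = M * sgn (ε i) + (β/2) * (sgn (ε i) * Sb ε) - (β/2) := by
      intro i
      rw [Finset.sum_erase_eq_sub (Finset.mem_univ i)]
      have : (β / 2) * sgn (ε i) * ((∑ j, sgn (ε j)) - sgn (ε i))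
          = (β/2) * (sgn (ε i) * Sb ε) - (β/2) * (sgn (ε i) * sgn (ε i)) := by
        rw [Sb]; ring
      rw [this, hsq i, mul_one]
      ring
    have hinner : (∑ i, (M * sgn (ε i)
        + (β / 2) * sgn (ε i) * ∑ j ∈ Finset.univ.erase i, sgn (ε j)))
        = M * Sb ε + (β/2) * ((Sb ε)^2 - (n:ℝ)) := by
      rw [Finset.sum_congr rfl fun i _ => h1 i]
      rw [Finset.sum_sub_distrib, Finset.sum_add_distrib, ← Finset.mul_sum, ← Finset.mul_sum,
        ← Finset.sum_mul, Finset.sum_const, Finset.card_univ, Fintype.card_fin, ← Sb]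
      rw [nsmul_eq_mul]
      ring
    simp only [hG]
    rw [hinner]
  rw [hint, Finset.mul_sum]
  have := core n M β p hM hβ hp36 hpn
  calc 1/144 * (p * n * β + M * Real.sqrt (p * n)) ≤
      (∑ ε : Fin n → Bool, ((2:ℝ)^n)⁻¹
        * |M * Sb ε + (β/2) * ((Sb ε)^2 - (n:ℝ))| ^ p) ^ (1/p) := this
    _ = (∑ ε : Fin n → Bool, ((2:ℝ)^n)⁻¹ * G (fun i => sgn (ε i))) ^ (1/p) := by
        congr 1
        exact Finset.sum_congr rfl fun ε _ => by rw [hGe ε]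
end

section
/- Let S = ∑_{i=1}^n Z_i with Z_i i.i.d. Rademacher, and set S_+ = S·1[S ≥ 0]. Then for any p ≥ 1 and M, β ≥ 0, ‖M·S_+ + (β/2)·S_+²‖_p ≥ ‖S_+‖_p · max(M, (β/2)·‖S_+‖_p). -/
open MeasureTheory ProbabilityTheory Real
open scoped ENNReal

theorem positive_part_moment_lower {Ω : Type*} [MeasurableSpace Ω]
    (μ : Measure Ω) [IsProbabilityMeasure μ] (n : ℕ)
    (Z : Fin n → Ω → ℝ) (hZ : ∀ i, Measurable (Z i))
    (hindep : iIndepFun Z μ)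
    (hrad : ∀ i, μ.map (Z i) =
      (1 / 2 : ℝ≥0∞) • Measure.dirac (1 : ℝ) +
        (1 / 2 : ℝ≥0∞) • Measure.dirac (-1 : ℝ))
    (p : ℝ) (hp : 1 ≤ p) (M β : ℝ) (hM : 0 ≤ M) (hβ : 0 ≤ β) :
    (∫ ω, |max (∑ i, Z i ω) 0| ^ p ∂μ) ^ (1 / p) *
        max M ((β / 2) * (∫ ω, |max (∑ i, Z i ω) 0| ^ p ∂μ) ^ (1 / p)) ≤
      (∫ ω, |M * max (∑ i, Z i ω) 0 +
        (β / 2) * (max (∑ i, Z i ω) 0) ^ 2| ^ p ∂μ) ^ (1 / p) := by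
  have hp0 : (0:ℝ) < p := lt_of_lt_of_le one_pos hp
  set T : Ω → ℝ := fun ω => max (∑ i, Z i ω) 0 with hT
  have hTmeas : Measurable T := (Finset.measurable_sum _ fun i _ => hZ i).max measurable_const
  have hTnn : ∀ ω, 0 ≤ T ω := fun ω => le_max_right _ _
  -- a.e. bound on each Z i
  have hZbd : ∀ i, ∀ᵐ ω ∂μ, |Z i ω| ≤ 1 := by
    intro i
    have hs : MeasurableSet {x : ℝ | |x| ≤ 1} :=
      (isClosed_le continuous_abs continuous_const).measurableSet
    have hmap : ∀ᵐ x ∂(μ.map (Z i)), |x| ≤ 1 := by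
      rw [ae_iff, hrad i]
      have hsc : MeasurableSet {x : ℝ | ¬ |x| ≤ 1} := hs.compl
      simp [Measure.add_apply, Measure.smul_apply, Measure.dirac_apply' _ hsc,
        Set.indicator_apply]
    exact (ae_map_iff (hZ i).aemeasurable hs).mp hmap
  have hTbd : ∀ᵐ ω ∂μ, T ω ≤ (n:ℝ) := by
    have := (ae_all_iff).mpr hZbd
    filter_upwards [this] with ω hω
    have hsum : |∑ i, Z i ω| ≤ (n:ℝ) := by
      calc |∑ i, Z i ω| ≤ ∑ i, |Z i ω| := Finset.abs_sum_le_sum_abs _ _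
        _ ≤ ∑ _i : Fin n, (1:ℝ) := Finset.sum_le_sum fun i _ => hω i
        _ = (n:ℝ) := by simp
    exact max_le (le_trans (le_abs_self _) hsum) (Nat.cast_nonneg n)
  -- integrability helper
  have hint : ∀ (g : Ω → ℝ) (C : ℝ), Measurable g → (∀ᵐ ω ∂μ, ‖g ω‖ ≤ C) →
      Integrable g μ := fun g C hg hb =>
    memLp_one_iff_integrable.mp (MemLp.of_bound hg.aestronglyMeasurable C hb)
  -- the functions
  have hrpow : ∀ {h : Ω → ℝ}, Measurable h → Measurable fun ω => h ω ^ p :=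
    fun hh => (Real.continuous_rpow_const hp0.le).measurable.comp hh
  set f : Ω → ℝ := fun ω => T ω ^ p with hf
  set g : Ω → ℝ := fun ω => (M * T ω + (β/2) * T ω ^ 2) ^ p with hg
  have hfmeas : Measurable f := hrpow hTmeas
  have hfnn : ∀ ω, 0 ≤ f ω := fun ω => Real.rpow_nonneg (hTnn ω) p
  have hgbase_nn : ∀ ω, 0 ≤ M * T ω + (β/2) * T ω ^ 2 := fun ω => by positivity
  have hgnn : ∀ ω, 0 ≤ g ω := fun ω => Real.rpow_nonneg (hgbase_nn ω) p
  have hgmeas : Measurable g :=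
    hrpow ((measurable_const.mul hTmeas).add (measurable_const.mul (hTmeas.pow_const 2)))
  -- rewrite the goal integrals to remove |·|
  have habs1 : (∫ ω, |max (∑ i, Z i ω) 0| ^ p ∂μ) = ∫ ω, f ω ∂μ := by
    refine integral_congr_ae (Filter.Eventually.of_forall fun ω => ?_)
    rw [hf]; show |T ω| ^ p = T ω ^ p; rw [abs_of_nonneg (hTnn ω)]
  have habs2 : (∫ ω, |M * max (∑ i, Z i ω) 0 + (β / 2) * (max (∑ i, Z i ω) 0) ^ 2| ^ p ∂μ)
      = ∫ ω, g ω ∂μ := by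
    refine integral_congr_ae (Filter.Eventually.of_forall fun ω => ?_)
    rw [hg]; show |M * T ω + β / 2 * T ω ^ 2| ^ p = _; rw [abs_of_nonneg (hgbase_nn ω)]
  rw [habs1, habs2]
  set A := ∫ ω, f ω ∂μ with hA
  set B := ∫ ω, g ω ∂μ with hB
  have hAnn : 0 ≤ A := integral_nonneg hfnn
  have hBnn : 0 ≤ B := integral_nonneg hgnn
  -- integrability facts
  have hfbd : ∀ᵐ ω ∂μ, ‖f ω‖ ≤ (n:ℝ) ^ p := by
    filter_upwards [hTbd] with ω hω
    rw [Real.norm_of_nonneg (hfnn ω)]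
    exact Real.rpow_le_rpow (hTnn ω) hω hp0.le
  have hfint : Integrable f μ := hint f _ hfmeas hfbd
  have hgint : Integrable g μ := by
    refine hint g ((M * n + (β/2) * (n:ℝ)^2) ^ p) hgmeas ?_
    filter_upwards [hTbd] with ω hω
    rw [Real.norm_of_nonneg (hgnn ω)]
    refine Real.rpow_le_rpow (hgbase_nn ω) ?_ hp0.le
    have := hTnn ω
    gcongr
  have hf2 : MemLp f 2 μ :=
    MemLp.of_bound hfmeas.aestronglyMeasurable ((n:ℝ)^p) hfbd
  -- first bound: M * A^(1/p) ≤ B^(1/p)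
  have h1 : A ^ (1/p) * M ≤ B ^ (1/p) := by
    have hmono : ∫ ω, (M * T ω) ^ p ∂μ ≤ B := by
      refine integral_mono_ae ?_ hgint ?_
      · refine hint _ ((M * n) ^ p) (hrpow (measurable_const.mul hTmeas)) ?_
        filter_upwards [hTbd] with ω hω
        rw [Real.norm_of_nonneg (Real.rpow_nonneg (by positivity) p)]
        refine Real.rpow_le_rpow (by positivity) ?_ hp0.le
        gcongr
      · refine Filter.Eventually.of_forall fun ω => ?_
        refine Real.rpow_le_rpow (by positivity) ?_ hp0.le
        have h2 : 0 ≤ (β/2) * T ω ^ 2 := by positivity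
        linarith
    have heq : ∫ ω, (M * T ω) ^ p ∂μ = M ^ p * A := by
      rw [hA]
      rw [← integral_const_mul]
      refine integral_congr_ae (Filter.Eventually.of_forall fun ω => ?_)
      exact Real.mul_rpow hM (hTnn ω)
    rw [heq] at hmono
    have := Real.rpow_le_rpow (by positivity) hmono (by positivity : (0:ℝ) ≤ 1/p)
    rw [Real.mul_rpow (Real.rpow_nonneg hM p) hAnn, ← Real.rpow_mul hM,
      mul_one_div, div_self hp0.ne', Real.rpow_one] at this
    linarith [this]
  -- second bound
  have h2 : A ^ (1/p) * ((β/2) * A ^ (1/p)) ≤ B ^ (1/p) := by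
    have hmono : ∫ ω, ((β/2) * T ω ^ 2) ^ p ∂μ ≤ B := by
      refine integral_mono_ae ?_ hgint ?_
      · refine hint _ (((β/2) * (n:ℝ)^2) ^ p)
          (hrpow (measurable_const.mul (hTmeas.pow_const 2))) ?_
        filter_upwards [hTbd] with ω hω
        rw [Real.norm_of_nonneg (Real.rpow_nonneg (by positivity) p)]
        refine Real.rpow_le_rpow (by positivity) ?_ hp0.le
        have := hTnn ω
        gcongr
      · refine Filter.Eventually.of_forall fun ω => ?_
        refine Real.rpow_le_rpow (by positivity) ?_ hp0.le
        have h3 : 0 ≤ M * T ω := by positivity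
        linarith
    have hsq : ∀ x : ℝ, 0 ≤ x → (x ^ 2) ^ p = (x ^ p) ^ 2 := by
      intro x hx
      rw [← Real.rpow_natCast x 2, ← Real.rpow_natCast (x ^ p) 2,
        ← Real.rpow_mul hx, ← Real.rpow_mul hx]
      ring_nf
    have heq : ∫ ω, ((β/2) * T ω ^ 2) ^ p ∂μ = (β/2) ^ p * ∫ ω, f ω ^ 2 ∂μ := by
      rw [← integral_const_mul]
      refine integral_congr_ae (Filter.Eventually.of_forall fun ω => ?_)
      show (β/2 * T ω ^ 2) ^ p = (β/2) ^ p * f ω ^ 2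
      rw [Real.mul_rpow (by positivity) (by positivity), hf]
      rw [hsq _ (hTnn ω)]
    -- Cauchy–Schwarz via variance
    have hCS : A ^ 2 ≤ ∫ ω, f ω ^ 2 ∂μ := by
      have hv := variance_nonneg f μ
      rw [variance_eq_sub hf2] at hv
      have : (∫ ω, (f ^ 2) ω ∂μ) = ∫ ω, f ω ^ 2 ∂μ := rfl
      simp only [Pi.pow_apply] at hv
      linarith [hv]
    have hfinal : (β/2) ^ p * A ^ 2 ≤ B := by
      calc (β/2) ^ p * A ^ 2 ≤ (β/2) ^ p * ∫ ω, f ω ^ 2 ∂μ := by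
            have : (0:ℝ) ≤ (β/2) ^ p := Real.rpow_nonneg (by positivity) p
            exact mul_le_mul_of_nonneg_left hCS this
        _ = ∫ ω, ((β/2) * T ω ^ 2) ^ p ∂μ := heq.symm
        _ ≤ B := hmono
    have := Real.rpow_le_rpow (by positivity) hfinal (by positivity : (0:ℝ) ≤ 1/p)
    rw [Real.mul_rpow (Real.rpow_nonneg (by positivity) p) (by positivity)] at this
    rw [← Real.rpow_mul (by positivity : (0:ℝ) ≤ β/2), mul_one_div, div_self hp0.ne',
      Real.rpow_one] at this
    rw [← Real.rpow_natCast A 2, ← Real.rpow_mul hAnn] at this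
    calc A ^ (1/p) * ((β/2) * A ^ (1/p)) = β/2 * (A ^ (1/p) * A ^ (1/p)) := by ring
      _ = β/2 * A ^ ((2:ℕ) * (1/p)) := by
          rw [← Real.rpow_add' hAnn (by push_cast; positivity)]
          push_cast; ring_nf
      _ ≤ B ^ (1/p) := this
  -- combine
  have hApnn : 0 ≤ A ^ (1/p) := Real.rpow_nonneg hAnn _
  calc A ^ (1/p) * max M ((β/2) * A ^ (1/p))
      = max (A ^ (1/p) * M) (A ^ (1/p) * ((β/2) * A ^ (1/p))) := by
        rw [mul_max_of_nonneg _ _ hApnn]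
    _ ≤ B ^ (1/p) := max_le h1 h2
end
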